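/- arXiv:1603.06030 — 12 statements merged into one kernel-verified Lean document; each statement's English description precedes it below -/
import Mathlib

section
/- Let r ≥ 1 and n_1, …, n_r > 1 be integers, let R = ℤ_{n_1} ⊕ ⋯ ⊕ ℤ_{n_r}, let S_R be the multiplicative monoid of R, and let U(S_R) = Rˣ be its group of units. Let P_2 = #{i ∈ [1,r] : 2 exactly divides n_i (i.e., 2 ∣ n_i but 4 ∤ n_i)}. Then D(S_R) ≥ D(U(S_R)) + P_2. -/
/-- The Davenport constant of a finite commutative monoid `S`: the least positive
integer `ℓ` such that every multiset of `ℓ` elements of `S` has a proper sub-multiset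
(possibly empty) whose product equals the product of the whole multiset. -/
noncomputable def DavenportM (S : Type*) [CommMonoid S] : ℕ :=
  sInf {ℓ : ℕ | 0 < ℓ ∧ ∀ T : Multiset S, Multiset.card T = ℓ →
    ∃ T' : Multiset S, T' < T ∧ T'.prod = T.prod}

/-- The Davenport constant of a finite abelian group `G`: the least positive integer `ℓ`
such that every multiset of `ℓ` elements of `G` has a nonempty sub-multiset with
product equal to the identity. -/
noncomputable def DavenportG (G : Type*) [CommGroup G] : ℕ :=
  sInf {ℓ : ℕ | 0 < ℓ ∧ ∀ T : Multiset G, Multiset.card T = ℓ →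
    ∃ T' : Multiset G, T' ≤ T ∧ T' ≠ 0 ∧ T'.prod = 1}

lemma isUnit_msprod {M : Type*} [CommMonoid M] (s : Multiset M) (h : ∀ x ∈ s, IsUnit x) :
    IsUnit s.prod := by
  induction s using Multiset.induction with
  | empty => simp
  | cons a s ih =>
    rw [Multiset.prod_cons]
    exact (h a (Multiset.mem_cons_self a s)).mul (ih fun x hx => h x (Multiset.mem_cons_of_mem hx))

lemma exists_e (n : ℕ) (h2 : 2 ∣ n) (h4 : ¬ (4 ∣ n)) :
    ∃ e : ZMod n, ¬ IsUnit e ∧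
      ∀ u u' : (ZMod n)ˣ, (u : ZMod n) * e = (u' : ZMod n) * e → u = u' := by
  obtain ⟨m, rfl⟩ := h2
  have hm : ¬ 2 ∣ m := fun ⟨k, hk⟩ => h4 ⟨k, by omega⟩
  have hm0 : m ≠ 0 := by rintro rfl; exact h4 ⟨0, by ring⟩
  haveI : NeZero m := ⟨hm0⟩
  haveI : NeZero (2 * m) := ⟨by positivity⟩
  have hcop : Nat.Coprime 2 m := (Nat.Prime.coprime_iff_not_dvd Nat.prime_two).mpr hm
  set ψ := ZMod.chineseRemainder hcop with hψ
  refine ⟨ψ.symm (0, 1), ?_, ?_⟩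
  · intro h
    have := h.map ψ.toRingHom
    rw [show ψ.toRingHom (ψ.symm (0,1)) = (0,1) from ψ.apply_symm_apply _] at this
    have h0 : IsUnit (0 : ZMod 2) := by simpa using this.map (RingHom.fst (ZMod 2) (ZMod m))
    simp [isUnit_zero_iff] at h0
  · intro u u' h
    have h' := congrArg ψ h
    rw [map_mul, map_mul, ψ.apply_symm_apply] at h'
    have hone : ∀ x : ZMod 2, IsUnit x → x = 1 := by decide
    have hu1 : (ψ (u : ZMod (2*m))).1 = 1 := hone _ ((u.isUnit.map ψ.toRingHom).map (RingHom.fst _ _))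
    have hu1' : (ψ (u' : ZMod (2*m))).1 = 1 := hone _ ((u'.isUnit.map ψ.toRingHom).map (RingHom.fst _ _))
    have : ψ (u : ZMod (2*m)) = ψ (u' : ZMod (2*m)) := by
      have h2' := congrArg Prod.snd h'
      simp only [Prod.snd_mul, Prod.fst_mul] at h2' ⊢
      ext
      · rw [hu1, hu1']
      · simpa using h2'
    exact Units.ext (ψ.injective this)

lemma davenportM_mem (M : Type*) [CommMonoid M] [Fintype M] :
    0 < Fintype.card M ∧ ∀ T : Multiset M, Multiset.card T = Fintype.card M →
      ∃ T' : Multiset M, T' < T ∧ T'.prod = T.prod := by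
  refine ⟨Fintype.card_pos, fun T hT => ?_⟩
  set c := Fintype.card M
  set L := T.toList with hLdef
  have hL : (L : Multiset M) = T := T.coe_toList
  have hlen : L.length = c := by rw [← hT, ← hL]; rfl
  have hcard : Fintype.card M < Fintype.card (Fin (c + 1)) := by simp; exact le_rfl
  obtain ⟨j, k, hjk, heq⟩ := Fintype.exists_ne_map_eq_of_card_lt
    (fun k : Fin (c + 1) => (L.take k).prod) hcard
  wlog hlt : (j : ℕ) < (k : ℕ) generalizing j k
  · refine this k j hjk.symm heq.symm ?_
    have hne : (k : ℕ) ≠ (j : ℕ) := fun h => hjk (Fin.ext h.symm)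
    omega
  set L' := L.take j ++ L.drop k with hL'
  have hsub : List.Sublist L' L := by
    have h1 : List.Sublist (L.take (j : ℕ)) (L.take (k : ℕ)) := by
      rw [show L.take (j:ℕ) = (L.take (k:ℕ)).take (j:ℕ) by
        rw [List.take_take, min_eq_left (le_of_lt hlt)]]
      exact List.take_sublist _ _
    have h2 := h1.append_right (L.drop (k:ℕ))
    rwa [List.take_append_drop] at h2
  refine ⟨(L' : Multiset M), ?_, ?_⟩
  · refine lt_of_le_of_ne (Multiset.coe_le.mpr hsub.subperm |>.trans (le_of_eq hL)) ?_
    intro h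
    have hlen' : L'.length = L.length := by
      have := congrArg Multiset.card h
      simp only [Multiset.coe_card] at this
      rw [this, ← hL, Multiset.coe_card]
    have hk : (k : ℕ) ≤ c := by omega
    rw [hL', List.length_append, List.length_take, List.length_drop, hlen] at hlen'
    omega
  · have hsplit : L = L.take (k:ℕ) ++ L.drop (k:ℕ) := (List.take_append_drop _ _).symm
    have : T.prod = (L.take (k:ℕ)).prod * (L.drop (k:ℕ)).prod := by
      rw [← hL]; conv_lhs => rw [hsplit]
      simp
    rw [this, ← heq]
    simp [hL']

set_option maxHeartbeats 2000000 in
theorem davenport_ge_units_add_P2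
    (r : ℕ) (hr : 1 ≤ r) (n : Fin r → ℕ) (hn : ∀ i, 1 < n i) :
    DavenportG ((i : Fin r) → ZMod (n i))ˣ
        + (Finset.univ.filter fun i : Fin r => 2 ∣ n i ∧ ¬ (4 ∣ n i)).card
      ≤ DavenportM ((i : Fin r) → ZMod (n i)) := by
  classical
  haveI : ∀ i, NeZero (n i) := fun i => ⟨by have := hn i; omega⟩
  set R := (i : Fin r) → ZMod (n i) with hR
  set G := Rˣ with hG
  set D := DavenportG G with hD
  set I : Finset (Fin r) := Finset.univ.filter (fun i => 2 ∣ n i ∧ ¬ (4 ∣ n i)) with hIdef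
  set P := I.card with hP
  have hepre : ∀ i ∈ I, ∃ e : ZMod (n i), ¬ IsUnit e ∧
      ∀ u u' : (ZMod (n i))ˣ, (u : ZMod (n i)) * e = (u' : ZMod (n i)) * e → u = u' := by
    intro i hi
    rw [hIdef, Finset.mem_filter] at hi
    exact exists_e (n i) hi.2.1 hi.2.2
  choose e he1 he2 using hepre
  obtain ⟨W, hWcard, hW⟩ : ∃ W : Multiset G, Multiset.card W = D - 1 ∧
      ∀ V : Multiset G, V ≤ W → V ≠ 0 → V.prod ≠ 1 := by
    rcases Nat.lt_or_ge D 2 with h | h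
    · refine ⟨0, by simp; omega, ?_⟩
      intro V hV hV0 _
      exact hV0 (Multiset.le_zero.mp hV)
    · have hlt : D - 1 < sInf {ℓ : ℕ | 0 < ℓ ∧ ∀ T : Multiset G, Multiset.card T = ℓ →
          ∃ T' : Multiset G, T' ≤ T ∧ T' ≠ 0 ∧ T'.prod = 1} := by
        change D - 1 < DavenportG G
        omega
      have hmem := Nat.notMem_of_lt_sInf hlt
      rw [Set.mem_setOf_eq, not_and] at hmem
      have hmem' := hmem (by omega)
      push_neg at hmem'
      obtain ⟨W, hWc, hWp⟩ := hmem'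
      exact ⟨W, hWc, hWp⟩
  set a : Fin r → R := fun i => if h : i ∈ I then Pi.mulSingle i (e i h) else 1 with ha
  set A : Multiset R := I.val.map a with hA
  set Wc : Multiset R := W.map (fun u : G => (u : R)) with hWc
  set T : Multiset R := Wc + A with hT
  have coordProd : ∀ (s : Multiset R) (j : Fin r), s.prod j = (s.map (fun x => x j)).prod := by
    intro s j
    exact map_multiset_prod (Pi.evalMonoidHom (fun i => ZMod (n i)) j) s
  have ha_mem : ∀ i (h : i ∈ I), a i = Pi.mulSingle i (e i h) := fun i h => by
    rw [ha]; exact dif_pos h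
  have ha_apply : ∀ i j, i ∈ I → i ≠ j → a i j = 1 := by
    intro i j hi hij
    rw [ha_mem i hi]
    exact Pi.mulSingle_eq_of_ne hij.symm _
  have ha_self : ∀ i (h : i ∈ I), a i i = e i h := fun i h => by
    rw [ha_mem i h, Pi.mulSingle_eq_same]
  have ha_nonunit : ∀ i ∈ I, ¬ IsUnit (a i) := by
    intro i hi hu
    have h2 := hu.map (Pi.evalMonoidHom (fun i => ZMod (n i)) i)
    rw [show (Pi.evalMonoidHom (fun i => ZMod (n i)) i) (a i) = a i i from rfl,
      ha_self i hi] at h2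
    exact he1 i hi h2
  have hA_nonunit : ∀ x ∈ A, ¬ IsUnit x := by
    intro x hx
    rw [hA, Multiset.mem_map] at hx
    obtain ⟨i, hi, rfl⟩ := hx
    exact ha_nonunit i (by simpa using hi)
  have hWc_unit : ∀ x ∈ Wc, IsUnit x := by
    intro x hx
    rw [hWc, Multiset.mem_map] at hx
    obtain ⟨u, _, rfl⟩ := hx
    exact u.isUnit
  have hAprod : ∀ j, A.prod j = if h : j ∈ I then e j h else 1 := by
    intro j
    rw [coordProd, hA, Multiset.map_map, ← Finset.prod_eq_multiset_prod]
    by_cases hj : j ∈ I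
    · rw [dif_pos hj]
      refine (Finset.prod_eq_single j (fun b hb hbj => ha_apply b j hb hbj)
        (fun h => absurd hj h)).trans ?_
      exact ha_self j hj
    · rw [dif_neg hj]
      exact Finset.prod_eq_one (fun k hk => ha_apply k j hk (fun h => hj (h ▸ hk)))
  have ha_inj : ∀ i ∈ I, ∀ j ∈ I, a i = a j → i = j := by
    intro i hi j hj hij
    by_contra hne
    have h1 : a i i = e i hi := ha_self i hi
    have h2 : a j i = 1 := ha_apply j i hj (fun h => hne h.symm)
    rw [hij, h2] at h1
    exact he1 i hi (h1 ▸ isUnit_one)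
  have hAnodup : A.Nodup := by
    rw [hA]
    exact Multiset.Nodup.map_on
      (fun x hx y hy h => ha_inj x (by simpa using hx) y (by simpa using hy) h) I.nodup
  have hTcard : Multiset.card T = (D - 1) + P := by
    rw [hT, Multiset.card_add, hWc, hA, Multiset.card_map, Multiset.card_map, hWcard]
    rfl
  -- rigidity
  have hrigid : ∀ T' : Multiset R, T' < T → T'.prod ≠ T.prod := by
    intro T' hlt hprod
    set W₁ := T'.filter IsUnit with hW₁def
    set A₁ := T'.filter (fun x => ¬ IsUnit x) with hA₁def
    have hsplit : W₁ + A₁ = T' := Multiset.filter_add_not _ _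
    have hfU1 : Multiset.filter IsUnit Wc = Wc := Multiset.filter_eq_self.mpr hWc_unit
    have hfU2 : Multiset.filter IsUnit A = 0 := Multiset.filter_eq_nil.mpr hA_nonunit
    have hfN1 : Multiset.filter (fun x => ¬ IsUnit x) Wc = 0 :=
      Multiset.filter_eq_nil.mpr (fun x hx h => h (hWc_unit x hx))
    have hfN2 : Multiset.filter (fun x => ¬ IsUnit x) A = A :=
      Multiset.filter_eq_self.mpr hA_nonunit
    have hW₁le : W₁ ≤ Wc := by
      have h0 := Multiset.filter_le_filter IsUnit (le_of_lt hlt)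
      rwa [hT, Multiset.filter_add, hfU1, hfU2, add_zero, ← hW₁def] at h0
    have hA₁le : A₁ ≤ A := by
      have h0 := Multiset.filter_le_filter (fun x => ¬ IsUnit x) (le_of_lt hlt)
      rwa [hT, Multiset.filter_add, hfN1, hfN2, zero_add, ← hA₁def] at h0
    have hW₁unit : IsUnit W₁.prod :=
      isUnit_msprod _ (fun x hx => Multiset.of_mem_filter hx)
    have hWcunit : IsUnit Wc.prod := isUnit_msprod _ hWc_unit
    have hA₁ : A₁ = A := by
      by_contra hne
      have hex : ∃ i, ∃ h : i ∈ I, a i ∉ A₁ := by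
        by_contra hall
        push_neg at hall
        have hAle : A ≤ A₁ := by
          rw [Multiset.le_iff_count]
          intro x
          by_cases hx : x ∈ A
          · have h1 : A.count x = 1 := Multiset.count_eq_one_of_mem hAnodup hx
            have hx' : x ∈ A₁ := by
              rw [hA, Multiset.mem_map] at hx
              obtain ⟨i, hi, rfl⟩ := hx
              exact hall i (by simpa using hi)
            rw [h1]
            exact Multiset.one_le_count_iff_mem.mpr hx'
          · rw [Multiset.count_eq_zero.mpr hx]
            exact Nat.zero_le _
        exact hne (le_antisymm hA₁le hAle)
      obtain ⟨i, hi, hai⟩ := hex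
      have hcoord := congrFun hprod i
      have hA₁i : A₁.prod i = 1 := by
        rw [coordProd]
        refine Multiset.prod_eq_one ?_
        intro y hy
        rw [Multiset.mem_map] at hy
        obtain ⟨x, hx, rfl⟩ := hy
        have hxA : x ∈ A := Multiset.mem_of_le hA₁le hx
        rw [hA, Multiset.mem_map] at hxA
        obtain ⟨k, hk, rfl⟩ := hxA
        have hki : k ≠ i := fun h => hai (h ▸ hx)
        exact ha_apply k i (by simpa using hk) hki
      have hlhs : IsUnit (T'.prod i) := by
        rw [← hsplit, Multiset.prod_add, Pi.mul_apply, hA₁i, mul_one]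
        exact hW₁unit.map (Pi.evalMonoidHom (fun i => ZMod (n i)) i)
      have hrhs : ¬ IsUnit (T.prod i) := by
        rw [hT, Multiset.prod_add, Pi.mul_apply]
        intro hu
        rw [hAprod i, dif_pos hi] at hu
        exact he1 i hi (isUnit_of_mul_isUnit_right hu)
      rw [hcoord] at hlhs
      exact hrhs hlhs
    have hprod2 : W₁.prod * A.prod = Wc.prod * A.prod := by
      have h1 : T'.prod = W₁.prod * A₁.prod := by rw [← hsplit, Multiset.prod_add]
      have h2 : T.prod = Wc.prod * A.prod := by rw [hT, Multiset.prod_add]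
      rw [h1, h2, hA₁] at hprod
      exact hprod
    have hWeq : W₁.prod = Wc.prod := by
      funext j
      have hj := congrFun hprod2 j
      rw [Pi.mul_apply, Pi.mul_apply] at hj
      by_cases hjI : j ∈ I
      · rw [hAprod j, dif_pos hjI] at hj
        have h1 : IsUnit (W₁.prod j) :=
          hW₁unit.map (Pi.evalMonoidHom (fun i => ZMod (n i)) j)
        have h2 : IsUnit (Wc.prod j) :=
          hWcunit.map (Pi.evalMonoidHom (fun i => ZMod (n i)) j)
        have h3 := he2 j hjI h1.unit h2.unit (by rw [IsUnit.unit_spec, IsUnit.unit_spec]; exact hj)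
        rw [← h1.unit_spec, ← h2.unit_spec, h3]
      · rw [hAprod j, dif_neg hjI, mul_one, mul_one] at hj
        exact hj
    set g : R → G := fun x => if h : IsUnit x then h.unit else 1 with hg
    set W₂ := W₁.map g with hW₂
    have hgcoe : ∀ u : G, g (u : R) = u := by
      intro u
      rw [hg]
      dsimp only
      rw [dif_pos u.isUnit]
      exact Units.ext u.isUnit.unit_spec
    have hW₂coe : W₂.map (fun u : G => (u : R)) = W₁ := by
      rw [hW₂, Multiset.map_map]
      have hpt : ∀ x ∈ W₁, ((fun u : G => (u : R)) ∘ g) x = id x := by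
        intro x hx
        have hu : IsUnit x := Multiset.of_mem_filter hx
        simp only [Function.comp, id]
        rw [hg]
        dsimp only
        rw [dif_pos hu]
        exact hu.unit_spec
      rw [Multiset.map_congr rfl hpt, Multiset.map_id]
    have hW₂le : W₂ ≤ W := by
      have h1 := Multiset.map_le_map (f := g) hW₁le
      rw [hWc, Multiset.map_map] at h1
      have h2 : ∀ x ∈ W, (g ∘ (fun u : G => (u : R))) x = id x := fun x _ => hgcoe x
      rwa [Multiset.map_congr rfl h2, Multiset.map_id, ← hW₂] at h1
    have hW₂prod : W₂.prod = W.prod := by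
      apply Units.ext
      have e1 : ((W₂.prod : G) : R) = (W₂.map (fun u : G => (u : R))).prod :=
        map_multiset_prod (Units.coeHom R) W₂
      have e2 : ((W.prod : G) : R) = Wc.prod := by
        rw [hWc]; exact map_multiset_prod (Units.coeHom R) W
      rw [e1, hW₂coe, hWeq, ← e2]
    rcases eq_or_lt_of_le hW₂le with heq | hltW
    · have hTT : T' = T := by
        rw [← hsplit, hA₁, ← hW₂coe, heq, hT, hWc]
      exact (ne_of_lt hlt) hTT
    · set V := W - W₂ with hV
      have hVadd : W₂ + V = W := add_tsub_cancel_of_le hW₂le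
      have hVne : V ≠ 0 := by
        intro h0
        rw [h0, add_zero] at hVadd
        exact (ne_of_lt hltW) hVadd
      have hVprod : V.prod = 1 := by
        have h5 := congrArg Multiset.prod hVadd
        rw [Multiset.prod_add, hW₂prod] at h5
        exact mul_left_cancel (h5.trans (mul_one _).symm)
      exact hW V (Multiset.sub_le_self _ _) hVne hVprod
  -- conclusion
  haveI : Fintype R := inferInstance
  have hne : {ℓ : ℕ | 0 < ℓ ∧ ∀ Tm : Multiset R, Multiset.card Tm = ℓ →
      ∃ T' : Multiset R, T' < Tm ∧ T'.prod = Tm.prod}.Nonempty :=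
    ⟨Fintype.card R, davenportM_mem R⟩
  rw [DavenportM]
  refine le_csInf hne ?_
  rintro ℓ ⟨hℓpos, hℓ⟩
  by_contra hcon
  push_neg at hcon
  have hle : ℓ ≤ Multiset.card T := by rw [hTcard]; omega
  set L : List R := T.toList with hLdef
  have hL : (L : Multiset R) = T := T.coe_toList
  set T₀ : Multiset R := ((L.take ℓ : List R) : Multiset R) with hT₀
  have hT₀le : T₀ ≤ T := by
    rw [← hL, hT₀]
    exact Multiset.coe_le.mpr (List.take_sublist _ _).subperm
  have hT₀card : Multiset.card T₀ = ℓ := by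
    rw [hT₀]
    show (L.take ℓ).length = ℓ
    rw [List.length_take]
    have hlen : L.length = Multiset.card T := by rw [← hL]; rfl
    omega
  obtain ⟨T₀', hT₀'lt, hT₀'prod⟩ := hℓ T₀ hT₀card
  have hTsplit : T₀ + (T - T₀) = T := add_tsub_cancel_of_le hT₀le
  have hbig : T₀' + (T - T₀) < T := by
    conv_rhs => rw [← hTsplit]
    exact add_lt_add_left hT₀'lt _
  refine hrigid _ hbig ?_
  conv_rhs => rw [← hTsplit]
  rw [Multiset.prod_add, Multiset.prod_add, hT₀'prod]
end

section
/- Let G be a finite abelian group and let H be a subgroup of G. Then D(G) ≥ D(G/H) + D(H) − 1. -/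
open Multiset

/-- If `S ≤ T.map f` with `f` injective, then `S` is the image of a sub-multiset of `T`. -/
private lemma le_map_exists {α β : Type*} [DecidableEq α] [DecidableEq β]
    {f : α → β} (hf : Function.Injective f) :
    ∀ {S : Multiset β} {T : Multiset α}, S ≤ T.map f → ∃ T' ≤ T, S = T'.map f := by
  intro S
  induction S using Multiset.induction with
  | empty => intro T _; exact ⟨0, Multiset.zero_le T, rfl⟩
  | cons b S ih =>
    intro T h
    have hb : b ∈ T.map f := mem_of_le h (mem_cons_self b S)
    obtain ⟨a, haT, rfl⟩ := mem_map.1 hb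
    have h2 : S ≤ (T.map f).erase (f a) := by
      have := erase_le_erase (f a) h
      rwa [erase_cons_head] at this
    rw [← Multiset.map_erase f hf a T] at h2
    obtain ⟨T', hT', rfl⟩ := ih h2
    refine ⟨a ::ₘ T', ?_, by rw [map_cons]⟩
    calc a ::ₘ T' ≤ a ::ₘ T.erase a := cons_le_cons a hT'
      _ = T := cons_erase haT

/-- Pigeonhole: any multiset of size `Fintype.card G` has a nonempty product-one
sub-multiset. Version for an ordered pair of indices. -/
private lemma zero_sum_of_pair {G : Type*} [CommGroup G] (l : List G)
    {i j : ℕ} (hij : i < j) (hj : j ≤ l.length)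
    (hfij : (l.take i).prod = (l.take j).prod) :
    ∃ T' : Multiset G, T' ≤ (l : Multiset G) ∧ T' ≠ 0 ∧ T'.prod = 1 := by
  set m : List G := (l.drop i).take (j - i) with hm
  have hsub : m.Sublist l := ((l.drop i).take_sublist _).trans (l.drop_sublist _)
  have hlen : m.length = j - i := by
    rw [hm, List.length_take, List.length_drop]
    omega
  have hsplit : l.take j = l.take i ++ m := by
    rw [hm, ← List.take_add]
    congr 1
    omega
  refine ⟨(m : Multiset G), Multiset.coe_le.mpr hsub.subperm, ?_, ?_⟩
  · simp only [ne_eq, Multiset.coe_eq_zero]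
    intro h
    rw [h] at hlen
    simp at hlen
    omega
  · rw [Multiset.prod_coe]
    have : (l.take i).prod * m.prod = (l.take i).prod * 1 := by
      rw [mul_one, ← List.prod_append, ← hsplit, hfij]
    exact mul_left_cancel this

/-- The defining set of `DavenportG` is nonempty for a finite group. -/
private lemma davenport_set_nonempty (G : Type*) [CommGroup G] [Fintype G] :
    Set.Nonempty {ℓ : ℕ | 0 < ℓ ∧ ∀ T : Multiset G, Multiset.card T = ℓ →
      ∃ T' : Multiset G, T' ≤ T ∧ T' ≠ 0 ∧ T'.prod = 1} := by
  refine ⟨Fintype.card G, Fintype.card_pos, fun T hT => ?_⟩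
  set l := T.toList with hl
  have hlen : l.length = Fintype.card G := by
    rw [hl, Multiset.length_toList]; exact hT
  have hcard : Fintype.card G < Fintype.card (Fin (Fintype.card G + 1)) := by
    simp
  obtain ⟨i, j, hne, hfij⟩ := Fintype.exists_ne_map_eq_of_card_lt
    (fun k : Fin (Fintype.card G + 1) => (l.take k).prod) hcard
  have hT' : T = (l : Multiset G) := (Multiset.coe_toList T).symm
  rw [hT']
  rcases lt_or_gt_of_ne (fun h : (i : ℕ) = (j : ℕ) => hne (Fin.ext h)) with h | h
  · exact zero_sum_of_pair l h (by omega) hfij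
  · exact zero_sum_of_pair l h (by omega) hfij.symm

/-- There is a multiset of size `DavenportG G - 1` with no nonempty product-one
sub-multiset. -/
private lemma exists_bad (G : Type*) [CommGroup G] :
    ∃ T : Multiset G, Multiset.card T = DavenportG G - 1 ∧
      ∀ T' ≤ T, T' ≠ 0 → T'.prod ≠ 1 := by
  rcases Nat.lt_or_ge (DavenportG G) 2 with h | h
  · refine ⟨0, by simp only [Multiset.card_zero]; omega, fun T' hT' hne => ?_⟩
    exact absurd (Multiset.le_zero.1 hT') hne
  · have hlt : DavenportG G - 1 < DavenportG G := by omega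
    have hd : DavenportG G - 1 ∉ {ℓ : ℕ | 0 < ℓ ∧ ∀ T : Multiset G, Multiset.card T = ℓ →
        ∃ T' : Multiset G, T' ≤ T ∧ T' ≠ 0 ∧ T'.prod = 1} :=
      Nat.notMem_of_lt_sInf hlt
    simp only [Set.mem_setOf_eq, not_and, not_forall] at hd
    obtain ⟨T, hTcard, hT⟩ := hd (by omega)
    refine ⟨T, hTcard, fun T' hle hne hprod => hT ⟨T', hle, hne, hprod⟩⟩

theorem davenport_quotient_lower_bound
    (G : Type*) [CommGroup G] [Fintype G] (H : Subgroup G) :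
    DavenportG (G ⧸ H) + DavenportG H - 1 ≤ DavenportG G := by
  classical
  obtain ⟨TQ, hTQcard, hTQ⟩ := exists_bad (G ⧸ H)
  obtain ⟨TH, hTHcard, hTH⟩ := exists_bad H
  -- a section of the quotient map
  set s : G ⧸ H → G := Quotient.out with hs
  have hsec : ∀ x : G ⧸ H, (QuotientGroup.mk (s x) : G ⧸ H) = x := fun x =>
    Quotient.out_eq x
  have hsinj : Function.Injective s := fun x y hxy => by
    rw [← hsec x, ← hsec y, hxy]
  -- the combined multiset
  set TG : Multiset G := TQ.map s + TH.map (H.subtype) with hTG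
  have hTGcard : Multiset.card TG = (DavenportG (G ⧸ H) - 1) + (DavenportG H - 1) := by
    rw [hTG]; simp [hTQcard, hTHcard]
  -- TG has no nonempty product-one sub-multiset
  have hbad : ∀ T' ≤ TG, T' ≠ 0 → T'.prod ≠ 1 := by
    intro T' hle hne hprod
    -- decompose T' into the part from TQ.map s and the part from TH.map subtype
    set A : Multiset G := T' ∩ (TQ.map s) with hA
    set B : Multiset G := T' - (TQ.map s) with hB
    have hdecomp : B + A = T' := Multiset.sub_add_inter T' (TQ.map s)
    have hAle : A ≤ TQ.map s := Multiset.inter_le_right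
    have hBle : B ≤ TH.map H.subtype := by
      rw [hB]
      rw [hTG] at hle
      exact tsub_le_iff_left.mpr hle
    obtain ⟨TQ', hTQ'le, hAeq⟩ := le_map_exists hsinj hAle
    obtain ⟨TH', hTH'le, hBeq⟩ := le_map_exists (H.subtype_injective) hBle
    -- push to the quotient
    have hprod2 : A.prod * B.prod = 1 := by
      rw [mul_comm, ← Multiset.prod_add, hdecomp, hprod]
    have hqB : (QuotientGroup.mk B.prod : G ⧸ H) = 1 := by
      have : B.prod ∈ H := by
        rw [hBeq]
        exact multiset_prod_mem _ (fun x hx => by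
          obtain ⟨y, _, rfl⟩ := Multiset.mem_map.1 hx
          exact y.2)
      rwa [QuotientGroup.eq_one_iff]
    have hqA : TQ'.prod = 1 := by
      have h1 : (QuotientGroup.mk' H) A.prod = 1 := by
        have := congrArg (QuotientGroup.mk' H) hprod2
        rw [map_mul, map_one] at this
        rw [show (QuotientGroup.mk' H) B.prod = 1 from hqB, mul_one] at this
        exact this
      have h2 : (QuotientGroup.mk' H) A.prod = TQ'.prod := by
        rw [hAeq, (QuotientGroup.mk' H).map_multiset_prod, Multiset.map_map]
        congr 1
        conv_rhs => rw [← Multiset.map_id TQ']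
        exact Multiset.map_congr rfl (fun x _ => hsec x)
      rw [← h2, h1]
    -- hence TQ' = 0
    have hTQ'0 : TQ' = 0 := by
      by_contra hne'
      exact hTQ TQ' hTQ'le hne' hqA
    have hA0 : A = 0 := by rw [hAeq, hTQ'0, Multiset.map_zero]
    -- then B.prod = 1 in H, so TH' = 0
    have hBprod : B.prod = 1 := by
      rw [← hdecomp, hA0, add_zero] at hprod
      exact hprod
    have hTH'prod : TH'.prod = 1 := by
      apply H.subtype_injective
      rw [map_one]
      rw [← hBprod, hBeq, ← (H.subtype).map_multiset_prod]
    have hTH'0 : TH' = 0 := by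
      by_contra hne'
      exact hTH TH' hTH'le hne' hTH'prod
    have hB0 : B = 0 := by rw [hBeq, hTH'0, Multiset.map_zero]
    rw [← hdecomp, hA0, hB0] at hne
    exact hne rfl
  -- conclude
  have hQpos : 0 < DavenportG (G ⧸ H) := by
    have := Nat.sInf_mem (davenport_set_nonempty (G ⧸ H))
    exact this.1
  have hHpos : 0 < DavenportG H := by
    have := Nat.sInf_mem (davenport_set_nonempty H)
    exact this.1
  set ℓ := (DavenportG (G ⧸ H) - 1) + (DavenportG H - 1) with hℓ
  have key : ℓ + 1 ≤ DavenportG G := by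
    unfold DavenportG
    refine le_csInf (davenport_set_nonempty G) ?_
    rintro n ⟨hnpos, hn⟩
    by_contra hlt
    push_neg at hlt
    have hnℓ : n ≤ ℓ := by omega
    -- take a sub-multiset of TG of size n
    set T₀ : Multiset G := ((TG.toList.take n : List G) : Multiset G) with hT₀
    have hT₀le : T₀ ≤ TG := by
      have hsub : (TG.toList.take n).Sublist TG.toList := List.take_sublist _ _
      calc T₀ ≤ (TG.toList : Multiset G) := Multiset.coe_le.mpr hsub.subperm
        _ = TG := Multiset.coe_toList TG
    have hT₀card : Multiset.card T₀ = n := by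
      rw [hT₀, Multiset.coe_card, List.length_take, Multiset.length_toList, hTGcard]
      omega
    obtain ⟨T', hT'le, hT'ne, hT'prod⟩ := hn T₀ hT₀card
    exact hbad T' (hT'le.trans hT₀le) hT'ne hT'prod
  omega
end

section
/- Let r ≥ 1 and n_1, …, n_r > 1 be integers and let R = ℤ_{n_1} ⊕ ⋯ ⊕ ℤ_{n_r} with multiplicative monoid S_R. Let a, b ∈ R with b dividing a in S_R but a not dividing b. Suppose there exists an index t ∈ [1,r] such that either (1) for some prime p > 2, pot_p(gcd(b_t, n_t)) < pot_p(gcd(a_t, n_t)), or (2) pot_2(gcd(b_t, n_t)) < pot_2(gcd(a_t, n_t)) < pot_2(n_t). Then St(b) is a proper subset of St(a), where for c ∈ R the stabilizer St(c) is the set of units u ∈ Rˣ with u·c = c, and x_i denotes the canonical integer representative in [0, n_i − 1] of the i-th coordinate of x ∈ R. -/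
lemma my_choose_c (p m : ℕ) (hp : p.Prime) (h : 2 < p ∨ p ∣ m) :
    ∃ c, c ≠ 0 ∧ ¬ p ∣ c ∧ ¬ p ∣ 1 + c * m := by
  have hp1 : ¬ p ∣ 1 := fun hd => hp.one_lt.ne' (Nat.dvd_one.mp hd)
  rcases h with h | h
  · by_cases h1 : p ∣ 1 + m
    · refine ⟨2, by norm_num, fun hd => absurd (Nat.le_of_dvd (by norm_num) hd) (by omega),
        fun h2 => ?_⟩
      have hm : p ∣ m := by
        have := Nat.dvd_sub h2 h1
        have h3 : 1 + 2 * m - (1 + m) = m := by omega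
        rwa [h3] at this
      exact hp1 ((Nat.dvd_add_right hm).mp (by simpa [Nat.add_comm] using h1))
    · exact ⟨1, one_ne_zero, by simpa using hp.one_lt.ne', by simpa using h1⟩
  · refine ⟨1, one_ne_zero, by simpa using hp.one_lt.ne', fun h1 => ?_⟩
    exact hp1 ((Nat.dvd_add_right h).mp (by simpa [Nat.add_comm, Nat.one_mul] using h1))

lemma my_key (N A B p c : ℕ) (hN : 1 < N) (hp : p.Prime) (hc0 : c ≠ 0) (hc : ¬ p ∣ c)
    (hv : (B.gcd N).factorization p < (A.gcd N).factorization p) :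
    N ∣ c * (N / p ^ (A.gcd N).factorization p) * A ∧
      ¬ N ∣ c * (N / p ^ (A.gcd N).factorization p) * B := by
  have hN0 : N ≠ 0 := by omega
  set va := (A.gcd N).factorization p with hva
  set vb := (B.gcd N).factorization p with hvb
  set m := N / p ^ va with hm
  have hαN : A.gcd N ∣ N := Nat.gcd_dvd_right _ _
  have hα0 : A.gcd N ≠ 0 := fun h => hN0 (Nat.eq_zero_of_gcd_eq_zero_right h)
  have hpva_α : p ^ va ∣ A.gcd N := Nat.ordProj_dvd _ _
  have hpva_N : p ^ va ∣ N := hpva_α.trans hαN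
  have hpva_A : p ^ va ∣ A := hpva_α.trans (Nat.gcd_dvd_left _ _)
  have hmN : m * p ^ va = N := Nat.div_mul_cancel hpva_N
  have hdvdA : N ∣ c * m * A := by
    obtain ⟨A', hA'⟩ := hpva_A
    exact ⟨c * A', by rw [hA', ← hmN]; ring⟩
  refine ⟨hdvdA, fun hdvd => ?_⟩
  have hva_le : va ≤ N.factorization p := by
    rw [hva]
    exact (Nat.factorization_le_iff_dvd hα0 hN0).mpr hαN p
  have hB0 : B ≠ 0 := by
    rintro rfl
    rw [Nat.gcd_zero_left] at hvb
    omega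
  have hβ : (B.gcd N).factorization = B.factorization ⊓ N.factorization :=
    Nat.factorization_gcd hB0 hN0
  have hvbB : B.factorization p = vb := by
    have : vb = min (B.factorization p) (N.factorization p) := by
      rw [hvb, hβ]; rfl
    omega
  have hm0 : m ≠ 0 := by
    rw [hm]
    exact Nat.div_ne_zero_iff_of_dvd hpva_N |>.mpr ⟨hN0, pow_ne_zero _ hp.pos.ne'⟩
  have hvm : m.factorization p = N.factorization p - va := by
    rw [hm, Nat.factorization_div hpva_N, Finsupp.coe_tsub, Pi.sub_apply,
      Nat.Prime.factorization_pow hp]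
    simp
  have hprod0 : c * m * B ≠ 0 := by positivity
  have hle : N.factorization p ≤ (c * m * B).factorization p := by
    refine (Nat.Prime.pow_dvd_iff_le_factorization hp hprod0).mp ?_
    exact (Nat.ordProj_dvd N p).trans hdvd
  have hvc : c.factorization p = 0 := Nat.factorization_eq_zero_of_not_dvd hc
  rw [Nat.factorization_mul (by positivity) hB0, Nat.factorization_mul hc0 hm0] at hle
  simp only [Finsupp.coe_add, Pi.add_apply, hvc, hvm, hvbB] at hle
  omega

lemma my_cop (N p c va : ℕ) (hN : 1 < N) (hp : p.Prime) (hpvaN : p ^ va ∣ N)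
    (hpm : ¬ p ∣ 1 + c * (N / p ^ va)) : Nat.Coprime (1 + c * (N / p ^ va)) N := by
  have hN0 : N ≠ 0 := by omega
  set m := N / p ^ va with hm
  have hm0 : m ≠ 0 :=
    Nat.div_ne_zero_iff_of_dvd hpvaN |>.mpr ⟨hN0, pow_ne_zero _ hp.pos.ne'⟩
  rw [Nat.coprime_iff_gcd_eq_one]
  by_contra hg
  obtain ⟨q, hq, hqd⟩ := Nat.exists_prime_and_dvd hg
  have hq1 : q ∣ 1 + c * m := hqd.trans (Nat.gcd_dvd_left _ _)
  have hqN : q ∣ N := hqd.trans (Nat.gcd_dvd_right _ _)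
  rcases eq_or_ne q p with rfl | hqp
  · exact hpm hq1
  · have hqm : q ∣ m := by
      have hv : m.factorization q = N.factorization q := by
        rw [hm, Nat.factorization_div hpvaN, Finsupp.coe_tsub, Pi.sub_apply,
          Nat.Prime.factorization_pow hp, Finsupp.single_apply, if_neg (fun h => hqp h.symm)]
        rfl
      have h1 : 1 ≤ N.factorization q := (hq.dvd_iff_one_le_factorization hN0).mp hqN
      exact (hq.dvd_iff_one_le_factorization hm0).mpr (hv ▸ h1)
    have : q ∣ 1 := by
      have := Nat.dvd_sub hq1 (hqm.mul_left c)
      simpa using this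
    exact hq.one_lt.ne' (Nat.dvd_one.mp this)

theorem stabilizer_ssubset_of_green_lt
    (r : ℕ) (hr : 1 ≤ r) (n : Fin r → ℕ) (hn : ∀ i, 1 < n i)
    (a b : (i : Fin r) → ZMod (n i)) (hba : b ∣ a) (hab : ¬ a ∣ b)
    (t : Fin r)
    (ht : (∃ p : ℕ, p.Prime ∧ 2 < p ∧
            (Nat.gcd ((b t).val) (n t)).factorization p
              < (Nat.gcd ((a t).val) (n t)).factorization p)
        ∨ ((Nat.gcd ((b t).val) (n t)).factorization 2
              < (Nat.gcd ((a t).val) (n t)).factorization 2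
            ∧ (Nat.gcd ((a t).val) (n t)).factorization 2
              < (n t).factorization 2)) :
    {u : ((i : Fin r) → ZMod (n i))ˣ | (u : (i : Fin r) → ZMod (n i)) * b = b}
      ⊂ {u : ((i : Fin r) → ZMod (n i))ˣ | (u : (i : Fin r) → ZMod (n i)) * a = a} := by
  have hN : 1 < n t := hn t
  have hN0 : n t ≠ 0 := by omega
  haveI : NeZero (n t) := ⟨hN0⟩
  -- unify the two cases
  obtain ⟨p, hp, hv, hor⟩ :
      ∃ p : ℕ, p.Prime ∧
        ((b t).val.gcd (n t)).factorization p < ((a t).val.gcd (n t)).factorization p ∧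
        (2 < p ∨ ((a t).val.gcd (n t)).factorization p < (n t).factorization p) := by
    rcases ht with ⟨p, hp, h2, hv⟩ | ⟨hv, hlt⟩
    · exact ⟨p, hp, hv, Or.inl h2⟩
    · exact ⟨2, Nat.prime_two, hv, Or.inr hlt⟩
  set A := (a t).val with hA
  set B := (b t).val with hB
  set va := (A.gcd (n t)).factorization p with hva
  set m := n t / p ^ va with hm
  have hpva_N : p ^ va ∣ n t :=
    (Nat.ordProj_dvd _ _).trans (Nat.gcd_dvd_right A (n t))
  have hm0 : m ≠ 0 :=
    Nat.div_ne_zero_iff_of_dvd hpva_N |>.mpr ⟨hN0, pow_ne_zero _ hp.pos.ne'⟩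
  have hside : 2 < p ∨ p ∣ m := by
    rcases hor with h | h
    · exact Or.inl h
    · right
      have hvm : m.factorization p = (n t).factorization p - va := by
        rw [hm, Nat.factorization_div hpva_N, Finsupp.coe_tsub, Pi.sub_apply,
          Nat.Prime.factorization_pow hp]
        simp
      refine (hp.dvd_iff_one_le_factorization hm0).mpr ?_
      omega
  obtain ⟨c, hc0, hpc, hpm⟩ := my_choose_c p m hp hside
  have hcop : Nat.Coprime (1 + c * m) (n t) := my_cop (n t) p c va hN hp hpva_N hpm
  obtain ⟨hdvdA, hndvdB⟩ := my_key (n t) A B p c hN hp hc0 hpc hv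
  -- the unit
  set w : (ZMod (n t))ˣ := ZMod.unitOfCoprime (1 + c * m) hcop with hw
  have hwval : (w : ZMod (n t)) = ((1 + c * m : ℕ) : ZMod (n t)) :=
    ZMod.coe_unitOfCoprime _ _
  set U : ((i : Fin r) → ZMod (n i))ˣ :=
    { val := Function.update (1 : (i : Fin r) → ZMod (n i)) t (w : ZMod (n t))
      inv := Function.update (1 : (i : Fin r) → ZMod (n i)) t ((w⁻¹ : (ZMod (n t))ˣ) : ZMod (n t))
      val_inv := by
        funext i
        rcases eq_or_ne i t with rfl | hi
        · simp
        · simp [Function.update_of_ne hi]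
      inv_val := by
        funext i
        rcases eq_or_ne i t with rfl | hi
        · simp
        · simp [Function.update_of_ne hi] } with hU
  have haA : ((A : ℕ) : ZMod (n t)) = a t := by
    rw [hA, ZMod.natCast_val, ZMod.cast_id]
  have hbB : ((B : ℕ) : ZMod (n t)) = b t := by
    rw [hB, ZMod.natCast_val, ZMod.cast_id]
  have hval : (U : (i : Fin r) → ZMod (n i))
      = Function.update (1 : (i : Fin r) → ZMod (n i)) t (w : ZMod (n t)) := rfl
  have hUa : U ∈ {u : ((i : Fin r) → ZMod (n i))ˣ | (u : (i : Fin r) → ZMod (n i)) * a = a} := by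
    show (U : (i : Fin r) → ZMod (n i)) * a = a
    rw [hval]
    funext i
    rcases eq_or_ne i t with rfl | hi
    · rw [Pi.mul_apply, Function.update_self, hwval]
      have hz : ((c * m : ℕ) : ZMod (n i)) * a i = 0 := by
        rw [← haA, ← Nat.cast_mul, ZMod.natCast_eq_zero_iff]
        exact hdvdA
      push_cast at hz ⊢
      linear_combination hz
    · rw [Pi.mul_apply, Function.update_of_ne hi]
      exact one_mul _
  have hUb : U ∉ {u : ((i : Fin r) → ZMod (n i))ˣ | (u : (i : Fin r) → ZMod (n i)) * b = b} := by
    intro hmem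
    have ht' := congrFun (hmem : (U : (i : Fin r) → ZMod (n i)) * b = b) t
    rw [hval, Pi.mul_apply, Function.update_self, hwval] at ht'
    have hz : ((c * m : ℕ) : ZMod (n t)) * b t = 0 := by
      push_cast at ht' ⊢
      linear_combination ht'
    rw [← hbB, ← Nat.cast_mul, ZMod.natCast_eq_zero_iff] at hz
    exact hndvdB hz
  rw [Set.ssubset_def]
  constructor
  · intro u hu
    obtain ⟨d, rfl⟩ := hba
    show (u : (i : Fin r) → ZMod (n i)) * (b * d) = b * d
    rw [← mul_assoc, hu]
  · intro hsub
    exact hUb (hsub hUa)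
end

section
/- Let q be an odd prime, let n be a positive integer, and let α be a nonnegative integer with q^α dividing n. Then gcd(n/q^α + 1, n) = 1 or gcd(2·(n/q^α) + 1, n) = 1. -/
theorem gcd_succ_div_prime_pow_eq_one
    (q : ℕ) (hq : q.Prime) (hodd : Odd q) (n : ℕ) (hn : 0 < n)
    (α : ℕ) (hdvd : q ^ α ∣ n) :
    Nat.gcd (n / q ^ α + 1) n = 1 ∨ Nat.gcd (2 * (n / q ^ α) + 1) n = 1 := by
  set m := n / q ^ α with hm
  have hnm : q ^ α * m = n := Nat.mul_div_cancel' hdvd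
  by_contra h
  push_neg at h
  obtain ⟨h1, h2⟩ := h
  have hc1 : Nat.Coprime (m + 1) m := by simp [Nat.Coprime]
  have hc2 : Nat.Coprime (2 * m + 1) m := by
    have : (2 : ℕ) * m + 1 = m * 2 + 1 := by ring
    rw [this, Nat.coprime_mul_left_add_left]
    exact Nat.coprime_one_left m
  have key : ∀ k : ℕ, Nat.Coprime k m → Nat.gcd k n ≠ 1 → q ∣ k := by
    intro k hck hk
    by_contra hqk
    apply hk
    have : Nat.Coprime k (q ^ α) :=
      Nat.Coprime.pow_right α (hq.coprime_iff_not_dvd.mpr hqk).symm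
    have : Nat.Coprime k (q ^ α * m) := Nat.Coprime.mul_right this hck
    rwa [hnm] at this
  have hq1 : q ∣ m + 1 := key _ hc1 h1
  have hq2 : q ∣ 2 * m + 1 := key _ hc2 h2
  have hd : q ∣ 1 := by
    have := Nat.dvd_sub (Dvd.dvd.mul_left hq1 2) hq2
    have heq : 2 * (m + 1) - (2 * m + 1) = 1 := by omega
    rwa [heq] at this
  have := Nat.le_of_dvd one_pos hd
  have := hq.two_le
  omega
end

section
/- Let r ≥ 1 and n_1, …, n_r > 1 be integers and let R = ℤ_{n_1} ⊕ ⋯ ⊕ ℤ_{n_r} with multiplicative monoid S_R. Let I = {i ∈ [1,r] : 2 ∣ n_i but 4 ∤ n_i}, and for i ∈ I let b_i ∈ R be the element whose i-th coordinate is 2 and all other coordinates are 1. Let A be a multiset of elements of the unit group Rˣ (viewed as elements of S_R) that is irreducible, i.e., no proper sub-multiset of A has the same product as A. Then the multiset B obtained from A by adjoining b_i for each i ∈ I is also irreducible in S_R. -/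
lemma multiset_prod_isUnit' {M : Type*} [CommMonoid M] {s : Multiset M}
    (h : ∀ x ∈ s, IsUnit x) : IsUnit s.prod := by
  induction s using Multiset.induction with
  | empty => simp
  | cons a s ih =>
    rw [Multiset.prod_cons]
    exact (h a (Multiset.mem_cons_self a s)).mul (ih fun x hx => h x (Multiset.mem_cons_of_mem hx))

lemma zmod2_unit_eq_one : ∀ a : ZMod 2, a ≠ 0 → a = 1 := by decide

lemma cancel_two' {n : ℕ} (h2 : 2 ∣ n) (h4 : ¬ 4 ∣ n) {x y : ZMod n}
    (hx : IsUnit x) (hy : IsUnit y) (h : x * 2 = y * 2) : x = y := by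
  obtain ⟨m, rfl⟩ := h2
  have hm0 : m ≠ 0 := by rintro rfl; exact h4 ⟨0, by simp⟩
  haveI : NeZero (2 * m) := ⟨by omega⟩
  have hmodd : ¬ 2 ∣ m := fun hh => h4 (by obtain ⟨k, rfl⟩ := hh; exact ⟨k, by ring⟩)
  set f : ZMod (2 * m) →+* ZMod 2 := ZMod.castHom ⟨m, rfl⟩ (ZMod 2) with hf
  have hcast : ∀ z : ZMod (2 * m), f z = ((z.val : ℕ) : ZMod 2) := by
    intro z
    rw [hf, ZMod.castHom_apply, ZMod.natCast_val]
  have hone : ∀ z : ZMod (2 * m), IsUnit z → f z = 1 := fun z hz =>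
    zmod2_unit_eq_one _ (hz.map f).ne_zero
  set z := x - y with hz
  have hfz : f z = 0 := by rw [hz, map_sub, hone x hx, hone y hy, sub_self]
  have h2z : 2 ∣ z.val := by
    rwa [hcast, ZMod.natCast_eq_zero_iff] at hfz
  have hz2 : z * 2 = 0 := by rw [hz, sub_mul, h, sub_self]
  have hn2z : (2 * m) ∣ z.val * 2 := by
    rw [← ZMod.natCast_eq_zero_iff]
    push_cast
    rw [ZMod.natCast_zmod_val]
    exact hz2
  have hmz : m ∣ z.val := by
    obtain ⟨k, hk⟩ := hn2z
    rw [show 2 * m * k = 2 * (m * k) by ring] at hk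
    exact ⟨k, by omega⟩
  have hcop : Nat.Coprime 2 m := (Nat.prime_two.coprime_iff_not_dvd).2 hmodd
  have hdvd : (2 * m) ∣ z.val := hcop.mul_dvd_of_dvd_of_dvd h2z hmz
  have hz0 : z.val = 0 := Nat.eq_zero_of_dvd_of_lt hdvd z.val_lt
  have : z = 0 := (ZMod.val_eq_zero z).1 hz0
  rw [hz, sub_eq_zero] at this
  exact this

theorem irreducible_extension_by_doubly_even_coordinates
    (r : ℕ) (hr : 1 ≤ r) (n : Fin r → ℕ) (hn : ∀ i, 1 < n i)
    (b : Fin r → ((j : Fin r) → ZMod (n j)))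
    (hb : ∀ i j, b i j = if j = i then 2 else 1)
    (A : Multiset ((i : Fin r) → ZMod (n i))ˣ)
    (hA : ∀ A' < A.map (fun u => (u : (i : Fin r) → ZMod (n i))),
      A'.prod ≠ (A.map (fun u => (u : (i : Fin r) → ZMod (n i)))).prod)
    (B : Multiset ((i : Fin r) → ZMod (n i)))
    (hB : B = A.map (fun u => (u : (i : Fin r) → ZMod (n i)))
        + (Finset.univ.filter fun i : Fin r => 2 ∣ n i ∧ ¬ (4 ∣ n i)).val.map b) :
    ∀ B' < B, B'.prod ≠ B.prod := by
  haveI : ∀ i, Fact (1 < n i) := fun i => ⟨hn i⟩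
  subst hB
  set X : Multiset ((i : Fin r) → ZMod (n i)) := A.map (fun u => (u : (i : Fin r) → ZMod (n i))) with hX
  set I : Finset (Fin r) := Finset.univ.filter fun i : Fin r => 2 ∣ n i ∧ ¬ (4 ∣ n i) with hI
  set Y : Multiset ((i : Fin r) → ZMod (n i)) := I.val.map b with hYdef
  -- b is injective
  have hbinj : ∀ i k : Fin r, b i = b k → i = k := by
    intro i k h
    by_contra hik
    have h1 := congrFun h i
    rw [hb, hb, if_pos rfl, if_neg hik] at h1
    have h2 : (1 : ZMod (n i)) = 0 := by linear_combination h1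
    exact one_ne_zero h2
  have hXunit : ∀ x ∈ X, IsUnit x := by
    intro x hx
    rw [hX] at hx
    simp at hx
    obtain ⟨u, hu, rfl⟩ := hx
    exact u.isUnit
  have hYmem : ∀ x ∈ Y, ∃ i ∈ I, x = b i := by
    intro x hx
    rw [hYdef, Multiset.mem_map] at hx
    obtain ⟨i, hi, rfl⟩ := hx
    exact ⟨i, hi, rfl⟩
  intro B' hlt heq
  by_cases hY : Y ≤ B'
  · -- Case 1 : all b_i's are in B'
    set A' : Multiset ((i : Fin r) → ZMod (n i)) := B' - Y with hA'
    have hBA : A' + Y = B' := tsub_add_cancel_of_le hY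
    have hA'leX : A' ≤ X := by
      have h1 : B' ≤ X + Y := hlt.le
      rw [← hBA] at h1
      exact le_of_add_le_add_right h1
    have hA'ltX : A' < X := by
      refine lt_of_le_of_ne hA'leX fun hEq => ?_
      rw [← hEq, hBA] at hlt
      exact lt_irrefl _ hlt
    refine hA A' hA'ltX ?_
    have hprod : A'.prod * Y.prod = X.prod * Y.prod := by
      rw [← Multiset.prod_add, ← Multiset.prod_add, hBA]
      exact heq
    have hYprodj : ∀ j : Fin r, Y.prod j = if j ∈ I then (2 : ZMod (n j)) else 1 := by
      intro j
      have h1 : Y.prod j = (Y.map (Pi.evalMonoidHom (fun i => ZMod (n i)) j)).prod :=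
        (Multiset.prod_hom Y (Pi.evalMonoidHom (fun i => ZMod (n i)) j)).symm
      rw [h1, hYdef, Multiset.map_map]
      have h2 : (I.val.map fun i => b i j).prod
          = ∏ i ∈ I, (if j = i then (2 : ZMod (n j)) else 1) := by
        rw [Finset.prod]
        exact congrArg Multiset.prod (Multiset.map_congr rfl fun i _ => hb i j)
      simpa [Finset.prod_ite_eq] using h2
    have hA'unitj : ∀ j, IsUnit (A'.prod j) := by
      intro j
      have : IsUnit A'.prod := multiset_prod_isUnit' fun x hx =>
        hXunit x (Multiset.mem_of_le hA'leX hx)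
      exact this.map (Pi.evalRingHom (fun i => ZMod (n i)) j)
    have hXunitj : ∀ j, IsUnit (X.prod j) := by
      intro j
      have : IsUnit X.prod := multiset_prod_isUnit' hXunit
      exact this.map (Pi.evalRingHom (fun i => ZMod (n i)) j)
    funext j
    have hj := congrFun hprod j
    simp only [Pi.mul_apply] at hj
    rw [hYprodj j] at hj
    by_cases hjI : j ∈ I
    · rw [if_pos hjI] at hj
      have hjc : 2 ∣ n j ∧ ¬ (4 ∣ n j) := by
        rw [hI, Finset.mem_filter] at hjI
        exact hjI.2
      exact cancel_two' hjc.1 hjc.2 (hA'unitj j) (hXunitj j) hj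
    · rw [if_neg hjI, mul_one, mul_one] at hj
      exact hj
  · -- Case 2 : some b_i is missing from B'
    have hYnodup : Y.Nodup := by
      rw [hYdef]
      exact (I.nodup).map_on fun i _ k _ h => hbinj i k h
    rw [Multiset.le_iff_count] at hY
    push_neg at hY
    obtain ⟨x, hcount⟩ := hY
    have hxY : x ∈ Y := by
      by_contra hxy
      rw [Multiset.count_eq_zero_of_notMem hxy] at hcount
      omega
    obtain ⟨i, hiI, rfl⟩ := hYmem x hxY
    have hcY : Multiset.count (b i) Y = 1 := (Multiset.count_eq_one_of_mem hYnodup hxY)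
    have hnotB' : b i ∉ B' := by
      rw [← Multiset.count_pos] at *
      omega
    have hic : 2 ∣ n i ∧ ¬ (4 ∣ n i) := by
      rw [hI, Finset.mem_filter] at hiI
      exact hiI.2
    set ψ : ((j : Fin r) → ZMod (n j)) →+* ZMod 2 :=
      (ZMod.castHom hic.1 (ZMod 2)).comp (Pi.evalRingHom (fun j => ZMod (n j)) i) with hψ
    have hψbi : ψ (b i) = 0 := by
      have h1 : (b i) i = (2 : ZMod (n i)) := by rw [hb, if_pos rfl]
      have : ψ (b i) = ZMod.castHom hic.1 (ZMod 2) ((b i) i) := rfl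
      rw [this, h1]
      have : (ZMod.castHom hic.1 (ZMod 2)) (2 : ZMod (n i)) = (2 : ZMod 2) := map_ofNat _ 2
      rw [this]
      decide
    have hψB' : ψ B'.prod = 1 := by
      rw [map_multiset_prod]
      refine Multiset.prod_eq_one ?_
      intro a ha
      rw [Multiset.mem_map] at ha
      obtain ⟨x, hx, rfl⟩ := ha
      have hxB : x ∈ X + Y := Multiset.mem_of_le hlt.le hx
      rw [Multiset.mem_add] at hxB
      rcases hxB with hxX | hxY
      · exact zmod2_unit_eq_one _ ((hXunit x hxX).map ψ).ne_zero
      · obtain ⟨k, _, rfl⟩ := hYmem x hxY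
        have hki : k ≠ i := fun h => hnotB' (h ▸ hx)
        have h1 : (b k) i = (1 : ZMod (n i)) := by rw [hb, if_neg (Ne.symm hki)]
        have : ψ (b k) = ZMod.castHom hic.1 (ZMod 2) ((b k) i) := rfl
        rw [this, h1, map_one]
    have hψB : ψ (X + Y).prod = 0 := by
      rw [map_multiset_prod]
      refine Multiset.prod_eq_zero ?_
      rw [Multiset.mem_map]
      exact ⟨b i, Multiset.mem_add.2 (Or.inr hxY), hψbi⟩
    rw [heq, hψB] at hψB'
    exact one_ne_zero hψB'.symm
end

section
/- Let r ≥ 1 and n_1, …, n_r > 1 be integers and let R = ℤ_{n_1} ⊕ ⋯ ⊕ ℤ_{n_r} with multiplicative monoid S_R. Let a, b ∈ R and suppose that for every i ∈ [1,r] and every prime q dividing n_i with pot_q(gcd(b_i, n_i)) < pot_q(n_i), q does not divide a_i, where x_i denotes the canonical integer representative in [0, n_i − 1] of the i-th coordinate of x ∈ R. Then there exists a unit u ∈ Rˣ such that b·u = b·a. -/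
lemma key_lemma (n : ℕ) (hn : 1 < n) (a b : ZMod n)
    (h : ∀ q : ℕ, q.Prime → q ∣ n →
      (Nat.gcd b.val n).factorization q < n.factorization q → ¬ q ∣ a.val) :
    ∃ u : (ZMod n)ˣ, b * (u : ZMod n) = b * a := by
  haveI : NeZero n := ⟨by omega⟩
  have hn0 : n ≠ 0 := by omega
  set g := Nat.gcd b.val n with hg
  have hgdvd : g ∣ n := Nat.gcd_dvd_right _ _
  have hg0 : g ≠ 0 := fun h0 => hn0 (Nat.eq_zero_of_gcd_eq_zero_right h0)
  set m := n / g with hm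
  have hmdvd : m ∣ n := Nat.div_dvd_of_dvd hgdvd
  have hnm : n = g * m := (Nat.mul_div_cancel' hgdvd).symm
  have hm0 : m ≠ 0 := by intro h0; rw [h0, mul_zero] at hnm; exact hn0 hnm
  have hcop : Nat.Coprime a.val m := by
    rw [Nat.Coprime]
    by_contra hc
    obtain ⟨q, hq, hqd⟩ := Nat.exists_prime_and_dvd hc
    have hqa : q ∣ a.val := hqd.trans (Nat.gcd_dvd_left _ _)
    have hqm : q ∣ m := hqd.trans (Nat.gcd_dvd_right _ _)
    refine h q hq (hqm.trans hmdvd) ?_ hqa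
    have heq : n.factorization q = g.factorization q + m.factorization q := by
      rw [hnm, Nat.factorization_mul hg0 hm0]; rfl
    have hpos : 0 < m.factorization q := Nat.Prime.factorization_pos_of_dvd hq hm0 hqm
    omega
  obtain ⟨u, hu⟩ := ZMod.unitsMap_surjective hmdvd (ZMod.unitOfCoprime a.val hcop)
  have hcast : ((u : ZMod n).val : ZMod m) = (a.val : ZMod m) := by
    have h2 := congrArg Units.val hu
    simp only [ZMod.unitsMap_def, Units.coe_map, ZMod.coe_unitOfCoprime,
      MonoidHom.coe_coe] at h2
    haveI : NeZero m := ⟨hm0⟩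
    rw [← h2, ZMod.castHom_apply, ZMod.natCast_val]
  have hmdvd2 : (m : ℤ) ∣ (((u : ZMod n).val : ℤ) - (a.val : ℤ)) :=
    dvd_sub_comm.mp ((ZMod.natCast_eq_natCast_iff _ _ _).mp hcast).dvd
  refine ⟨u, ?_⟩
  have hkey : (((b.val : ℤ) * (((u : ZMod n).val : ℤ) - (a.val : ℤ)) : ℤ) : ZMod n) = 0 := by
    rw [ZMod.intCast_zmod_eq_zero_iff_dvd]
    have hn' : (n : ℤ) = (g : ℤ) * m := by exact_mod_cast hnm
    rw [hn']
    exact mul_dvd_mul (Int.natCast_dvd_natCast.mpr (Nat.gcd_dvd_left _ _)) hmdvd2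
  push_cast [ZMod.natCast_val, ZMod.cast_id] at hkey
  linear_combination hkey

theorem exists_unit_absorbing
    (r : ℕ) (hr : 1 ≤ r) (n : Fin r → ℕ) (hn : ∀ i, 1 < n i)
    (a b : (i : Fin r) → ZMod (n i))
    (h : ∀ i : Fin r, ∀ q : ℕ, q.Prime → q ∣ n i →
      (Nat.gcd ((b i).val) (n i)).factorization q < (n i).factorization q →
      ¬ q ∣ (a i).val) :
    ∃ u : ((i : Fin r) → ZMod (n i))ˣ,
      b * (u : (i : Fin r) → ZMod (n i)) = b * a := by
  choose u hu using fun i => key_lemma (n i) (hn i) (a i) (b i) (h i)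
  refine ⟨⟨fun i => (u i : ZMod (n i)), fun i => ((u i)⁻¹ : (ZMod (n i))ˣ), ?_, ?_⟩, ?_⟩
  · funext i; exact Units.mul_inv _
  · funext i; exact Units.inv_mul _
  · funext i; exact hu i
end

section
/- Let r ≥ 1 and n_1, …, n_r > 1 be integers and let R = ℤ_{n_1} ⊕ ⋯ ⊕ ℤ_{n_r} with multiplicative monoid S_R. Let a, b ∈ R with b dividing a in S_R but a not dividing b, and suppose St(a) = St(b), where for c ∈ R the stabilizer St(c) is the set of units u ∈ Rˣ with u·c = c. Then there exists an index w ∈ [1,r] such that pot_2(gcd(b_w, n_w)) < pot_2(gcd(a_w, n_w)) = pot_2(n_w), where x_i denotes the canonical integer representative in [0, n_i − 1] of the i-th coordinate of x ∈ R. -/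
section Aux

variable {n : ℕ}

/-- Divisibility in `ZMod n` is controlled by the gcd with `n`. -/
lemma zmod_dvd_gcd_cast [NeZero n] (x : ZMod n) :
    x ∣ ((Nat.gcd x.val n : ℕ) : ZMod n) := by
  refine ⟨((Nat.gcdA x.val n : ℤ) : ZMod n), ?_⟩
  have h := Nat.gcd_eq_gcd_ab x.val n
  have : ((Nat.gcd x.val n : ℤ) : ZMod n)
      = ((x.val * Nat.gcdA x.val n + n * Nat.gcdB x.val n : ℤ) : ZMod n) := by
    rw [← h]
  push_cast at this ⊢
  rw [this]
  simp [ZMod.natCast_val, ZMod.cast_id, ZMod.natCast_self]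

lemma zmod_dvd_iff [NeZero n] (x y : ZMod n) :
    x ∣ y ↔ (Nat.gcd x.val n) ∣ y.val := by
  constructor
  · rintro ⟨z, rfl⟩
    rw [ZMod.val_mul]
    refine (Nat.dvd_mod_iff (Nat.gcd_dvd_right _ _)).mpr ?_
    exact Dvd.dvd.mul_right (Nat.gcd_dvd_left _ _) _
  · intro h
    have h1 : y = ((y.val : ℕ) : ZMod n) := by simp [ZMod.natCast_val, ZMod.cast_id]
    obtain ⟨k, hk⟩ := h
    calc x ∣ ((Nat.gcd x.val n : ℕ) : ZMod n) := zmod_dvd_gcd_cast x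
    _ ∣ y := by rw [h1, hk]; push_cast; exact dvd_mul_right _ _

lemma zmod_mul_eq_zero_iff [NeZero n] (C x : ZMod n) :
    x * C = 0 ↔ (n / Nat.gcd C.val n) ∣ x.val := by
  have hn : 0 < n := Nat.pos_of_ne_zero (NeZero.ne n)
  have hd : 0 < Nat.gcd C.val n := Nat.gcd_pos_of_pos_right _ hn
  set d := Nat.gcd C.val n with hdd
  have h1 : x * C = 0 ↔ n ∣ x.val * C.val := by
    rw [← ZMod.val_eq_zero, ZMod.val_mul]
    exact Nat.dvd_iff_mod_eq_zero.symm
  rw [h1]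
  have hC : d * (C.val / d) = C.val := Nat.mul_div_cancel' (Nat.gcd_dvd_left _ _)
  have hN : (n / d) * d = n := Nat.div_mul_cancel (Nat.gcd_dvd_right _ _)
  have hcop : Nat.Coprime (n / d) (C.val / d) :=
    (Nat.coprime_div_gcd_div_gcd hd).symm
  have hsplit : (x.val * (C.val / d)) * d = x.val * C.val := by
    rw [mul_assoc, mul_comm (C.val / d) d, hC]
  constructor
  · intro h
    have h3 : (n / d) ∣ x.val * (C.val / d) := by
      refine (Nat.mul_dvd_mul_iff_right hd).mp ?_
      rw [hsplit, hN]; exact h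
    exact hcop.dvd_of_dvd_mul_right h3
  · intro h
    calc n = (n / d) * d := hN.symm
    _ ∣ (x.val * (C.val / d)) * d :=
        Nat.mul_dvd_mul (h.trans (dvd_mul_right _ _)) dvd_rfl
    _ = x.val * C.val := hsplit

lemma zmod_unit_stab_iff [NeZero n] (C : ZMod n) (u : (ZMod n)ˣ) :
    (u : ZMod n) * C = C ↔ (n / Nat.gcd C.val n) ∣ ((u : ZMod n) - 1).val := by
  rw [← zmod_mul_eq_zero_iff, sub_mul, one_mul, sub_eq_zero]

lemma zmod_mem_ker_iff {m : ℕ} [NeZero n] [NeZero m] (h : m ∣ n) (u : (ZMod n)ˣ) :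
    u ∈ (ZMod.unitsMap h).ker ↔ m ∣ ((u : ZMod n) - 1).val := by
  simp only [ZMod.unitsMap_def, MonoidHom.mem_ker, Units.ext_iff, Units.coe_map,
    MonoidHom.coe_coe, Units.val_one]
  rw [show (1 : ZMod m) = (ZMod.castHom h (ZMod m)) 1 from (map_one _).symm]
  rw [← sub_eq_zero, ← map_sub]
  rw [ZMod.castHom_apply, ZMod.cast_eq_val, ZMod.natCast_eq_zero_iff]

lemma totient_classification {m M : ℕ} (hm : 0 < m) (hM : 0 < M) (hdvd : m ∣ M)
    (hne : m ≠ M) (heq : Nat.totient m = Nat.totient M) : ¬ 2 ∣ m ∧ 2 ∣ M := by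
  have hnd : ¬ M ∣ m := fun h => hne (Nat.dvd_antisymm hdvd h)
  obtain ⟨p, hp⟩ : ∃ p, m.factorization p < M.factorization p := by
    by_contra h
    push_neg at h
    exact hnd ((Nat.factorization_le_iff_dvd hM.ne' hm.ne').mp fun p => h p)
  have hpp : p.Prime := by
    have hne0 : M.factorization p ≠ 0 := by omega
    exact Nat.prime_of_mem_primeFactors
      (by rw [← Nat.support_factorization]; exact Finsupp.mem_support_iff.mpr hne0)
  have hpm : p * m ∣ M := by
    have h0 : (p * m) ≠ 0 := Nat.mul_ne_zero hpp.pos.ne' hm.ne'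
    rw [← Nat.factorization_le_iff_dvd h0 hM.ne',
      Nat.factorization_mul hpp.pos.ne' hm.ne']
    intro q
    have hq' := (Nat.factorization_le_iff_dvd hm.ne' hM.ne').mpr hdvd q
    simp only [Finsupp.coe_add, Pi.add_apply, Nat.Prime.factorization hpp,
      Finsupp.single_apply]
    rcases eq_or_ne p q with rfl | hq
    · simp only [if_pos rfl, eq_self_iff_true, if_true]
      omega
    · simp only [if_neg hq]
      omega
  have htpos : 0 < Nat.totient m := Nat.totient_pos.mpr hm
  have hle : Nat.totient (p * m) ≤ Nat.totient m := by
    rw [heq]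
    exact Nat.le_of_dvd (heq ▸ htpos) (Nat.totient_dvd_of_dvd hpm)
  by_cases hpdvd : p ∣ m
  · rw [Nat.totient_mul_of_prime_of_dvd hpp hpdvd] at hle
    have h2 : 2 * m.totient ≤ p * m.totient := Nat.mul_le_mul_right _ hpp.two_le
    omega
  · rw [Nat.totient_mul_of_prime_of_not_dvd hpp hpdvd] at hle
    have h2 : p = 2 := by
      by_contra hp2
      have h3 : 3 ≤ p := by have := hpp.two_le; omega
      have h4 : 2 * m.totient ≤ (p - 1) * m.totient :=
        Nat.mul_le_mul_right _ (by omega)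
      omega
    subst h2
    exact ⟨hpdvd, Nat.dvd_of_factorization_pos (by omega)⟩

/-- Key single-coordinate lemma. -/
lemma key_coord {n : ℕ} [NeZero n] (A B : ZMod n) (hBA : B ∣ A) (hAB : ¬ A ∣ B)
    (hst : ∀ u : (ZMod n)ˣ, (u : ZMod n) * A = A ↔ (u : ZMod n) * B = B) :
    (Nat.gcd B.val n).factorization 2 < (Nat.gcd A.val n).factorization 2
      ∧ (Nat.gcd A.val n).factorization 2 = n.factorization 2 := by
  have hn : 0 < n := Nat.pos_of_ne_zero (NeZero.ne n)
  set da := Nat.gcd A.val n with hda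
  set db := Nat.gcd B.val n with hdb
  have hdan : da ∣ n := Nat.gcd_dvd_right _ _
  have hdbn : db ∣ n := Nat.gcd_dvd_right _ _
  have hda0 : 0 < da := Nat.gcd_pos_of_pos_right _ hn
  have hdb0 : 0 < db := Nat.gcd_pos_of_pos_right _ hn
  -- db ∣ da
  have hdbda : db ∣ da := Nat.dvd_gcd ((zmod_dvd_iff B A).mp hBA) hdbn
  have hne : da ≠ db := by
    intro h
    apply hAB
    rw [zmod_dvd_iff, ← hda, h, hdb]
    exact Nat.gcd_dvd_left _ _
  set ma := n / da with hma
  set mb := n / db with hmb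
  have hman : ma ∣ n := Nat.div_dvd_of_dvd hdan
  have hmbn : mb ∣ n := Nat.div_dvd_of_dvd hdbn
  have hma0 : 0 < ma := Nat.div_pos (Nat.le_of_dvd hn hdan) hda0
  have hmb0 : 0 < mb := Nat.div_pos (Nat.le_of_dvd hn hdbn) hdb0
  have hmaN : ma * da = n := Nat.div_mul_cancel hdan
  have hmbN : mb * db = n := Nat.div_mul_cancel hdbn
  have hmamb : ma ∣ mb := by
    obtain ⟨k, hk⟩ := hdbda
    refine ⟨k, Nat.eq_of_mul_eq_mul_right hdb0 ?_⟩
    rw [hmbN, mul_assoc, mul_comm k db, ← hk, hmaN]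
  have hmane : ma ≠ mb := by
    intro h
    apply hne
    have heq2 : ma * da = ma * db := by rw [hmaN, h, hmbN]
    exact Nat.eq_of_mul_eq_mul_left hma0 heq2
  haveI : NeZero ma := ⟨hma0.ne'⟩
  haveI : NeZero mb := ⟨hmb0.ne'⟩
  -- kernels are equal
  have hker : (ZMod.unitsMap hman).ker = (ZMod.unitsMap hmbn).ker := by
    ext u
    rw [zmod_mem_ker_iff hman u, zmod_mem_ker_iff hmbn u, hma, hda, hmb, hdb,
      ← zmod_unit_stab_iff A u, ← zmod_unit_stab_iff B u]
    exact hst u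
  -- totients are equal
  have hcard : ∀ (m : ℕ) (_ : NeZero m) (h : m ∣ n),
      Nat.totient n = Nat.totient m * Nat.card (ZMod.unitsMap h).ker := by
    intro m hm h
    have hsurj := ZMod.unitsMap_surjective h
    have h1 : Nat.card ((ZMod n)ˣ ⧸ (ZMod.unitsMap h).ker) = Nat.card (ZMod m)ˣ :=
      Nat.card_congr (QuotientGroup.quotientKerEquivOfSurjective _ hsurj).toEquiv
    have h2 := Subgroup.card_eq_card_quotient_mul_card_subgroup (ZMod.unitsMap h).ker
    rw [h1] at h2
    rw [Nat.card_eq_fintype_card, ZMod.card_units_eq_totient] at h2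
    rw [Nat.card_eq_fintype_card, ZMod.card_units_eq_totient] at h2
    exact h2
  have hta := hcard ma ‹_› hman
  have htb := hcard mb ‹_› hmbn
  rw [hker] at hta
  have hkpos : 0 < Nat.card (ZMod.unitsMap hmbn).ker := Nat.card_pos
  have htot : Nat.totient ma = Nat.totient mb :=
    Nat.eq_of_mul_eq_mul_right hkpos (hta ▸ htb ▸ rfl)
  obtain ⟨hodd, heven⟩ := totient_classification hma0 hmb0 hmamb hmane htot
  -- conclude with factorizations
  have hfa : n.factorization 2 = ma.factorization 2 + da.factorization 2 := by
    rw [← hmaN, Nat.factorization_mul hma0.ne' hda0.ne']; rfl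
  have hfb : n.factorization 2 = mb.factorization 2 + db.factorization 2 := by
    rw [← hmbN, Nat.factorization_mul hmb0.ne' hdb0.ne']; rfl
  have hza : ma.factorization 2 = 0 := Nat.factorization_eq_zero_of_not_dvd hodd
  have hzb : 0 < mb.factorization 2 :=
    Nat.Prime.factorization_pos_of_dvd Nat.prime_two hmb0.ne' heven
  omega

end Aux

/-- Extend a unit at coordinate `w` to a unit of the product. -/
def liftUnit {r : ℕ} {n : Fin r → ℕ} (w : Fin r) (u : (ZMod (n w))ˣ) :
    ((i : Fin r) → ZMod (n i))ˣ where
  val := Function.update (1 : (i : Fin r) → ZMod (n i)) w (u : ZMod (n w))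
  inv := Function.update (1 : (i : Fin r) → ZMod (n i)) w ((u⁻¹ : (ZMod (n w))ˣ) : ZMod (n w))
  val_inv := by
    funext i
    rcases eq_or_ne i w with rfl | h
    · simp
    · simp [Function.update_of_ne h]
  inv_val := by
    funext i
    rcases eq_or_ne i w with rfl | h
    · simp
    · simp [Function.update_of_ne h]

lemma liftUnit_mul_eq_iff {r : ℕ} {n : Fin r → ℕ} (w : Fin r) (u : (ZMod (n w))ˣ)
    (a : (i : Fin r) → ZMod (n i)) :
    ((liftUnit w u : ((i : Fin r) → ZMod (n i))ˣ) : (i : Fin r) → ZMod (n i)) * a = a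
      ↔ (u : ZMod (n w)) * a w = a w := by
  constructor
  · intro h
    have := congrFun h w
    simpa [liftUnit] using this
  · intro h
    funext i
    rcases eq_or_ne i w with rfl | hiw
    · simpa [liftUnit] using h
    · simp [liftUnit, Function.update_of_ne hiw]

theorem exists_coordinate_of_stabilizer_eq
    (r : ℕ) (hr : 1 ≤ r) (n : Fin r → ℕ) (hn : ∀ i, 1 < n i)
    (a b : (i : Fin r) → ZMod (n i)) (hba : b ∣ a) (hab : ¬ a ∣ b)
    (hst : {u : ((i : Fin r) → ZMod (n i))ˣ | (u : (i : Fin r) → ZMod (n i)) * a = a}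
         = {u : ((i : Fin r) → ZMod (n i))ˣ | (u : (i : Fin r) → ZMod (n i)) * b = b}) :
    ∃ w : Fin r,
      (Nat.gcd ((b w).val) (n w)).factorization 2
          < (Nat.gcd ((a w).val) (n w)).factorization 2
        ∧ (Nat.gcd ((a w).val) (n w)).factorization 2 = (n w).factorization 2 := by
  obtain ⟨w, hw⟩ : ∃ w, ¬ a w ∣ b w := by
    by_contra h
    push_neg at h
    exact hab ⟨fun i => (h i).choose, funext fun i => (h i).choose_spec⟩
  haveI : NeZero (n w) := ⟨by have := hn w; omega⟩
  have hbaw : b w ∣ a w := by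
    obtain ⟨c, hc⟩ := hba
    exact ⟨c w, congrFun hc w⟩
  have hstw : ∀ u : (ZMod (n w))ˣ, (u : ZMod (n w)) * a w = a w ↔ (u : ZMod (n w)) * b w = b w := by
    intro u
    have := Set.ext_iff.mp hst (liftUnit w u)
    simp only [Set.mem_setOf_eq] at this
    rw [liftUnit_mul_eq_iff, liftUnit_mul_eq_iff] at this
    exact this
  exact ⟨w, key_coord (a w) (b w) hbaw hw hstw⟩
end

section
/- Let r_1, r_2, r_3 be nonnegative integers, not all zero, and let R = ℤ_8^{r_1} ⊕ ℤ_4^{r_2} ⊕ ℤ_2^{r_3} with multiplicative monoid S_R. For each coordinate position j of R, let a_j ∈ R be the element whose j-th coordinate is 2 and all other coordinates are 1. Then the multiset consisting of 3 copies of a_j for each ℤ_8-coordinate j, 2 copies of a_j for each ℤ_4-coordinate j, and 1 copy of a_j for each ℤ_2-coordinate j, is irreducible in S_R, i.e., no proper sub-multiset of it has the same product as the whole multiset. -/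
/-- The ring `ℤ₈^{r₁} ⊕ ℤ₄^{r₂} ⊕ ℤ₂^{r₃}`. -/
abbrev RingR (r₁ r₂ r₃ : ℕ) : Type :=
  (Fin r₁ → ZMod 8) × (Fin r₂ → ZMod 4) × (Fin r₃ → ZMod 2)

/-- The element of `RingR` with `2` at the `j`-th `ℤ₈`-coordinate and `1` elsewhere. -/
def e8 (r₁ r₂ r₃ : ℕ) (j : Fin r₁) : RingR r₁ r₂ r₃ :=
  (fun k => if k = j then 2 else 1, 1, 1)

/-- The element of `RingR` with `2` at the `j`-th `ℤ₄`-coordinate and `1` elsewhere. -/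
def e4 (r₁ r₂ r₃ : ℕ) (j : Fin r₂) : RingR r₁ r₂ r₃ :=
  (1, fun k => if k = j then 2 else 1, 1)

/-- The element of `RingR` with `2` at the `j`-th `ℤ₂`-coordinate and `1` elsewhere. -/
def e2 (r₁ r₂ r₃ : ℕ) (j : Fin r₃) : RingR r₁ r₂ r₃ :=
  (1, 1, fun k => if k = j then 2 else 1)

/-- If all elements of a multiset map to `1` under `f` except possibly `x`, then the
product of the mapped multiset is `f x` raised to the multiplicity of `x`. -/
lemma prod_map_pow_count {α M : Type*} [DecidableEq α] [CommMonoid M] (f : α → M)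
    (S : Multiset α) (x : α) (h : ∀ y ∈ S, y ≠ x → f y = 1) :
    (S.map f).prod = f x ^ S.count x := by
  induction S using Multiset.induction_on with
  | empty => simp
  | cons a s ih =>
    rw [Multiset.map_cons, Multiset.prod_cons, Multiset.count_cons,
        ih (fun y hy hyx => h y (Multiset.mem_cons_of_mem hy) hyx)]
    by_cases ha : x = a
    · subst ha; rw [if_pos rfl, pow_succ, mul_comm]
    · rw [if_neg ha, h a (Multiset.mem_cons_self a s) (fun he => ha he.symm), one_mul,
        add_zero]

/-- A criterion for two multiset products to differ, detected by a monoid hom that kills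
all elements except one. -/
lemma ne_prod_of_pow_ne {α M : Type*} [DecidableEq α] [CommMonoid α] [CommMonoid M]
    (T T' : Multiset α) (hle : T' ≤ T) (f : α →* M) (x : α)
    (h1 : ∀ y ∈ T, y ≠ x → f y = 1)
    (hne : f x ^ T'.count x ≠ f x ^ T.count x) : T'.prod ≠ T.prod := by
  intro hp
  apply hne
  rw [← prod_map_pow_count (⇑f) T' x (fun y hy => h1 y (Multiset.mem_of_le hle hy)),
      ← prod_map_pow_count (⇑f) T x h1, ← map_multiset_prod, ← map_multiset_prod, hp]

theorem irreducible_witness_in_Z8Z4Z2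
    (r₁ r₂ r₃ : ℕ) (h : 0 < r₁ + r₂ + r₃)
    (T : Multiset (RingR r₁ r₂ r₃))
    (hT : T = 3 • (Finset.univ.val.map (e8 r₁ r₂ r₃))
            + 2 • (Finset.univ.val.map (e4 r₁ r₂ r₃))
            + (Finset.univ.val.map (e2 r₁ r₂ r₃))) :
    ∀ T' < T, T'.prod ≠ T.prod := by
  classical
  -- injectivity of the three families
  have he8 : Function.Injective (e8 r₁ r₂ r₃) := by
    intro a b hab
    by_contra hne
    have := congrArg (fun z : RingR r₁ r₂ r₃ => z.1 a) hab
    simp only [e8, if_pos rfl] at this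
    rw [if_neg hne] at this
    exact absurd this (by decide)
  have he4 : Function.Injective (e4 r₁ r₂ r₃) := by
    intro a b hab
    by_contra hne
    have := congrArg (fun z : RingR r₁ r₂ r₃ => z.2.1 a) hab
    simp only [e4, if_pos rfl] at this
    rw [if_neg hne] at this
    exact absurd this (by decide)
  have he2 : Function.Injective (e2 r₁ r₂ r₃) := by
    intro a b hab
    by_contra hne
    have := congrArg (fun z : RingR r₁ r₂ r₃ => z.2.2 a) hab
    simp only [e2, if_pos rfl] at this
    rw [if_neg hne] at this
    exact absurd this (by decide)
  -- cross non-equalities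
  have h84 : ∀ (j : Fin r₁) (k : Fin r₂), e8 r₁ r₂ r₃ j ≠ e4 r₁ r₂ r₃ k := by
    intro j k hjk
    have := congrArg (fun z : RingR r₁ r₂ r₃ => z.1 j) hjk
    simp only [e8, e4, if_pos rfl, Pi.one_apply] at this
    exact absurd this (by decide)
  have h82 : ∀ (j : Fin r₁) (k : Fin r₃), e8 r₁ r₂ r₃ j ≠ e2 r₁ r₂ r₃ k := by
    intro j k hjk
    have := congrArg (fun z : RingR r₁ r₂ r₃ => z.1 j) hjk
    simp only [e8, e2, if_pos rfl, Pi.one_apply] at this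
    exact absurd this (by decide)
  have h42 : ∀ (j : Fin r₂) (k : Fin r₃), e4 r₁ r₂ r₃ j ≠ e2 r₁ r₂ r₃ k := by
    intro j k hjk
    have := congrArg (fun z : RingR r₁ r₂ r₃ => z.2.1 j) hjk
    simp only [e4, e2, if_pos rfl, Pi.one_apply] at this
    exact absurd this (by decide)
  -- membership characterization
  have hmem : ∀ y ∈ T, (∃ j, y = e8 r₁ r₂ r₃ j) ∨ (∃ j, y = e4 r₁ r₂ r₃ j) ∨
      (∃ j, y = e2 r₁ r₂ r₃ j) := by
    intro y hy
    rw [hT] at hy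
    simp only [Multiset.mem_add, Multiset.mem_nsmul, Multiset.mem_map] at hy
    rcases hy with ((⟨-, j, _, hj⟩ | ⟨-, j, _, hj⟩) | ⟨j, _, hj⟩)
    · exact Or.inl ⟨j, hj.symm⟩
    · exact Or.inr (Or.inl ⟨j, hj.symm⟩)
    · exact Or.inr (Or.inr ⟨j, hj.symm⟩)
  intro T' hT'
  obtain ⟨hle, hnle⟩ := lt_iff_le_not_ge.mp hT'
  rw [Multiset.le_iff_count] at hnle
  push_neg at hnle
  obtain ⟨x, hx⟩ := hnle
  have hxT : x ∈ T := Multiset.count_pos.mp (lt_of_le_of_lt (Nat.zero_le _) hx)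
  rcases hmem x hxT with ⟨j, rfl⟩ | ⟨j, rfl⟩ | ⟨j, rfl⟩
  · -- x = e8 j
    have hcT : T.count (e8 r₁ r₂ r₃ j) = 3 := by
      rw [hT, Multiset.count_add, Multiset.count_add, Multiset.count_nsmul,
          Multiset.count_nsmul, Multiset.count_map_eq_count' _ _ he8 j,
          Multiset.count_eq_one_of_mem Finset.univ.nodup (Finset.mem_univ j),
          Multiset.count_eq_zero.mpr, Multiset.count_eq_zero.mpr]
      · intro hmem'
        obtain ⟨k, _, hk⟩ := Multiset.mem_map.mp hmem'
        exact h82 j k hk.symm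
      · intro hmem'
        obtain ⟨k, _, hk⟩ := Multiset.mem_map.mp hmem'
        exact h84 j k hk.symm
    refine ne_prod_of_pow_ne T T' hle
      ((Pi.evalMonoidHom (fun _ : Fin r₁ => ZMod 8) j).comp (MonoidHom.fst _ _))
      (e8 r₁ r₂ r₃ j) ?_ ?_
    · intro y hy hyx
      rcases hmem y hy with ⟨k, rfl⟩ | ⟨k, rfl⟩ | ⟨k, rfl⟩
      · have hkj : k ≠ j := fun hkj => hyx (by rw [hkj])
        simp only [e8, MonoidHom.coe_comp, Function.comp_apply, MonoidHom.coe_fst,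
          MonoidHom.coe_snd, Pi.evalMonoidHom_apply]
        rw [if_neg (fun hjk => hkj hjk.symm)]
      · simp [e4]
      · simp [e2]
    · have hfx : ((Pi.evalMonoidHom (fun _ : Fin r₁ => ZMod 8) j).comp
          (MonoidHom.fst _ _)) (e8 r₁ r₂ r₃ j) = 2 := by simp [e8]
      rw [hfx, hcT]
      rw [hcT] at hx
      set k := T'.count (e8 r₁ r₂ r₃ j) with hk
      have hk2 : k ≤ 2 := by omega
      interval_cases k <;> decide
  · -- x = e4 j
    have hcT : T.count (e4 r₁ r₂ r₃ j) = 2 := by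
      rw [hT, Multiset.count_add, Multiset.count_add, Multiset.count_nsmul,
          Multiset.count_nsmul, Multiset.count_map_eq_count' _ _ he4 j,
          Multiset.count_eq_one_of_mem Finset.univ.nodup (Finset.mem_univ j),
          Multiset.count_eq_zero.mpr, Multiset.count_eq_zero.mpr]
      · intro hmem'
        obtain ⟨k, _, hk⟩ := Multiset.mem_map.mp hmem'
        exact h42 j k hk.symm
      · intro hmem'
        obtain ⟨k, _, hk⟩ := Multiset.mem_map.mp hmem'
        exact h84 k j hk
    refine ne_prod_of_pow_ne T T' hle
      ((Pi.evalMonoidHom (fun _ : Fin r₂ => ZMod 4) j).comp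
        ((MonoidHom.fst _ _).comp (MonoidHom.snd _ _)))
      (e4 r₁ r₂ r₃ j) ?_ ?_
    · intro y hy hyx
      rcases hmem y hy with ⟨k, rfl⟩ | ⟨k, rfl⟩ | ⟨k, rfl⟩
      · simp [e8]
      · have hkj : k ≠ j := fun hkj => hyx (by rw [hkj])
        simp only [e4, MonoidHom.coe_comp, Function.comp_apply, MonoidHom.coe_fst,
          MonoidHom.coe_snd, Pi.evalMonoidHom_apply]
        rw [if_neg (fun hjk => hkj hjk.symm)]
      · simp [e2]
    · have hfx : ((Pi.evalMonoidHom (fun _ : Fin r₂ => ZMod 4) j).comp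
          ((MonoidHom.fst _ _).comp (MonoidHom.snd _ _))) (e4 r₁ r₂ r₃ j) = 2 := by simp [e4]
      rw [hfx, hcT]
      rw [hcT] at hx
      set k := T'.count (e4 r₁ r₂ r₃ j) with hk
      have hk2 : k ≤ 1 := by omega
      interval_cases k <;> decide
  · -- x = e2 j
    have hcT : T.count (e2 r₁ r₂ r₃ j) = 1 := by
      rw [hT, Multiset.count_add, Multiset.count_add, Multiset.count_nsmul,
          Multiset.count_nsmul, Multiset.count_map_eq_count' _ _ he2 j,
          Multiset.count_eq_one_of_mem Finset.univ.nodup (Finset.mem_univ j),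
          Multiset.count_eq_zero.mpr, Multiset.count_eq_zero.mpr]
      · intro hmem'
        obtain ⟨k, _, hk⟩ := Multiset.mem_map.mp hmem'
        exact h42 k j hk
      · intro hmem'
        obtain ⟨k, _, hk⟩ := Multiset.mem_map.mp hmem'
        exact h82 k j hk
    refine ne_prod_of_pow_ne T T' hle
      ((Pi.evalMonoidHom (fun _ : Fin r₃ => ZMod 2) j).comp
        ((MonoidHom.snd _ _).comp (MonoidHom.snd _ _)))
      (e2 r₁ r₂ r₃ j) ?_ ?_
    · intro y hy hyx
      rcases hmem y hy with ⟨k, rfl⟩ | ⟨k, rfl⟩ | ⟨k, rfl⟩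
      · simp [e8]
      · simp [e4]
      · have hkj : k ≠ j := fun hkj => hyx (by rw [hkj])
        simp only [e2, MonoidHom.coe_comp, Function.comp_apply, MonoidHom.coe_fst,
          MonoidHom.coe_snd, Pi.evalMonoidHom_apply]
        rw [if_neg (fun hjk => hkj hjk.symm)]
    · have hfx : ((Pi.evalMonoidHom (fun _ : Fin r₃ => ZMod 2) j).comp
          ((MonoidHom.snd _ _).comp (MonoidHom.snd _ _))) (e2 r₁ r₂ r₃ j) = 2 := by simp [e2]
      rw [hfx, hcT]
      rw [hcT] at hx
      set k := T'.count (e2 r₁ r₂ r₃ j) with hk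
      have hk2 : k = 0 := by omega
      rw [hk2]; decide
end

section
/- Let r_1, r_2, r_3 be nonnegative integers, not all zero, and let R = ℤ_8^{r_1} ⊕ ℤ_4^{r_2} ⊕ ℤ_2^{r_3} with multiplicative monoid S_R. Then D(S_R) = 3r_1 + 2r_2 + r_3 + 1. -/
namespace Dav

def v : ZMod 8 → ℕ := fun x => if x = 0 then 3 else if x = 4 then 2 else if x = 2 ∨ x = 6 then 1 else 0

def χa : ZMod 8 → ZMod 2 := fun x => if x = 3 ∨ x = 7 then 1 else 0
def χb : ZMod 8 → ZMod 2 := fun x => if x = 3 ∨ x = 5 then 1 else 0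

def allowedSet : ℕ → Finset (ZMod 8) := fun k =>
  if k = 1 then {0, 1} else if k = 2 then {0, 1, 3, 4} else Finset.univ

def Ch : ℕ → ℕ → List (ZMod 8 → ZMod 2) := fun k V =>
  if k = 3 then (if V = 0 then [χa, χb] else if V = 1 then [χa] else [])
  else if k = 2 then (if V = 0 then [χa] else []) else []

def dT : ℕ → ℕ → ℕ := fun k V =>
  if k = 3 then (if V = 0 then 2 else if V = 1 then 1 else 0)
  else if k = 2 then (if V = 0 then 1 else 0) else 0

def budgetT : ℕ → ℕ → ℕ := fun k vc =>
  if k = 3 then 3 - vc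
  else if k = 2 then (if vc = 0 then 2 else if vc ≤ 2 then 1 else 0)
  else if vc = 0 then 1 else 0

def scount (c : ZMod 8) : List (ZMod 8) → ℕ
  | [] => 0
  | a :: as => (if v a ≠ 0 ∧ v c ≠ 3 then 1 else 0) + scount (c * a) as

def ssum (c : ZMod 8) : List (ZMod 8) → ℕ
  | [] => 0
  | a :: as => (if v a ≠ 0 ∧ v c ≠ 3 then v a else 0) + ssum (c * a) as

lemma Ch_length (k V : ℕ) : (Ch k V).length = dT k V := by
  unfold Ch dT; split_ifs <;> rfl

-- decide lemmas
lemma v_mul : ∀ x y : ZMod 8, v (x * y) = min 3 (v x + v y) := by decide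
lemma v_le : ∀ x : ZMod 8, v x ≤ 3 := by decide
lemma v_eq3 : ∀ x : ZMod 8, v x = 3 ↔ x = 0 := by decide
lemma v_one : v 1 = 0 := by decide
lemma unit_sq : ∀ x : ZMod 8, v x = 0 → x * x = 1 := by decide
lemma χa_one : χa 1 = 0 := by decide
lemma χb_one : χb 1 = 0 := by decide
lemma χa_mul : ∀ x y : ZMod 8, v x = 0 → v y = 0 → χa (x * y) = χa x + χa y := by decide
lemma χb_mul : ∀ x y : ZMod 8, v x = 0 → v y = 0 → χb (x * y) = χb x + χb y := by decide
lemma allowed_one : ∀ k : ℕ, (1 : ZMod 8) ∈ allowedSet k := by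
  intro k
  unfold allowedSet; split_ifs <;> decide
lemma allowed_mul : ∀ k : ℕ, ∀ x y : ZMod 8, x ∈ allowedSet k → y ∈ allowedSet k →
    x * y ∈ allowedSet k := by
  intro k
  unfold allowedSet; split_ifs <;> decide

lemma step3 : ∀ c a : ZMod 8,
    (if v a ≠ 0 ∧ v c ≠ 3 then 1 else 0) + budgetT 3 (v (c * a)) ≤ budgetT 3 (v c) := by decide
lemma step2 : ∀ c a : ZMod 8, c ∈ allowedSet 2 → a ∈ allowedSet 2 →
    (if v a ≠ 0 ∧ v c ≠ 3 then 1 else 0) + budgetT 2 (v (c * a)) ≤ budgetT 2 (v c) := by decide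
lemma step1 : ∀ c a : ZMod 8, c ∈ allowedSet 1 → a ∈ allowedSet 1 →
    (if v a ≠ 0 ∧ v c ≠ 3 then 1 else 0) + budgetT 1 (v (c * a)) ≤ budgetT 1 (v c) := by decide

lemma base3 : ∀ c : ZMod 8, dT 3 (v c) ≤ budgetT 3 (v c) := by decide
lemma base2 : ∀ c : ZMod 8, c ∈ allowedSet 2 → dT 2 (v c) ≤ budgetT 2 (v c) := by decide
lemma base1 : ∀ c : ZMod 8, c ∈ allowedSet 1 → dT 1 (v c) ≤ budgetT 1 (v c) := by decide

lemma ab3 : ∀ p u : ZMod 8, v u = 0 →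
    (v p = 0 → χa u = 0 ∧ χb u = 0) → (v p = 1 → χa u = 0) → p * u = p := by decide
lemma ab2 : ∀ p u : ZMod 8, p ∈ allowedSet 2 → u ∈ allowedSet 2 → v u = 0 →
    (v p = 0 → χa u = 0) → p * u = p := by decide
lemma ab1 : ∀ p u : ZMod 8, u ∈ allowedSet 1 → v u = 0 → p * u = p := by decide

-- embeddings
def f4 : ZMod 4 → ZMod 8 := fun a => if a = 0 then 0 else if a = 2 then 4 else if a = 3 then 3 else 1
def f2 : ZMod 2 → ZMod 8 := fun a => if a = 0 then 0 else 1

lemma f4_mul : ∀ a b : ZMod 4, f4 (a * b) = f4 a * f4 b := by decide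
lemma f4_one : f4 1 = 1 := by decide
lemma f4_inj : ∀ a b : ZMod 4, f4 a = f4 b → a = b := by decide
lemma f4_mem : ∀ a : ZMod 4, f4 a ∈ allowedSet 2 := by decide
lemma f2_mul : ∀ a b : ZMod 2, f2 (a * b) = f2 a * f2 b := by decide
lemma f2_one : f2 1 = 1 := by decide
lemma f2_inj : ∀ a b : ZMod 2, f2 a = f2 b → a = b := by decide
lemma f2_mem : ∀ a : ZMod 2, f2 a ∈ allowedSet 1 := by decide

end Dav

namespace Dav

-- scount budget lemmas
lemma sc3 : ∀ (as : List (ZMod 8)) (c : ZMod 8),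
    scount c as + dT 3 (v (c * as.prod)) ≤ budgetT 3 (v c) := by
  intro as
  induction as with
  | nil => intro c; simpa [scount] using base3 c
  | cons a as ih =>
    intro c
    have h1 := ih (c * a)
    have h2 := step3 c a
    simp only [scount, List.prod_cons, ← mul_assoc]
    omega

lemma sc2 : ∀ (as : List (ZMod 8)) (c : ZMod 8), c ∈ allowedSet 2 →
    (∀ a ∈ as, a ∈ allowedSet 2) →
    scount c as + dT 2 (v (c * as.prod)) ≤ budgetT 2 (v c) := by
  intro as
  induction as with
  | nil => intro c hc _; simpa [scount] using base2 c hc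
  | cons a as ih =>
    intro c hc hall
    have ha : a ∈ allowedSet 2 := hall a (by simp)
    have h1 := ih (c * a) (allowed_mul 2 c a hc ha) (fun x hx => hall x (by simp [hx]))
    have h2 := step2 c a hc ha
    simp only [scount, List.prod_cons, ← mul_assoc]
    omega

lemma sc1 : ∀ (as : List (ZMod 8)) (c : ZMod 8), c ∈ allowedSet 1 →
    (∀ a ∈ as, a ∈ allowedSet 1) →
    scount c as + dT 1 (v (c * as.prod)) ≤ budgetT 1 (v c) := by
  intro as
  induction as with
  | nil => intro c hc _; simpa [scount] using base1 c hc
  | cons a as ih =>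
    intro c hc hall
    have ha : a ∈ allowedSet 1 := hall a (by simp)
    have h1 := ih (c * a) (allowed_mul 1 c a hc ha) (fun x hx => hall x (by simp [hx]))
    have h2 := step1 c a hc ha
    simp only [scount, List.prod_cons, ← mul_assoc]
    omega

-- ssum lemma
lemma ssum_ge : ∀ (as : List (ZMod 8)) (c : ZMod 8),
    v (c * as.prod) ≤ min 3 (v c + ssum c as) := by
  intro as
  induction as with
  | nil =>
    intro c; simp only [List.prod_nil, mul_one, ssum]
    have := v_le c; omega
  | cons a as ih =>
    intro c
    have h1 := ih (c * a)
    have h2 := v_mul c a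
    have h3 := v_le c
    have h4 := v_le a
    have h5 := v_le (c * a)
    simp only [ssum, List.prod_cons, ← mul_assoc]
    by_cases hs : v a ≠ 0 ∧ v c ≠ 3
    · simp only [if_pos hs]; omega
    · simp only [if_neg hs]
      push_neg at hs
      by_cases hva : v a = 0
      · have : v (c * a) = v c := by rw [h2, hva]; omega
        omega
      · have hc3 : v c = 3 := hs hva
        have : v (c * a) = 3 := by rw [h2, hc3]; omega
        omega

-- multiset valuation of product
lemma v_prod (M : Multiset (ZMod 8)) : v M.prod = min 3 ((M.map v).sum) := by
  induction M using Multiset.induction_on with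
  | empty => simp [v_one]
  | cons a s ih =>
    simp only [Multiset.prod_cons, Multiset.map_cons, Multiset.sum_cons]
    rw [v_mul, ih]
    have := v_le a
    omega

lemma v_prod_zero (M : Multiset (ZMod 8)) (h : ∀ x ∈ M, v x = 0) : v M.prod = 0 := by
  rw [v_prod]
  have : (M.map v).sum = 0 := by
    apply Multiset.sum_eq_zero
    intro x hx
    obtain ⟨a, ha, rfl⟩ := Multiset.mem_map.mp hx
    exact h a ha
  omega

lemma χ_fold (χ : ZMod 8 → ZMod 2) (hχ1 : χ 1 = 0)
    (hχm : ∀ x y : ZMod 8, v x = 0 → v y = 0 → χ (x * y) = χ x + χ y) :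
    ∀ (M : Multiset (ZMod 8)), (∀ x ∈ M, v x = 0) → χ M.prod = (M.map χ).sum := by
  intro M
  induction M using Multiset.induction_on with
  | empty => simp [hχ1]
  | cons a s ih =>
    intro h
    have ha : v a = 0 := h a (Multiset.mem_cons_self a s)
    have hs : ∀ x ∈ s, v x = 0 := fun x hx => h x (Multiset.mem_cons_of_mem hx)
    simp only [Multiset.prod_cons, Multiset.map_cons, Multiset.sum_cons]
    rw [hχm a s.prod ha (v_prod_zero s hs), ih hs]

lemma allowed_fold (k : ℕ) (M : Multiset (ZMod 8)) (h : ∀ x ∈ M, x ∈ allowedSet k) :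
    M.prod ∈ allowedSet k := by
  induction M using Multiset.induction_on with
  | empty => simpa using allowed_one k
  | cons a s ih =>
    simp only [Multiset.prod_cons]
    exact allowed_mul k _ _ (h a (Multiset.mem_cons_self a s))
      (ih (fun x hx => h x (Multiset.mem_cons_of_mem hx)))

end Dav

namespace Dav

set_option linter.unusedSectionVars false

variable {R : Type*} [CommMonoid R]

lemma get_cs {α : Type*} (a : α) (as : List α) (i : Fin as.length) :
    (a :: as).get i.succ = as.get i := rfl

lemma bridge1 (l : List R) (f : R → ZMod 8) : ∀ c : ZMod 8,
    (Finset.univ.filter (fun i : Fin l.length =>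
      v (f (l.get i)) ≠ 0 ∧ v (c * ((l.take i.1).map f).prod) ≠ 3)).card
      = scount c (l.map f) := by
  induction l with
  | nil => intro c; simp [scount]
  | cons a as ih =>
    intro c
    rw [Finset.card_filter]
    simp only [List.length_cons]
    rw [Fin.sum_univ_succ]
    simp only [get_cs, Fin.val_succ, List.take_succ_cons, List.map_cons,
      List.prod_cons, List.take_zero, List.map_nil, List.prod_nil, mul_one, Fin.val_zero,
      List.get_cons_zero, scount, ← mul_assoc]
    rw [← Finset.card_filter, ih (c * f a)]

lemma bridge2 (l : List R) (f : R → ZMod 8) : ∀ c : ZMod 8,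
    (∑ i : Fin l.length, if v (f (l.get i)) ≠ 0 ∧ v (c * ((l.take i.1).map f).prod) ≠ 3
      then v (f (l.get i)) else 0) = ssum c (l.map f) := by
  induction l with
  | nil => intro c; simp [ssum]
  | cons a as ih =>
    intro c
    simp only [List.length_cons]
    rw [Fin.sum_univ_succ]
    simp only [get_cs, Fin.val_succ, List.take_succ_cons, List.map_cons,
      List.prod_cons, List.take_zero, List.map_nil, List.prod_nil, mul_one, Fin.val_zero,
      List.get_cons_zero, ssum, ← mul_assoc]
    rw [ih (c * f a)]

end Dav

namespace Dav

set_option linter.unusedSectionVars false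

variable {R : Type*} [CommMonoid R]

lemma part (l : List R) (A : Finset (Fin l.length)) :
    (Aᶜ.val.map l.get) + (A.val.map l.get) = (↑l : Multiset R) := by
  have h1 : Aᶜ.val + A.val = (Finset.univ : Finset (Fin l.length)).val := by
    rw [Finset.compl_eq_univ_sdiff, Finset.sdiff_val]
    exact tsub_add_cancel_of_le (Finset.val_le_iff.mpr (Finset.subset_univ A))
  rw [← Multiset.map_add, h1]
  show (Multiset.map l.get ↑(List.finRange l.length)) = _
  rw [Multiset.map_coe, List.map_get_finRange]

lemma vmul_ge (x y : ZMod 8) : v x ≤ v (x * y) := by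
  have := v_mul x y; have := v_le x; omega

end Dav

namespace Dav

set_option linter.unusedSectionVars false
set_option maxHeartbeats 1000000

variable {R : Type*} [CommMonoid R]

def strictP (l : List R) (f : R → ZMod 8) (i : Fin l.length) : Prop :=
  v (f (l.get i)) ≠ 0 ∧ v ((1 : ZMod 8) * ((l.take i.1).map f).prod) ≠ 3

instance (l : List R) (f : R → ZMod 8) (i : Fin l.length) : Decidable (strictP l f i) := by
  unfold strictP; infer_instance

lemma main {ι : Type} [Fintype ι] [DecidableEq ι]
    (b : ι → ℕ) (ev : ι → R →* ZMod 8)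
    (hb : ∀ j, b j = 1 ∨ b j = 2 ∨ b j = 3)
    (l : List R) (hall : ∀ x ∈ l, ∀ j, ev j x ∈ allowedSet (b j))
    (hlen : l.length = (∑ j, b j) + 1) :
    ∃ A : Finset (Fin l.length), A.Nonempty ∧
      ∀ j, ev j ((Aᶜ.val.map l.get).prod) = ev j ((↑l : Multiset R).prod) := by
  classical
  set F : Finset (Fin l.length) :=
    Finset.univ.filter (fun i => ∀ j, ¬ strictP l (⇑(ev j)) i) with hF
  -- allowedness of mapped lists
  have hallm : ∀ j, ∀ x ∈ l.map (⇑(ev j)), x ∈ allowedSet (b j) := by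
    intro j x hx
    obtain ⟨y, hy, rfl⟩ := List.mem_map.mp hx
    exact hall y hy j
  -- budget per coordinate
  have hbudget : ∀ j, (Finset.univ.filter (fun i => strictP l (⇑(ev j)) i)).card
      + dT (b j) (v ((l.map (⇑(ev j))).prod)) ≤ b j := by
    intro j
    have hbr : (Finset.univ.filter (fun i => strictP l (⇑(ev j)) i)).card
        = scount 1 (l.map (⇑(ev j))) := by
      rw [← bridge1 l (⇑(ev j)) 1]
      congr 1
    rw [hbr]
    have h1 : (1 : ZMod 8) ∈ allowedSet (b j) := allowed_one _
    rcases hb j with h | h | h <;> rw [h]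
    · have := sc1 (l.map (⇑(ev j))) 1 (h ▸ h1) (fun a ha => h ▸ hallm j a ha)
      rw [one_mul, v_one] at this
      simpa [budgetT] using this
    · have := sc2 (l.map (⇑(ev j))) 1 (h ▸ h1) (fun a ha => h ▸ hallm j a ha)
      rw [one_mul, v_one] at this
      simpa [budgetT] using this
    · have := sc3 (l.map (⇑(ev j))) 1
      rw [one_mul, v_one] at this
      simpa [budgetT] using this
  -- counting
  have hFcard : (∑ j, dT (b j) (v ((l.map (⇑(ev j))).prod))) + 1 ≤ F.card := by
    have hsub : Fᶜ ⊆ Finset.univ.biUnion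
        (fun j => Finset.univ.filter (fun i => strictP l (⇑(ev j)) i)) := by
      intro i hi
      rw [Finset.mem_compl, hF, Finset.mem_filter] at hi
      push_neg at hi
      obtain ⟨j, hj⟩ := hi (Finset.mem_univ i)
      exact Finset.mem_biUnion.mpr
        ⟨j, Finset.mem_univ j, Finset.mem_filter.mpr ⟨Finset.mem_univ i, hj⟩⟩
    have h2 : Fᶜ.card ≤ ∑ j, (Finset.univ.filter (fun i => strictP l (⇑(ev j)) i)).card :=
      le_trans (Finset.card_le_card hsub) (Finset.card_biUnion_le)
    have h3 : ∑ j, ((Finset.univ.filter (fun i => strictP l (⇑(ev j)) i)).card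
        + dT (b j) (v ((l.map (⇑(ev j))).prod))) ≤ ∑ j, b j :=
      Finset.sum_le_sum (fun j _ => hbudget j)
    rw [Finset.sum_add_distrib] at h3
    have h4 : F.card + Fᶜ.card = l.length := by
      rw [Finset.card_add_card_compl, Fintype.card_fin]
    omega
  -- pigeonhole
  set φ : Fin l.length → ((j : ι) × Fin (dT (b j) (v ((l.map (⇑(ev j))).prod)))) → ZMod 2 :=
    fun i s =>
      (Ch (b s.1) (v ((l.map (⇑(ev s.1))).prod))).get
        (Fin.cast (Ch_length (b s.1) (v ((l.map (⇑(ev s.1))).prod))).symm s.2)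
        (ev s.1 (l.get i))
    with hφ
  have hcardfun :
      Fintype.card (((j : ι) × Fin (dT (b j) (v ((l.map (⇑(ev j))).prod)))) → ZMod 2)
      = 2 ^ (∑ j, dT (b j) (v ((l.map (⇑(ev j))).prod))) := by
    rw [Fintype.card_fun, Fintype.card_sigma]
    simp
  have hlt : (Finset.univ :
      Finset (((j : ι) × Fin (dT (b j) (v ((l.map (⇑(ev j))).prod)))) → ZMod 2)).card
      < (F.powerset).card := by
    rw [Finset.card_univ, hcardfun, Finset.card_powerset]
    exact Nat.pow_lt_pow_right one_lt_two hFcard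
  obtain ⟨A₁, hA₁, A₂, hA₂, hne, heq⟩ :=
    Finset.exists_ne_map_eq_of_card_lt_of_maps_to hlt
      (fun (A : Finset (Fin l.length)) _ => Finset.mem_univ (∑ i ∈ A, φ i))
  rw [Finset.mem_powerset] at hA₁ hA₂
  set Δ : Finset (Fin l.length) := (A₁ \ A₂) ∪ (A₂ \ A₁) with hΔ
  have hΔF : Δ ⊆ F := by
    intro i hi
    rcases Finset.mem_union.mp hi with h | h
    · exact hA₁ (Finset.mem_sdiff.mp h).1
    · exact hA₂ (Finset.mem_sdiff.mp h).1
  have hΔflat : ∀ i ∈ Δ, ∀ j, ¬ strictP l (⇑(ev j)) i := by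
    intro i hi
    exact (Finset.mem_filter.mp (hΔF hi)).2
  have hΔne : Δ.Nonempty := by
    rw [Finset.nonempty_iff_ne_empty]
    intro hc
    rw [hΔ, Finset.union_eq_empty] at hc
    exact hne (le_antisymm (Finset.sdiff_eq_empty_iff_subset.mp hc.1)
      (Finset.sdiff_eq_empty_iff_subset.mp hc.2))
  have htwo : ∀ w : ((j : ι) × Fin (dT (b j) (v ((l.map (⇑(ev j))).prod)))) → ZMod 2,
      w + w = 0 := by
    intro w; funext s
    have h2 : ∀ a : ZMod 2, a + a = 0 := by decide
    exact h2 (w s)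
  have hsum0 : ∑ i ∈ Δ, φ i = 0 := by
    have hd : Disjoint (A₁ \ A₂) (A₂ \ A₁) := disjoint_sdiff_sdiff
    have e1 : ∑ i ∈ A₁ \ A₂, φ i + ∑ i ∈ A₁ ∩ A₂, φ i = ∑ i ∈ A₁, φ i := by
      rw [← Finset.sdiff_inter_self_left A₁ A₂]
      exact Finset.sum_sdiff Finset.inter_subset_left
    have e2 : ∑ i ∈ A₂ \ A₁, φ i + ∑ i ∈ A₁ ∩ A₂, φ i = ∑ i ∈ A₂, φ i := by
      rw [← Finset.sdiff_inter_self_right A₂ A₁]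
      exact Finset.sum_sdiff Finset.inter_subset_right
    rw [heq] at e1
    have f1 : ∑ i ∈ A₁ \ A₂, φ i = ∑ i ∈ A₂, φ i - ∑ i ∈ A₁ ∩ A₂, φ i := eq_sub_of_add_eq e1
    have f2 : ∑ i ∈ A₂ \ A₁, φ i = ∑ i ∈ A₂, φ i - ∑ i ∈ A₁ ∩ A₂, φ i := eq_sub_of_add_eq e2
    rw [hΔ, Finset.sum_union hd, f1, f2, sub_add_sub_comm, htwo, htwo, sub_zero]
  -- final verification
  refine ⟨Δ, hΔne, ?_⟩
  intro j
  have hprodhom : ∀ M : Multiset R, ev j M.prod = (M.map (⇑(ev j))).prod := fun M =>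
    map_multiset_prod (ev j) M
  have hp : ev j ((↑l : Multiset R).prod) = (l.map (⇑(ev j))).prod := by
    rw [hprodhom]
    exact Multiset.prod_coe _
  have hTB : ev j ((Δᶜ.val.map l.get).prod) * ((Δ.val.map l.get).map (⇑(ev j))).prod
      = (l.map (⇑(ev j))).prod := by
    have h1 : (Δᶜ.val.map l.get).prod * (Δ.val.map l.get).prod = (↑l : Multiset R).prod := by
      rw [← Multiset.prod_add, part l Δ]
    have h2 := congrArg (ev j) h1
    rw [map_mul, hprodhom (Δ.val.map l.get), hp] at h2
    exact h2
  by_cases hVj : v ((l.map (⇑(ev j))).prod) = 3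
  · -- saturated coordinate: both sides are 0
    have hp0 : (l.map (⇑(ev j))).prod = 0 := (v_eq3 _).mp hVj
    rw [hp, hp0]
    have hssum : 3 ≤ ssum 1 (l.map (⇑(ev j))) := by
      have h1 := ssum_ge (l.map (⇑(ev j))) 1
      rw [one_mul, v_one, hVj] at h1
      omega
    have hbr := bridge2 l (⇑(ev j)) 1
    have hzero : ∑ i ∈ Δ, (if v ((⇑(ev j)) (l.get i)) ≠ 0 ∧
        v ((1 : ZMod 8) * ((l.take i.1).map (⇑(ev j))).prod) ≠ 3
        then v ((⇑(ev j)) (l.get i)) else 0) = 0 := by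
      apply Finset.sum_eq_zero
      intro i hi
      have hflat := hΔflat i hi j
      unfold strictP at hflat
      exact if_neg hflat
    have hsplit2 := Finset.sum_add_sum_compl Δ (fun i => if v ((⇑(ev j)) (l.get i)) ≠ 0 ∧
        v ((1 : ZMod 8) * ((l.take i.1).map (⇑(ev j))).prod) ≠ 3
        then v ((⇑(ev j)) (l.get i)) else 0)
    have hle : ∑ i ∈ Δᶜ, (if v ((⇑(ev j)) (l.get i)) ≠ 0 ∧
        v ((1 : ZMod 8) * ((l.take i.1).map (⇑(ev j))).prod) ≠ 3
        then v ((⇑(ev j)) (l.get i)) else 0)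
        ≤ ∑ i ∈ Δᶜ, v ((⇑(ev j)) (l.get i)) := by
      apply Finset.sum_le_sum
      intro i _
      split <;> omega
    have hcsum : 3 ≤ ∑ i ∈ Δᶜ, v ((⇑(ev j)) (l.get i)) := by omega
    have hvT : v (((Δᶜ.val.map l.get).map (⇑(ev j))).prod) = 3 := by
      rw [v_prod]
      have hmm : (((Δᶜ.val.map l.get).map (⇑(ev j))).map v).sum
          = ∑ i ∈ Δᶜ, v ((⇑(ev j)) (l.get i)) := by
        rw [Multiset.map_map, Multiset.map_map]
        rfl
      rw [hmm]
      omega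
    rw [hprodhom]
    exact (v_eq3 _).mp hvT
  · -- unsaturated coordinate
    have hmono : ∀ i : Fin l.length,
        v (((l.take i.1).map (⇑(ev j))).prod) ≤ v ((l.map (⇑(ev j))).prod) := by
      intro i
      have hsplitl : (l.map (⇑(ev j)))
          = ((l.take i.1).map (⇑(ev j))) ++ ((l.drop i.1).map (⇑(ev j))) := by
        rw [← List.map_append, List.take_append_drop]
      rw [hsplitl, List.prod_append]
      exact vmul_ge _ _
    have hunit : ∀ i ∈ Δ, v ((⇑(ev j)) (l.get i)) = 0 := by
      intro i hi
      have hflat := hΔflat i hi j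
      unfold strictP at hflat
      push_neg at hflat
      by_cases h0 : v ((⇑(ev j)) (l.get i)) = 0
      · exact h0
      · exfalso
        have h1 := hflat h0
        rw [one_mul] at h1
        have h2 := hmono i
        have h3 := v_le ((l.map (⇑(ev j))).prod)
        omega
    have hBunit : ∀ x ∈ (Δ.val.map l.get).map (⇑(ev j)), v x = 0 := by
      intro x hx
      obtain ⟨y, hy, rfl⟩ := Multiset.mem_map.mp hx
      obtain ⟨i, hiΔ, rfl⟩ := Multiset.mem_map.mp hy
      exact hunit i hiΔ
    have hvu : v (((Δ.val.map l.get).map (⇑(ev j))).prod) = 0 := v_prod_zero _ hBunit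
    have husq : ((Δ.val.map l.get).map (⇑(ev j))).prod
        * ((Δ.val.map l.get).map (⇑(ev j))).prod = 1 := unit_sq _ hvu
    have hχall : ∀ χ ∈ Ch (b j) (v ((l.map (⇑(ev j))).prod)),
        χ (((Δ.val.map l.get).map (⇑(ev j))).prod) = 0 := by
      intro χ hχ
      obtain ⟨n, hn⟩ := List.mem_iff_get.mp hχ
      have hχform : χ = χa ∨ χ = χb := by
        have hform : ∀ ψ ∈ Ch (b j) (v ((l.map (⇑(ev j))).prod)), ψ = χa ∨ ψ = χb := by
          unfold Ch
          split_ifs <;> intro ψ hψ <;> simp_all <;> tauto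
        exact hform χ hχ
      have hχ1 : χ 1 = 0 := by rcases hχform with rfl | rfl; exacts [χa_one, χb_one]
      have hχm : ∀ x y : ZMod 8, v x = 0 → v y = 0 → χ (x * y) = χ x + χ y := by
        rcases hχform with rfl | rfl; exacts [χa_mul, χb_mul]
      have hfold : χ (((Δ.val.map l.get).map (⇑(ev j))).prod)
          = (((Δ.val.map l.get).map (⇑(ev j))).map χ).sum := χ_fold χ hχ1 hχm _ hBunit
      have hslot := congrFun hsum0
        ⟨j, Fin.cast (Ch_length (b j) (v ((l.map (⇑(ev j))).prod))) n⟩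
      rw [Finset.sum_apply, Pi.zero_apply] at hslot
      rw [hfold]
      have hmm : (((Δ.val.map l.get).map (⇑(ev j))).map χ).sum
          = ∑ i ∈ Δ, χ ((⇑(ev j)) (l.get i)) := by
        rw [Multiset.map_map, Multiset.map_map]
        rfl
      rw [hmm, ← hslot]
      apply Finset.sum_congr rfl
      intro i _
      rw [hφ]
      have hcast : (Fin.cast (Ch_length (b j) (v ((l.map (⇑(ev j))).prod))).symm
          (Fin.cast (Ch_length (b j) (v ((l.map (⇑(ev j))).prod))) n)) = n := by
        apply Fin.ext; simp
      simp only [hcast, hn]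
    have hpall : (l.map (⇑(ev j))).prod ∈ allowedSet (b j) := by
      have hfold := allowed_fold (b j) (↑(l.map (⇑(ev j))) : Multiset (ZMod 8))
        (fun x hx => hallm j x (by simpa using hx))
      rwa [Multiset.prod_coe] at hfold
    have huall : ((Δ.val.map l.get).map (⇑(ev j))).prod ∈ allowedSet (b j) := by
      apply allowed_fold
      intro x hx
      obtain ⟨y, hy, rfl⟩ := Multiset.mem_map.mp hx
      obtain ⟨i, hiΔ, rfl⟩ := Multiset.mem_map.mp hy
      exact hall (l.get i) (l.get_mem i) j
    have habs : (l.map (⇑(ev j))).prod * ((Δ.val.map l.get).map (⇑(ev j))).prod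
        = (l.map (⇑(ev j))).prod := by
      rcases hb j with h | h | h
      · exact ab1 _ _ (h ▸ huall) hvu
      · refine ab2 _ _ (h ▸ hpall) (h ▸ huall) hvu ?_
        intro hvp
        apply hχall
        rw [h, hvp]
        unfold Ch
        norm_num
      · refine ab3 _ _ hvu ?_ ?_
        · intro hvp
          constructor <;> (apply hχall; rw [h, hvp]; unfold Ch; norm_num)
        · intro hvp
          apply hχall
          rw [h, hvp]
          unfold Ch
          norm_num
    rw [hp]
    calc ev j ((Δᶜ.val.map l.get).prod)
        = ev j ((Δᶜ.val.map l.get).prod) * (((Δ.val.map l.get).map (⇑(ev j))).prod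
          * ((Δ.val.map l.get).map (⇑(ev j))).prod) := by rw [husq, mul_one]
      _ = (ev j ((Δᶜ.val.map l.get).prod) * ((Δ.val.map l.get).map (⇑(ev j))).prod)
          * ((Δ.val.map l.get).map (⇑(ev j))).prod := by rw [mul_assoc]
      _ = (l.map (⇑(ev j))).prod * ((Δ.val.map l.get).map (⇑(ev j))).prod := by rw [hTB]
      _ = (l.map (⇑(ev j))).prod := habs

end Dav

namespace Dav

set_option maxHeartbeats 1000000

-- power distinctness lemmas
lemma pw3 : ∀ c₁ c₂ : ℕ, c₂ < c₁ → c₁ ≤ 3 → (2 : ZMod 8) ^ c₁ ≠ 2 ^ c₂ := by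
  intro c₁ c₂ h1 h2
  interval_cases c₁ <;> interval_cases c₂ <;> decide
lemma pw2 : ∀ c₁ c₂ : ℕ, c₂ < c₁ → c₁ ≤ 2 → (4 : ZMod 8) ^ c₁ ≠ 4 ^ c₂ := by
  intro c₁ c₂ h1 h2
  interval_cases c₁ <;> interval_cases c₂ <;> decide
lemma pw1 : ∀ c₁ c₂ : ℕ, c₂ < c₁ → c₁ ≤ 1 → (0 : ZMod 8) ^ c₁ ≠ 0 ^ c₂ := by
  intro c₁ c₂ h1 h2
  interval_cases c₁ <;> interval_cases c₂ <;> decide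

lemma count_pow {M : Type*} [CommMonoid M] [DecidableEq M] (π : M →* ZMod 8) (g : M) :
    ∀ S : Multiset M, (∀ x ∈ S, x = g ∨ π x = 1) → π S.prod = (π g) ^ (S.count g) := by
  intro S
  induction S using Multiset.induction_on with
  | empty => simp
  | cons a s ih =>
    intro h
    rw [Multiset.prod_cons, map_mul]
    by_cases hag : a = g
    · subst hag
      rw [Multiset.count_cons_self, ih (fun x hx => h x (Multiset.mem_cons_of_mem hx)), pow_succ]
      ring
    · rcases h a (Multiset.mem_cons_self a s) with h' | h'
      · exact absurd h' hag
      · rw [h', one_mul, Multiset.count_cons_of_ne (fun hga => hag hga.symm),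
          ih (fun x hx => h x (Multiset.mem_cons_of_mem hx))]

variable (r₁ r₂ r₃ : ℕ)

def bfun : Fin r₁ ⊕ Fin r₂ ⊕ Fin r₃ → ℕ :=
  Sum.elim (fun _ => 3) (Sum.elim (fun _ => 2) (fun _ => 1))

def evR : (Fin r₁ ⊕ Fin r₂ ⊕ Fin r₃) → (RingR r₁ r₂ r₃ →* ZMod 8)
  | Sum.inl i =>
    { toFun := fun x => x.1 i, map_one' := rfl, map_mul' := fun _ _ => rfl }
  | Sum.inr (Sum.inl i) =>
    { toFun := fun x => f4 (x.2.1 i), map_one' := f4_one, map_mul' := fun _ _ => f4_mul _ _ }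
  | Sum.inr (Sum.inr i) =>
    { toFun := fun x => f2 (x.2.2 i), map_one' := f2_one, map_mul' := fun _ _ => f2_mul _ _ }

def gen : (Fin r₁ ⊕ Fin r₂ ⊕ Fin r₃) → RingR r₁ r₂ r₃
  | Sum.inl i => ⟨fun m => if m = i then 2 else 1, 1, 1⟩
  | Sum.inr (Sum.inl i) => ⟨1, fun m => if m = i then 2 else 1, 1⟩
  | Sum.inr (Sum.inr i) => ⟨1, 1, fun m => if m = i then 0 else 1⟩

def wv : ℕ → ZMod 8 := fun k => if k = 3 then 2 else if k = 2 then 4 else 0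

lemma hb_bfun : ∀ j, bfun r₁ r₂ r₃ j = 1 ∨ bfun r₁ r₂ r₃ j = 2 ∨ bfun r₁ r₂ r₃ j = 3 := by
  rintro (i | i | i)
  · right; right; rfl
  · right; left; rfl
  · left; rfl

lemma hall_all : ∀ x : RingR r₁ r₂ r₃, ∀ j, evR r₁ r₂ r₃ j x ∈ allowedSet (bfun r₁ r₂ r₃ j) := by
  rintro x (i | i | i)
  · exact Finset.mem_univ _
  · exact f4_mem _
  · exact f2_mem _

lemma hsep_all : ∀ x y : RingR r₁ r₂ r₃,
    (∀ j, evR r₁ r₂ r₃ j x = evR r₁ r₂ r₃ j y) → x = y := by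
  rintro ⟨x1, x2, x3⟩ ⟨y1, y2, y3⟩ h
  simp only [Prod.mk.injEq]
  refine ⟨funext fun i => h (Sum.inl i),
    funext fun i => f4_inj _ _ (h (Sum.inr (Sum.inl i))),
    funext fun i => f2_inj _ _ (h (Sum.inr (Sum.inr i)))⟩

lemma gen_ev : ∀ j' j, evR r₁ r₂ r₃ j' (gen r₁ r₂ r₃ j)
    = if j' = j then wv (bfun r₁ r₂ r₃ j) else 1 := by
  rintro (i' | i' | i') (i | i | i) <;>
    simp only [evR, gen, bfun, wv, MonoidHom.coe_mk, OneHom.coe_mk, Sum.elim_inl, Sum.elim_inr]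
  · by_cases h : i' = i
    · subst h; simp
    · simp [h, Sum.inl.injEq]
  · simp
  · simp
  · simp [f4_one]
  · by_cases h : i' = i
    · subst h; simp; decide
    · simp [h, Sum.inr.injEq, Sum.inl.injEq]
      decide
  · simp [f4_one]
  · simp [f2_one]
  · simp [f2_one]
  · by_cases h : i' = i
    · subst h; simp; decide
    · simp [h, Sum.inr.injEq]
      decide

lemma wv_ne_one : ∀ j, wv (bfun r₁ r₂ r₃ j) ≠ 1 := by
  rintro (i | i | i) <;> simp only [bfun, Sum.elim_inl, Sum.elim_inr] <;> decide

lemma gen_inj : ∀ j j', gen r₁ r₂ r₃ j = gen r₁ r₂ r₃ j' → j = j' := by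
  intro j j' h
  by_contra hne
  have h1 := gen_ev r₁ r₂ r₃ j j
  have h2 := gen_ev r₁ r₂ r₃ j j'
  rw [h] at h1
  rw [h1, if_pos rfl, if_neg hne] at h2
  exact wv_ne_one r₁ r₂ r₃ j h2

end Dav

namespace Dav

set_option maxHeartbeats 1000000

variable (r₁ r₂ r₃ : ℕ)

lemma sum_bfun : (∑ j, bfun r₁ r₂ r₃ j) = 3 * r₁ + 2 * r₂ + r₃ := by
  rw [Fintype.sum_sum_type, Fintype.sum_sum_type]
  simp only [bfun, Sum.elim_inl, Sum.elim_inr, Finset.sum_const, Finset.card_univ,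
    Fintype.card_fin, smul_eq_mul]
  ring

/-- the extremal multiset -/
def T0 : Multiset (RingR r₁ r₂ r₃) :=
  (Finset.univ : Finset (Fin r₁ ⊕ Fin r₂ ⊕ Fin r₃)).val.bind
    (fun j => Multiset.replicate (bfun r₁ r₂ r₃ j) (gen r₁ r₂ r₃ j))

lemma card_T0 : Multiset.card (T0 r₁ r₂ r₃) = 3 * r₁ + 2 * r₂ + r₃ := by
  have hdef : (∑ j, bfun r₁ r₂ r₃ j)
      = ((Finset.univ : Finset (Fin r₁ ⊕ Fin r₂ ⊕ Fin r₃)).val.map (bfun r₁ r₂ r₃)).sum := rfl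
  rw [T0, Multiset.card_bind, ← sum_bfun r₁ r₂ r₃, hdef]
  congr 1
  apply Multiset.map_congr rfl
  intro j _
  simp

lemma mem_T0 : ∀ x ∈ T0 r₁ r₂ r₃, ∃ j, x = gen r₁ r₂ r₃ j := by
  intro x hx
  rw [T0, Multiset.mem_bind] at hx
  obtain ⟨j, _, hj⟩ := hx
  exact ⟨j, Multiset.eq_of_mem_replicate hj⟩

lemma count_gen_T0 [DecidableEq (RingR r₁ r₂ r₃)] (j : Fin r₁ ⊕ Fin r₂ ⊕ Fin r₃) :
    (T0 r₁ r₂ r₃).count (gen r₁ r₂ r₃ j) = bfun r₁ r₂ r₃ j := by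
  rw [T0, Multiset.count_bind]
  have h1 : ∀ j' : Fin r₁ ⊕ Fin r₂ ⊕ Fin r₃,
      (Multiset.replicate (bfun r₁ r₂ r₃ j') (gen r₁ r₂ r₃ j')).count (gen r₁ r₂ r₃ j)
      = if j = j' then bfun r₁ r₂ r₃ j' else 0 := by
    intro j'
    rw [Multiset.count_replicate]
    by_cases h : j = j'
    · subst h; simp
    · rw [if_neg (fun hc => h (gen_inj r₁ r₂ r₃ j' j hc).symm), if_neg h]
  calc ((Finset.univ : Finset (Fin r₁ ⊕ Fin r₂ ⊕ Fin r₃)).val.map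
      (fun j' => (Multiset.replicate (bfun r₁ r₂ r₃ j') (gen r₁ r₂ r₃ j')).count
        (gen r₁ r₂ r₃ j))).sum
      = ∑ j', if j = j' then bfun r₁ r₂ r₃ j' else 0 := by
        apply Finset.sum_congr rfl
        intro j' _
        exact h1 j'
    _ = bfun r₁ r₂ r₃ j := by rw [Finset.sum_ite_eq]; simp

lemma badness [DecidableEq (RingR r₁ r₂ r₃)] :
    ∀ S₁ ≤ T0 r₁ r₂ r₃, ∀ S₂ < S₁, S₂.prod ≠ S₁.prod := by
  intro S₁ hS₁ S₂ hlt heq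
  have hle₂ : S₂ ≤ S₁ := le_of_lt hlt
  have hex : ∃ x, S₂.count x < S₁.count x := by
    by_contra hc
    push_neg at hc
    exact absurd (Multiset.le_iff_count.mpr hc) (lt_iff_le_not_ge.mp hlt).2
  obtain ⟨x, hx⟩ := hex
  have hxS₁ : x ∈ S₁ := by
    rw [← Multiset.count_pos]; omega
  obtain ⟨j, rfl⟩ := mem_T0 r₁ r₂ r₃ x (Multiset.mem_of_le hS₁ hxS₁)
  have hcond : ∀ S ≤ T0 r₁ r₂ r₃, ∀ y ∈ S, y = gen r₁ r₂ r₃ j ∨ evR r₁ r₂ r₃ j y = 1 := by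
    intro S hS y hy
    obtain ⟨j', rfl⟩ := mem_T0 r₁ r₂ r₃ y (Multiset.mem_of_le hS hy)
    by_cases h : j' = j
    · left; rw [h]
    · right
      rw [gen_ev, if_neg (fun hc => h hc.symm)]
  have hev : evR r₁ r₂ r₃ j (gen r₁ r₂ r₃ j) = wv (bfun r₁ r₂ r₃ j) := by
    rw [gen_ev, if_pos rfl]
  have h₁ : evR r₁ r₂ r₃ j S₁.prod
      = (wv (bfun r₁ r₂ r₃ j)) ^ (S₁.count (gen r₁ r₂ r₃ j)) := by
    rw [count_pow (evR r₁ r₂ r₃ j) (gen r₁ r₂ r₃ j) S₁ (hcond S₁ hS₁), hev]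
  have h₂ : evR r₁ r₂ r₃ j S₂.prod
      = (wv (bfun r₁ r₂ r₃ j)) ^ (S₂.count (gen r₁ r₂ r₃ j)) := by
    rw [count_pow (evR r₁ r₂ r₃ j) (gen r₁ r₂ r₃ j) S₂ (hcond S₂ (le_trans hle₂ hS₁)), hev]
  have hc₁ : S₁.count (gen r₁ r₂ r₃ j) ≤ bfun r₁ r₂ r₃ j := by
    rw [← count_gen_T0 r₁ r₂ r₃ j]
    exact Multiset.count_le_of_le _ hS₁
  have heval : (wv (bfun r₁ r₂ r₃ j)) ^ (S₂.count (gen r₁ r₂ r₃ j))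
      = (wv (bfun r₁ r₂ r₃ j)) ^ (S₁.count (gen r₁ r₂ r₃ j)) := by
    rw [← h₁, ← h₂, heq]
  rcases hb_bfun r₁ r₂ r₃ j with h | h | h <;> rw [h] at heval hc₁
  · exact pw1 _ _ hx hc₁ (by simpa [wv] using heval.symm)
  · exact pw2 _ _ hx hc₁ (by simpa [wv] using heval.symm)
  · exact pw3 _ _ hx hc₁ (by simpa [wv] using heval.symm)

lemma upper (T : Multiset (RingR r₁ r₂ r₃))
    (hcard : Multiset.card T = 3 * r₁ + 2 * r₂ + r₃ + 1) :
    ∃ T' : Multiset (RingR r₁ r₂ r₃), T' < T ∧ T'.prod = T.prod := by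
  classical
  have hL : (↑T.toList : Multiset (RingR r₁ r₂ r₃)) = T := T.coe_toList
  have hlen : T.toList.length = (∑ j, bfun r₁ r₂ r₃ j) + 1 := by
    rw [Multiset.length_toList, hcard, sum_bfun]
  obtain ⟨A, hAne, hAev⟩ := main (bfun r₁ r₂ r₃) (evR r₁ r₂ r₃) (hb_bfun r₁ r₂ r₃)
    T.toList (fun x _ j => hall_all r₁ r₂ r₃ x j) hlen
  have hsplit := part T.toList A
  refine ⟨Aᶜ.val.map T.toList.get, ?_, ?_⟩
  · have hle : Aᶜ.val.map T.toList.get ≤ T := by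
      exact le_trans (Multiset.le_add_right (Aᶜ.val.map T.toList.get) (A.val.map T.toList.get))
        (le_of_eq (hsplit.trans hL))
    have hcards : Multiset.card (Aᶜ.val.map T.toList.get)
        + Multiset.card (A.val.map T.toList.get) = Multiset.card T := by
      rw [← Multiset.card_add, hsplit, hL]
    have hApos : 0 < Multiset.card (A.val.map T.toList.get) := by
      rw [Multiset.card_map]
      exact Finset.card_pos.mpr hAne
    refine lt_of_le_of_ne hle (fun hc => ?_)
    rw [hc] at hcards
    omega
  · have := hsep_all r₁ r₂ r₃ ((Aᶜ.val.map T.toList.get).prod) ((↑T.toList : Multiset _).prod)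
      hAev
    rw [hL] at this
    exact this

theorem davenport : DavenportM (RingR r₁ r₂ r₃) = 3 * r₁ + 2 * r₂ + r₃ + 1 := by
  classical
  have hmem : (3 * r₁ + 2 * r₂ + r₃ + 1) ∈ {ℓ : ℕ | 0 < ℓ ∧
      ∀ T : Multiset (RingR r₁ r₂ r₃), Multiset.card T = ℓ →
      ∃ T' : Multiset (RingR r₁ r₂ r₃), T' < T ∧ T'.prod = T.prod} :=
    ⟨Nat.succ_pos _, fun T hT => upper r₁ r₂ r₃ T hT⟩
  refine le_antisymm (Nat.sInf_le hmem) (le_csInf ⟨_, hmem⟩ ?_)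
  rintro ℓ ⟨hpos, hprop⟩
  by_contra hcon
  push_neg at hcon
  have hℓ : ℓ ≤ 3 * r₁ + 2 * r₂ + r₃ := by omega
  -- build a subset of T0 of size ℓ
  set S₁ : Multiset (RingR r₁ r₂ r₃) := ↑((T0 r₁ r₂ r₃).toList.take ℓ) with hS₁def
  have hS₁le : S₁ ≤ T0 r₁ r₂ r₃ := by
    have h := Multiset.coe_le.mpr (((T0 r₁ r₂ r₃).toList.take_sublist ℓ).subperm)
    rw [hS₁def]
    exact le_trans h (le_of_eq (Multiset.coe_toList _))
  have hS₁card : Multiset.card S₁ = ℓ := by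
    rw [hS₁def, Multiset.coe_card, List.length_take, Multiset.length_toList, card_T0]
    omega
  obtain ⟨S₂, hS₂lt, hS₂prod⟩ := hprop S₁ hS₁card
  exact badness r₁ r₂ r₃ S₁ hS₁le S₂ hS₂lt hS₂prod

end Dav

theorem davenport_of_Z8Z4Z2
    (r₁ r₂ r₃ : ℕ) (h : 0 < r₁ + r₂ + r₃) :
    DavenportM (RingR r₁ r₂ r₃) = 3 * r₁ + 2 * r₂ + r₃ + 1 := by
  exact Dav.davenport r₁ r₂ r₃
end

section
/- Let r_1, r_2, r_3 be nonnegative integers, not all zero, and let R = ℤ_8^{r_1} ⊕ ℤ_4^{r_2} ⊕ ℤ_2^{r_3} with multiplicative monoid S_R and unit group Rˣ. Then D(S_R) = D(Rˣ) + δ, where δ = r_1 + r_2 + r_3 is the number of coordinates of R whose modulus is even. -/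
open Multiset



lemma multiset_map_add_split {α β : Type*} (f : α → β) :
    ∀ (u v : Multiset β) (t : Multiset α), t.map f = u + v →
    ∃ t₁ t₂ : Multiset α, t = t₁ + t₂ ∧ t₁.map f = u ∧ t₂.map f = v := by
  intro u
  induction u using Multiset.induction with
  | empty => intro v t h; exact ⟨0, t, by simp, by simp, by simpa using h⟩
  | cons a u ih =>
      intro v t h
      have ha : a ∈ t.map f := by rw [h]; simp
      obtain ⟨x, hx, rfl⟩ := Multiset.mem_map.1 ha
      obtain ⟨t', rfl⟩ := Multiset.exists_cons_of_mem hx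
      rw [Multiset.map_cons, Multiset.cons_add] at h
      obtain ⟨t₁, t₂, rfl, h1, h2⟩ := ih v t' ((Multiset.cons_inj_right _).1 h)
      exact ⟨x ::ₘ t₁, t₂, by rw [Multiset.cons_add], by simp [h1], h2⟩

lemma finset_map_le_toList {α : Type*} (l : List α) (C : Finset (Fin l.length)) :
    (C.val.map l.get) ≤ (l : Multiset α) := by
  have h1 : C.val.map l.get ≤ (Finset.univ : Finset (Fin l.length)).val.map l.get :=
    Multiset.map_le_map (by simpa using C.val_le_iff_subset.2 (Finset.subset_univ C))
  refine le_trans h1 (le_of_eq ?_)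
  have : (Finset.univ : Finset (Fin l.length)).val = (List.finRange l.length : Multiset (Fin l.length)) := rfl
  rw [this, Multiset.map_coe]
  exact congrArg _ (List.map_get_finRange l)

lemma exists_subset_prod_one {H : Type*} [CommGroup H] [Fintype H]
    (hexp : ∀ x : H, x * x = 1) (h : ℕ) (hcard : Fintype.card H ≤ 2 ^ h)
    (T : Multiset H) (hT : h + 1 ≤ Multiset.card T) :
    ∃ V : Multiset H, V ≤ T ∧ V ≠ 0 ∧ V.prod = 1 := by
  classical
  set l := T.toList with hl
  have hlen : h + 1 ≤ l.length := by rw [hl, Multiset.length_toList]; exact hT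
  let f : Finset (Fin l.length) → H := fun A => ∏ i ∈ A, l.get i
  have hcard2 : Fintype.card H < Fintype.card (Finset (Fin l.length)) := by
    rw [Fintype.card_finset, Fintype.card_fin]
    calc Fintype.card H ≤ 2^h := hcard
    _ < 2 ^ l.length := Nat.pow_lt_pow_right one_lt_two (by omega)
  obtain ⟨A, B, hne, hfe⟩ := Fintype.exists_ne_map_eq_of_card_lt f hcard2
  have hAB : f (A \ B) = f (B \ A) := by
    have h1 : f (A \ (A ∩ B)) * f (A ∩ B) = f A := Finset.prod_sdiff Finset.inter_subset_left
    have h2 : f (B \ (A ∩ B)) * f (A ∩ B) = f B := Finset.prod_sdiff Finset.inter_subset_right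
    rw [Finset.sdiff_inter_self_left] at h1
    rw [Finset.sdiff_inter_self_right] at h2
    have := h1.trans (hfe.trans h2.symm)
    exact mul_right_cancel this
  set C : Finset (Fin l.length) := (A \ B) ∪ (B \ A) with hC
  have hCne : C.Nonempty := by
    rw [Finset.nonempty_iff_ne_empty]
    intro hemp
    apply hne
    have h1 : A \ B = ∅ := by
      rw [← Finset.subset_empty, ← hemp]; exact Finset.subset_union_left
    have h2 : B \ A = ∅ := by
      rw [← Finset.subset_empty, ← hemp]; exact Finset.subset_union_right
    exact le_antisymm (Finset.sdiff_eq_empty_iff_subset.1 h1) (Finset.sdiff_eq_empty_iff_subset.1 h2)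
  have hCprod : f C = 1 := by
    have : f C = f (A \ B) * f (B \ A) :=
      Finset.prod_union (disjoint_sdiff_sdiff)
    rw [this, ← hAB]
    exact hexp _
  refine ⟨C.val.map l.get, ?_, ?_, ?_⟩
  · have := finset_map_le_toList l C
    simpa [hl] using this
  · intro h0
    rw [Multiset.map_eq_zero] at h0
    exact Finset.nonempty_iff_ne_empty.1 hCne (Finset.val_eq_zero.1 h0)
  · show (C.val.map l.get).prod = 1
    exact hCprod



section Defs
variable (S : Type) [CommMonoid S]

def Dav (c : ℕ) : Prop :=
  ∀ T : Multiset S, c + 1 ≤ Multiset.card T →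
    ∃ V W : Multiset S, T = V + W ∧ V ≠ 0 ∧ W.prod = T.prod

def DavH (c : ℕ) : Prop :=
  ∀ (H : Type) [CommGroup H] [Fintype H], (∀ x : H, x * x = 1) →
    ∀ h : ℕ, Fintype.card H ≤ 2 ^ h → Dav (S × H) (h + c)
end Defs

lemma multiset_exists_le_card {α : Type*} (s : Multiset α) (k : ℕ) (h : k ≤ Multiset.card s) :
    ∃ t : Multiset α, t ≤ s ∧ Multiset.card t = k := by
  refine ⟨(s.toList.take k : List α), ?_, ?_⟩
  · have h1 : List.Sublist (s.toList.take k) s.toList := List.take_sublist _ _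
    have := Multiset.coe_le.2 h1.subperm
    simpa [Multiset.coe_toList] using this
  · simp only [Multiset.coe_card, List.length_take]
    have : s.toList.length = Multiset.card s := Multiset.length_toList s
    omega

lemma prod_fst {α β : Type*} [CommMonoid α] [CommMonoid β] (s : Multiset (α × β)) :
    s.prod.1 = (s.map Prod.fst).prod := (Multiset.prod_hom s (MonoidHom.fst α β)).symm

lemma prod_snd {α β : Type*} [CommMonoid α] [CommMonoid β] (s : Multiset (α × β)) :
    s.prod.2 = (s.map Prod.snd).prod := (Multiset.prod_hom s (MonoidHom.snd α β)).symm

lemma Dav.congr {S S' : Type} [CommMonoid S] [CommMonoid S'] (e : S ≃* S') {c : ℕ}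
    (hS : Dav S c) : Dav S' c := by
  intro T hT
  obtain ⟨V, W, hsplit, hV, hW⟩ := hS (T.map e.symm) (by simpa using hT)
  refine ⟨V.map e, W.map e, ?_, by simpa using hV, ?_⟩
  · have := congrArg (Multiset.map (e : S → S')) hsplit
    simp only [Multiset.map_map, Function.comp] at this
    simpa [Multiset.map_add] using this
  · have h1 : (W.map (e : S → S')).prod = e W.prod := Multiset.prod_hom W e.toMonoidHom
    have h2 : (T.map (e.symm : S' → S)).prod = e.symm T.prod :=
      Multiset.prod_hom T e.symm.toMonoidHom
    rw [h1, hW, h2]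
    simp

lemma DavH.congr {S S' : Type} [CommMonoid S] [CommMonoid S'] (e : S ≃* S') {c : ℕ}
    (hS : DavH S c) : DavH S' c := by
  intro H _ _ hexp h hcard
  exact Dav.congr (e.prodCongr (MulEquiv.refl H)) (hS H hexp h hcard)

lemma DavH.of_eq {S : Type} [CommMonoid S] {c c' : ℕ} (h : c = c') (hS : DavH S c) :
    DavH S c' := h ▸ hS

open Classical in
noncomputable def unitOf {M : Type*} [Monoid M] (m : M) : Mˣ :=
  if h : IsUnit m then h.unit else 1

lemma unitOf_spec {M : Type*} [Monoid M] {m : M} (h : IsUnit m) : (unitOf m : M) = m := by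
  rw [unitOf, dif_pos h, IsUnit.unit_spec]

lemma hom_map_prod {α N N' : Type*} [CommMonoid N] [CommMonoid N'] (f : N →* N')
    (s : Multiset α) (g : α → N) :
    f ((s.map g).prod) = (s.map (fun a => f (g a))).prod := by
  rw [← Multiset.prod_hom _ f, Multiset.map_map]; rfl

lemma mul_shuffle3 {M : Type*} [CommMonoid M] (v a b : M) : v * (a * b) = b * (a * v) := by
  rw [← mul_assoc, mul_comm (v * a) b, mul_comm v a]

lemma eq_one_of_mul_eq_right {G : Type*} [Group G] {x y : G} (h : x * y = y) : x = 1 :=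
  mul_right_cancel (by rw [h, one_mul])

section Step

variable {S M : Type} [CommMonoid S] [CommMonoid M]

lemma prod_c1 {S M H : Type} [CommMonoid S] [CommMonoid M] [CommMonoid H]
    (X : Multiset ((S × M) × H)) :
    X.prod.1.1 = (X.map (fun x : (S × M) × H => x.1.1)).prod :=
  (Multiset.prod_hom X ((MonoidHom.fst S M).comp (MonoidHom.fst (S × M) H))).symm

lemma prod_c2 {S M H : Type} [CommMonoid S] [CommMonoid M] [CommMonoid H]
    (X : Multiset ((S × M) × H)) :
    X.prod.1.2 = (X.map (fun x : (S × M) × H => x.1.2)).prod :=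
  (Multiset.prod_hom X ((MonoidHom.snd S M).comp (MonoidHom.fst (S × M) H))).symm

lemma prod_c3 {S M H : Type} [CommMonoid S] [CommMonoid M] [CommMonoid H]
    (X : Multiset ((S × M) × H)) :
    X.prod.2 = (X.map (fun x : (S × M) × H => x.2)).prod :=
  (Multiset.prod_hom X (MonoidHom.snd (S × M) H)).symm

lemma step (Hb : ℕ → Type) [∀ b, CommGroup (Hb b)] [∀ b, Fintype (Hb b)] {c k : ℕ}
    (hbexp : ∀ b (x : Hb b), x * x = 1)
    (hbcard : ∀ b, b < k → Fintype.card (Hb b) ≤ 2 ^ (k - b - 1))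
    (φ : ∀ b, Mˣ →* Hb b)
    (absorb : ∀ b, b < k → ∀ B : Multiset M, Multiset.card B = b →
      (∀ x ∈ B, ¬ IsUnit x) → ∀ (a : M) (w : Mˣ), φ b w = 1 →
        B.prod * (a * (w : M)) = B.prod * a)
    (absorb_top : ∀ B : Multiset M, Multiset.card B = k →
      (∀ x ∈ B, ¬ IsUnit x) → ∀ (a w : M), B.prod * (a * w) = B.prod * a)
    (IH : DavH S c) : DavH (S × M) (c + k) := by
  intro H instG instF hexp h hcard T hT
  classical
  set p : (S × M) × H → Prop := fun x => IsUnit x.1.2 with hp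
  set B0 := T.filter (fun x => ¬ p x) with hB0
  set T₁ := T.filter p with hT₁def
  have hsplit0 : T₁ + B0 = T := Multiset.filter_add_not p T
  have hcards : Multiset.card T₁ + Multiset.card B0 = Multiset.card T := by
    rw [← Multiset.card_add, hsplit0]
  by_cases hb : Multiset.card B0 < k
  · -- alive case
    set b := Multiset.card B0 with hbdef
    have hexp' : ∀ x : H × Hb b, x * x = 1 := fun x => Prod.ext (hexp x.1) (hbexp b x.2)
    have hcard' : Fintype.card (H × Hb b) ≤ 2 ^ (h + (k - b - 1)) := by
      rw [Fintype.card_prod, pow_add]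
      exact Nat.mul_le_mul hcard (hbcard b hb)
    have hT₁card : (h + (k - b - 1)) + c + 1 ≤
        Multiset.card (T₁.map (fun x : (S × M) × H => (x.1.1, (x.2, φ b (unitOf x.1.2))))) := by
      rw [Multiset.card_map]; omega
    obtain ⟨V', W', hsplit', hV', hW'⟩ :=
      IH (H × Hb b) hexp' (h + (k - b - 1)) hcard'
        (T₁.map (fun x : (S × M) × H => (x.1.1, (x.2, φ b (unitOf x.1.2))))) hT₁card
    obtain ⟨V, W, hVW, hVg, hWg⟩ := multiset_map_add_split _ V' W' T₁ hsplit'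
    have hVle : V ≤ T₁ := hVW ▸ Multiset.le_add_right V W
    have hkey : V'.prod * W'.prod = W'.prod := by
      rw [← Multiset.prod_add, ← hsplit', hW']
    rw [← hVg, ← hWg] at hkey
    -- component facts
    have hS : (V.map (fun x : (S × M) × H => x.1.1)).prod *
        (W.map (fun x : (S × M) × H => x.1.1)).prod
        = (W.map (fun x : (S × M) × H => x.1.1)).prod := by
      have h2 := congrArg (MonoidHom.fst S (H × Hb b)) hkey
      rw [map_mul] at h2
      simp only [hom_map_prod] at h2
      simp only [MonoidHom.coe_comp, MonoidHom.coe_fst, MonoidHom.coe_snd,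
        Function.comp_apply] at h2
      exact h2
    have hH : (V.map (fun x : (S × M) × H => x.2)).prod = 1 := by
      have h2 := congrArg ((MonoidHom.fst H (Hb b)).comp (MonoidHom.snd S (H × Hb b))) hkey
      rw [map_mul] at h2
      simp only [hom_map_prod] at h2
      simp only [MonoidHom.coe_comp, MonoidHom.coe_fst, MonoidHom.coe_snd,
        Function.comp_apply] at h2
      exact eq_one_of_mul_eq_right h2
    have hBq : (V.map (fun x : (S × M) × H => φ b (unitOf x.1.2))).prod = 1 := by
      have h2 := congrArg ((MonoidHom.snd H (Hb b)).comp (MonoidHom.snd S (H × Hb b))) hkey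
      rw [map_mul] at h2
      simp only [hom_map_prod] at h2
      simp only [MonoidHom.coe_comp, MonoidHom.coe_fst, MonoidHom.coe_snd,
        Function.comp_apply] at h2
      exact eq_one_of_mul_eq_right h2
    refine ⟨V, W + B0, ?_, ?_, ?_⟩
    · rw [← hsplit0, hVW, add_assoc]
    · intro h0; apply hV'; rw [← hVg, h0]; simp
    · -- main product equality
      have hT' : T.prod = V.prod * ((W + B0).prod) := by
        rw [← hsplit0, hVW]
        rw [Multiset.prod_add, Multiset.prod_add, Multiset.prod_add, mul_assoc]
      rw [hT']
      set q := (W + B0).prod with hq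
      refine (Prod.ext (Prod.ext ?_ ?_) ?_).symm
      · -- S component
        show V.prod.1.1 * q.1.1 = q.1.1
        rw [hq, Multiset.prod_add]
        show V.prod.1.1 * (W.prod * B0.prod).1.1 = (W.prod * B0.prod).1.1
        simp only [Prod.fst_mul, Prod.snd_mul]
        rw [prod_c1 V, prod_c1 W, prod_c1 B0, ← mul_assoc, hS]
      · -- M component
        show V.prod.1.2 * q.1.2 = q.1.2
        rw [hq, Multiset.prod_add]
        show V.prod.1.2 * (W.prod * B0.prod).1.2 = (W.prod * B0.prod).1.2
        simp only [Prod.fst_mul, Prod.snd_mul]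
        rw [prod_c2 V, prod_c2 W, prod_c2 B0]
        -- use absorb
        set w : Mˣ := (V.map (fun x : (S × M) × H => unitOf x.1.2)).prod with hw
        have hwv : (V.map (fun x : (S × M) × H => x.1.2)).prod = (w : M) := by
          rw [hw]
          have h3 : ((V.map (fun x : (S × M) × H => unitOf x.1.2)).prod : M)
              = (V.map (fun x : (S × M) × H => ((unitOf x.1.2 : Mˣ) : M))).prod :=
            hom_map_prod (Units.coeHom M) V _
          rw [h3]
          apply congrArg
          apply Multiset.map_congr rfl
          intro x hx
          exact (unitOf_spec ((Multiset.mem_filter.1 (Multiset.mem_of_le hVle hx)).2)).symm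
        have hφw : φ b w = 1 := by
          rw [hw]
          have h3 : φ b ((V.map (fun x : (S × M) × H => unitOf x.1.2)).prod)
              = (V.map (fun x : (S × M) × H => φ b (unitOf x.1.2))).prod :=
            hom_map_prod (φ b) V _
          rw [h3, hBq]
        have habs := absorb b hb (B0.map (fun x : (S × M) × H => x.1.2))
          (by rw [Multiset.card_map])
          (by intro x hx
              obtain ⟨y, hy, rfl⟩ := Multiset.mem_map.1 hx
              exact (Multiset.mem_filter.1 hy).2)
          ((W.map (fun x : (S × M) × H => x.1.2)).prod) w hφw
        rw [hwv]
        set vM := (w : M)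
        set aM := (W.map (fun x : (S × M) × H => x.1.2)).prod
        set bM := (B0.map (fun x : (S × M) × H => x.1.2)).prod
        calc vM * (aM * bM) = bM * (aM * vM) := mul_shuffle3 _ _ _
        _ = bM * aM := habs
        _ = aM * bM := mul_comm _ _
      · -- H component
        show V.prod.2 * q.2 = q.2
        rw [prod_c3 V, hH, one_mul]
  · -- dead case
    push_neg at hb
    obtain ⟨B, hBle0, hBcard⟩ := multiset_exists_le_card B0 k hb
    have hBleT : B ≤ T := le_trans hBle0 (Multiset.filter_le _ T)
    have hBnon : ∀ x ∈ B, ¬ IsUnit x.1.2 := by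
      intro x hx
      exact (Multiset.mem_filter.1 (Multiset.mem_of_le hBle0 hx)).2
    set T₂ := T - B with hT₂def
    have hsplit2 : T₂ + B = T := tsub_add_cancel_of_le hBleT
    have hcard2 : Multiset.card T₂ + k = Multiset.card T := by
      rw [← hBcard, ← Multiset.card_add, hsplit2]
    have hT₂card : h + c + 1 ≤
        Multiset.card (T₂.map (fun x : (S × M) × H => (x.1.1, x.2))) := by
      rw [Multiset.card_map]; omega
    obtain ⟨V', W', hsplit', hV', hW'⟩ :=
      IH H hexp h hcard (T₂.map (fun x : (S × M) × H => (x.1.1, x.2))) hT₂card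
    obtain ⟨V, W, hVW, hVg, hWg⟩ := multiset_map_add_split _ V' W' T₂ hsplit'
    have hkey : V'.prod * W'.prod = W'.prod := by
      rw [← Multiset.prod_add, ← hsplit', hW']
    rw [← hVg, ← hWg] at hkey
    have hS : (V.map (fun x : (S × M) × H => x.1.1)).prod *
        (W.map (fun x : (S × M) × H => x.1.1)).prod
        = (W.map (fun x : (S × M) × H => x.1.1)).prod := by
      have h2 := congrArg (MonoidHom.fst S H) hkey
      rw [map_mul] at h2
      simp only [hom_map_prod] at h2
      simp only [MonoidHom.coe_comp, MonoidHom.coe_fst, MonoidHom.coe_snd,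
        Function.comp_apply] at h2
      exact h2
    have hH : (V.map (fun x : (S × M) × H => x.2)).prod = 1 := by
      have h2 := congrArg (MonoidHom.snd S H) hkey
      rw [map_mul] at h2
      simp only [hom_map_prod] at h2
      simp only [MonoidHom.coe_comp, MonoidHom.coe_fst, MonoidHom.coe_snd,
        Function.comp_apply] at h2
      exact eq_one_of_mul_eq_right h2
    refine ⟨V, W + B, ?_, ?_, ?_⟩
    · rw [← hsplit2, hVW, add_assoc]
    · intro h0; apply hV'; rw [← hVg, h0]; simp
    · have hT' : T.prod = V.prod * ((W + B).prod) := by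
        rw [← hsplit2, hVW]
        rw [Multiset.prod_add, Multiset.prod_add, Multiset.prod_add, mul_assoc]
      rw [hT']
      set q := (W + B).prod with hq
      refine (Prod.ext (Prod.ext ?_ ?_) ?_).symm
      · show V.prod.1.1 * q.1.1 = q.1.1
        rw [hq, Multiset.prod_add]
        show V.prod.1.1 * (W.prod * B.prod).1.1 = (W.prod * B.prod).1.1
        simp only [Prod.fst_mul, Prod.snd_mul]
        rw [prod_c1 V, prod_c1 W, prod_c1 B, ← mul_assoc, hS]
      · show V.prod.1.2 * q.1.2 = q.1.2
        rw [hq, Multiset.prod_add]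
        show V.prod.1.2 * (W.prod * B.prod).1.2 = (W.prod * B.prod).1.2
        simp only [Prod.fst_mul, Prod.snd_mul]
        rw [prod_c2 V, prod_c2 W, prod_c2 B]
        have habs := absorb_top (B.map (fun x : (S × M) × H => x.1.2))
          (by rw [Multiset.card_map, hBcard])
          (by intro x hx
              obtain ⟨y, hy, rfl⟩ := Multiset.mem_map.1 hx
              exact hBnon y hy)
          ((W.map (fun x : (S × M) × H => x.1.2)).prod)
          ((V.map (fun x : (S × M) × H => x.1.2)).prod)
        set vM := (V.map (fun x : (S × M) × H => x.1.2)).prod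
        set aM := (W.map (fun x : (S × M) × H => x.1.2)).prod
        set bM := (B.map (fun x : (S × M) × H => x.1.2)).prod
        calc vM * (aM * bM) = bM * (aM * vM) := mul_shuffle3 _ _ _
        _ = bM * aM := habs
        _ = aM * bM := mul_comm _ _
      · show V.prod.2 * q.2 = q.2
        rw [prod_c3 V, hH, one_mul]

end Step


lemma units_exp2 (j : ℕ) (hj : j ≤ 3) : ∀ x : (ZMod (2^j))ˣ, x * x = 1 := by
  interval_cases j <;> decide

lemma units_card (j : ℕ) (hj : j ≤ 3) : Fintype.card (ZMod (2^j))ˣ ≤ 2^(j-1) := by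
  interval_cases j <;> decide

lemma zmod_nonunit_two_dvd {n k : ℕ} (hn : n = 2^k) (hk : 1 ≤ k) (x : ZMod n)
    (hx : ¬ IsUnit x) : ∃ y : ZMod n, x = 2 * y := by
  subst hn
  haveI : NeZero (2^k) := ⟨(pow_pos (by norm_num : (0:ℕ) < 2) k).ne'⟩
  have hval : ((x.val : ℕ) : ZMod (2^k)) = x := ZMod.natCast_rightInverse x
  have hco : ¬ Nat.Coprime x.val (2^k) := by
    intro hc
    exact hx (hval ▸ (ZMod.isUnit_iff_coprime x.val (2^k)).2 hc)
  have h2 : 2 ∣ x.val := by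
    by_contra h2
    exact hco (Nat.Coprime.pow_right k ((Nat.coprime_comm.1 ((Nat.Prime.coprime_iff_not_dvd Nat.prime_two).2 h2))))
  obtain ⟨m, hm⟩ := h2
  refine ⟨(m : ZMod (2^k)), ?_⟩
  rw [← hval, hm]
  push_cast
  ring

lemma zmod_prod_nonunits {n k : ℕ} (hn : n = 2^k) (hk : 1 ≤ k) (B : Multiset (ZMod n))
    (hB : ∀ x ∈ B, ¬ IsUnit x) : ∃ y : ZMod n, B.prod = 2^(Multiset.card B) * y := by
  induction B using Multiset.induction with
  | empty => exact ⟨1, by simp⟩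
  | cons a B ih =>
      obtain ⟨y, hy⟩ := ih (fun x hx => hB x (Multiset.mem_cons_of_mem hx))
      obtain ⟨z, hz⟩ := zmod_nonunit_two_dvd hn hk a (hB a (Multiset.mem_cons_self a B))
      refine ⟨z * y, ?_⟩
      rw [Multiset.prod_cons, hy, hz, Multiset.card_cons]
      ring

lemma zmod_pow_k_eq_zero {n k : ℕ} (hn : n = 2^k) : (2 : ZMod n)^k = 0 := by
  subst hn
  have : ((2^k : ℕ) : ZMod (2^k)) = 0 := ZMod.natCast_self _
  push_cast at this
  exact this

lemma zmod_absorb_top {n k : ℕ} (hn : n = 2^k) (hk : 1 ≤ k) (B : Multiset (ZMod n))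
    (hcard : Multiset.card B = k) (hnon : ∀ x ∈ B, ¬ IsUnit x) (a w : ZMod n) :
    B.prod * (a * w) = B.prod * a := by
  obtain ⟨y, hy⟩ := zmod_prod_nonunits hn hk B hnon
  rw [hy, hcard, zmod_pow_k_eq_zero hn]
  ring

lemma zmod_castHom_eq_one {n k b : ℕ} (hn : n = 2^k) (hb : b < k)
    (w : ZMod n) (hdvd : 2^(k-b) ∣ n)
    (hw : ZMod.castHom hdvd (ZMod (2^(k-b))) w = 1) :
    ∃ t : ZMod n, w = 1 + 2^(k-b) * t := by
  haveI : NeZero n := ⟨by subst hn; exact (pow_pos (by norm_num : (0:ℕ) < 2) k).ne'⟩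
  haveI : NeZero (2^(k-b)) := ⟨(pow_pos (by norm_num : (0:ℕ) < 2) (k-b)).ne'⟩
  set f := ZMod.castHom hdvd (ZMod (2^(k-b)))
  set x := w - 1 with hx
  have hfx : f x = 0 := by rw [hx, map_sub, map_one, hw, sub_self]
  have hval : ((x.val : ℕ) : ZMod n) = x := ZMod.natCast_rightInverse x
  have hfx2 : ((x.val : ℕ) : ZMod (2^(k-b))) = 0 := by
    rw [← map_natCast f, hval, hfx]
  have hdvd2 : 2^(k-b) ∣ x.val := (ZMod.natCast_eq_zero_iff _ _).1 hfx2
  obtain ⟨m, hm⟩ := hdvd2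
  refine ⟨(m : ZMod n), ?_⟩
  have : x = 2^(k-b) * (m : ZMod n) := by
    rw [← hval, hm]; push_cast; ring
  rw [← this, hx]; ring

lemma zmod_absorb {n k b : ℕ} (hn : n = 2^k) (hk : 1 ≤ k) (hb : b < k)
    (B : Multiset (ZMod n)) (hcard : Multiset.card B = b)
    (hnon : ∀ x ∈ B, ¬ IsUnit x) (a : ZMod n) (w : ZMod n) (hdvd : 2^(k-b) ∣ n)
    (hw : ZMod.castHom hdvd (ZMod (2^(k-b))) w = 1) :
    B.prod * (a * w) = B.prod * a := by
  obtain ⟨y, hy⟩ := zmod_prod_nonunits hn hk B hnon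
  obtain ⟨t, ht⟩ := zmod_castHom_eq_one hn hb w hdvd hw
  have h0 : (2:ZMod n)^b * (2:ZMod n)^(k-b) = 0 := by
    rw [← pow_add]
    have : b + (k - b) = k := by omega
    rw [this, zmod_pow_k_eq_zero hn]
  rw [hy, hcard, ht]
  linear_combination (y * a * t) * h0



def mulPiFinSucc (n : ℕ) (α : Type) [MulOneClass α] : (Fin (n+1) → α) ≃* α × (Fin n → α) :=
  { (Fin.consEquiv fun _ => α).symm with map_mul' := fun _ _ => rfl }

def swapHelper (A B Q : Type) [MulOneClass A] [MulOneClass B] [MulOneClass Q] :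
    (B × A) × Q ≃* (A × Q) × B :=
  ((MulEquiv.prodComm.prodCongr (MulEquiv.refl Q)).trans
    (MulEquiv.prodAssoc.trans
      (((MulEquiv.refl A).prodCongr MulEquiv.prodComm).trans
        MulEquiv.prodAssoc.symm)))

def eqR1 (r1 r2 r3 : ℕ) : RingR (r1+1) r2 r3 ≃* (RingR r1 r2 r3) × ZMod 8 :=
  ((mulPiFinSucc r1 (ZMod 8)).prodCongr
      (MulEquiv.refl ((Fin r2 → ZMod 4) × (Fin r3 → ZMod 2)))).trans
    (swapHelper (Fin r1 → ZMod 8) (ZMod 8) ((Fin r2 → ZMod 4) × (Fin r3 → ZMod 2)))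

def eqR2 (r2 r3 : ℕ) : RingR 0 (r2+1) r3 ≃* (RingR 0 r2 r3) × ZMod 4 :=
  (((MulEquiv.refl (Fin 0 → ZMod 8)).prodCongr
      (((mulPiFinSucc r2 (ZMod 4)).prodCongr (MulEquiv.refl (Fin r3 → ZMod 2))).trans
        (swapHelper (Fin r2 → ZMod 4) (ZMod 4) (Fin r3 → ZMod 2)))).trans
    MulEquiv.prodAssoc.symm)

def eqR3 (r3 : ℕ) : RingR 0 0 (r3+1) ≃* (RingR 0 0 r3) × ZMod 2 :=
  (((MulEquiv.refl (Fin 0 → ZMod 8)).prodCongr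
      (((MulEquiv.refl (Fin 0 → ZMod 4)).prodCongr (mulPiFinSucc r3 (ZMod 2))).trans
        ((((MulEquiv.refl (Fin 0 → ZMod 4)).prodCongr MulEquiv.prodComm)).trans
          MulEquiv.prodAssoc.symm))).trans
    MulEquiv.prodAssoc.symm)

instance : Subsingleton (RingR 0 0 0) :=
  ⟨fun a b => by
    obtain ⟨a1, a2, a3⟩ := a
    obtain ⟨b1, b2, b3⟩ := b
    have e : ∀ {γ : Type} (f g : Fin 0 → γ), f = g := fun f g => funext fun i => i.elim0
    rw [e a1 b1, e a2 b2, e a3 b3]⟩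


lemma stepZMod {S : Type} [CommMonoid S] {c : ℕ} (n k : ℕ) (hn : n = 2^k)
    (hk : 1 ≤ k) (hk3 : k ≤ 3) (IH : DavH S c) : DavH (S × ZMod n) (c + k) := by
  have hdvd : ∀ b : ℕ, 2^(k-b) ∣ n := fun b => hn ▸ pow_dvd_pow 2 (Nat.sub_le k b)
  refine step (M := ZMod n) (fun b => (ZMod (2^(k-b)))ˣ)
    (fun b => units_exp2 (k-b) (by omega))
    (fun b hb => units_card (k-b) (by omega))
    (fun b => Units.map (ZMod.castHom (hdvd b) (ZMod (2^(k-b)))).toMonoidHom)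
    ?_ ?_ IH
  · intro b hb B hcard hnon a w hw
    have hw' : ZMod.castHom (hdvd b) (ZMod (2^(k-b))) (w : ZMod n) = 1 := by
      have h2 := congrArg Units.val hw
      simpa using h2
    exact zmod_absorb hn hk hb B hcard hnon a (w : ZMod n) (hdvd b) hw'
  · intro B hcard hnon a w
    exact zmod_absorb_top hn hk B hcard hnon a w

lemma base_dav {S : Type} [CommMonoid S] [Subsingleton S] : DavH S 0 := by
  intro H _ _ hexp h hcard T hT
  obtain ⟨V', hle, hne, hprod⟩ := exists_subset_prod_one hexp h hcard (T.map Prod.snd)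
    (by rw [Multiset.card_map]; omega)
  obtain ⟨W', hW'⟩ := Multiset.le_iff_exists_add.1 hle
  obtain ⟨V, W, hVW, hVg, hWg⟩ := multiset_map_add_split Prod.snd V' W' T hW'
  refine ⟨V, W, hVW, fun h0 => hne (by rw [← hVg, h0]; simp), ?_⟩
  refine Prod.ext (Subsingleton.elim _ _) ?_
  rw [prod_snd W, prod_snd T, hWg, hW', Multiset.prod_add, hprod, one_mul]

lemma key_dav (r1 r2 r3 : ℕ) : DavH (RingR r1 r2 r3) (3*r1 + 2*r2 + r3) := by
  induction r1 with
  | succ m ih =>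
      have h8 : (8:ℕ) = 2^3 := by norm_num
      have := (stepZMod 8 3 h8 (by norm_num) (by norm_num) ih).congr (eqR1 m r2 r3).symm
      exact DavH.of_eq (by ring) this
  | zero =>
    induction r2 with
    | succ m ih =>
        have h4 : (4:ℕ) = 2^2 := by norm_num
        have := (stepZMod 4 2 h4 (by norm_num) (by norm_num) ih).congr (eqR2 m r3).symm
        exact DavH.of_eq (by ring) this
    | zero =>
      induction r3 with
      | succ m ih =>
          have h2 : (2:ℕ) = 2^1 := by norm_num
          have := (stepZMod 2 1 h2 (by norm_num) (by norm_num) ih).congr (eqR3 m).symm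
          exact DavH.of_eq (by ring) this
      | zero => exact base_dav



lemma prod_map_count {α M : Type*} [DecidableEq α] [CommMonoid M] (f : α → M) (x : α) :
    ∀ (U : Multiset α), (∀ y ∈ U, y ≠ x → f y = 1) →
      (U.map f).prod = f x ^ (Multiset.count x U) := by
  intro U
  induction U using Multiset.induction with
  | empty => simp
  | cons a U ih =>
      intro hU
      have hrec := ih (fun y hy hyx => hU y (Multiset.mem_cons_of_mem hy) hyx)
      by_cases ha : a = x
      · subst ha
        rw [Multiset.map_cons, Multiset.prod_cons, hrec, Multiset.count_cons_self, pow_succ]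
        exact mul_comm _ _
      · rw [Multiset.map_cons, Multiset.prod_cons, hU a (Multiset.mem_cons_self a U) ha,
          one_mul, hrec, Multiset.count_cons_of_ne (fun h => ha h.symm)]

lemma prod_map_count2 {α M : Type*} [DecidableEq α] [CommMonoid M] (f : α → M) (x₁ x₂ : α)
    (hne : x₁ ≠ x₂) :
    ∀ (U : Multiset α), (∀ y ∈ U, y ≠ x₁ → y ≠ x₂ → f y = 1) →
      (U.map f).prod = f x₁ ^ (Multiset.count x₁ U) * f x₂ ^ (Multiset.count x₂ U) := by
  intro U
  induction U using Multiset.induction with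
  | empty => simp
  | cons a U ih =>
      intro hU
      have hrec := ih (fun y hy h1 h2 => hU y (Multiset.mem_cons_of_mem hy) h1 h2)
      rw [Multiset.map_cons, Multiset.prod_cons, hrec]
      by_cases h1 : a = x₁
      · subst h1
        rw [Multiset.count_cons_self, Multiset.count_cons_of_ne (fun h => hne h.symm), pow_succ]
        ac_rfl
      · by_cases h2 : a = x₂
        · subst h2
          rw [Multiset.count_cons_of_ne (fun h => h1 h.symm), Multiset.count_cons_self, pow_succ]
          ac_rfl
        · rw [hU a (Multiset.mem_cons_self a U) h1 h2, one_mul,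
            Multiset.count_cons_of_ne (fun h => h1 h.symm),
            Multiset.count_cons_of_ne (fun h => h2 h.symm)]

lemma lt_count_exists {α : Type*} [DecidableEq α] {T' U : Multiset α} (h : T' < U) :
    ∃ x, Multiset.count x T' < Multiset.count x U ∧ x ∈ U := by
  by_contra hc
  push_neg at hc
  apply h.ne
  apply Multiset.ext.2
  intro a
  have h1 := Multiset.count_le_of_le a h.le
  rcases Nat.lt_or_ge (Multiset.count a T') (Multiset.count a U) with hlt | hge
  · exact absurd (Multiset.count_pos.1 (by omega)) (hc a hlt)
  · omega

lemma prods_ne {R M : Type*} [CommMonoid R] [CommMonoid M] [DecidableEq R] (π : R →* M) (x : R)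
    (U T' : Multiset R) (hle : T' ≤ U)
    (hone : ∀ y ∈ U, y ≠ x → π y = 1)
    (hpow : π x ^ (Multiset.count x T') ≠ π x ^ (Multiset.count x U)) : T'.prod ≠ U.prod := by
  intro he
  apply hpow
  have h1 : (T'.map π).prod = (U.map π).prod := by
    rw [Multiset.prod_hom T' π, Multiset.prod_hom U π, he]
  rw [prod_map_count π x T' (fun y hy => hone y (Multiset.mem_of_le hle hy)),
    prod_map_count π x U hone] at h1
  exact h1

section Extremal
variable (r1 r2 r3 : ℕ)

def E1 (j : Fin r1) : RingR r1 r2 r3 := (fun j' => if j' = j then 2 else 1, 1, 1)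
def E2 (j : Fin r2) : RingR r1 r2 r3 := (1, fun j' => if j' = j then 2 else 1, 1)
def E3 (j : Fin r3) : RingR r1 r2 r3 := (1, 1, fun j' => if j' = j then 0 else 1)

def T0 : Multiset (RingR r1 r2 r3) :=
  3 • (Finset.univ.val.map (E1 r1 r2 r3)) + 2 • (Finset.univ.val.map (E2 r1 r2 r3))
    + (Finset.univ.val.map (E3 r1 r2 r3))

lemma T0_card : Multiset.card (T0 r1 r2 r3) = 3*r1 + 2*r2 + r3 := by
  simp [T0]
  try ring

lemma E1_inj : Function.Injective (E1 r1 r2 r3) := by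
  intro j j' h
  by_contra hne
  have h2 := congr_fun (congrArg Prod.fst h) j
  simp [E1] at h2
  replace h2 := h2 (fun hh : j = j' => hne hh)
  exact (by decide : (2:ZMod 8) ≠ 1) h2

lemma E2_inj : Function.Injective (E2 r1 r2 r3) := by
  intro j j' h
  by_contra hne
  have h2 := congr_fun (congrArg (fun z : RingR r1 r2 r3 => z.2.1) h) j
  simp [E2] at h2
  replace h2 := h2 (fun hh : j = j' => hne hh)
  exact (by decide : (2:ZMod 4) ≠ 1) h2

lemma E3_inj : Function.Injective (E3 r1 r2 r3) := by
  intro j j' h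
  by_contra hne
  have h2 := congr_fun (congrArg (fun z : RingR r1 r2 r3 => z.2.2) h) j
  simp [E3] at h2
  exact hne h2

lemma E12_ne (j : Fin r1) (j' : Fin r2) : E1 r1 r2 r3 j ≠ E2 r1 r2 r3 j' := by
  intro h
  have h2 := congr_fun (congrArg (fun z : RingR r1 r2 r3 => z.2.1) h) j'
  simp [E1, E2] at h2
  exact (by decide : (1:ZMod 4) ≠ 2) h2

lemma E13_ne (j : Fin r1) (j' : Fin r3) : E1 r1 r2 r3 j ≠ E3 r1 r2 r3 j' := by
  intro h
  have h2 := congr_fun (congrArg (fun z : RingR r1 r2 r3 => z.2.2) h) j'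
  simp [E1, E3] at h2

lemma E23_ne (j : Fin r2) (j' : Fin r3) : E2 r1 r2 r3 j ≠ E3 r1 r2 r3 j' := by
  intro h
  have h2 := congr_fun (congrArg (fun z : RingR r1 r2 r3 => z.2.2) h) j'
  simp [E2, E3] at h2

lemma count_E1_T0 (j : Fin r1) : Multiset.count (E1 r1 r2 r3 j) (T0 r1 r2 r3) = 3 := by
  rw [T0]
  rw [Multiset.count_add, Multiset.count_add, Multiset.count_nsmul, Multiset.count_nsmul]
  rw [Multiset.count_map_eq_count' _ _ (E1_inj r1 r2 r3) j]
  have h1 : Multiset.count (E1 r1 r2 r3 j) (Finset.univ.val.map (E2 r1 r2 r3)) = 0 := by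
    rw [Multiset.count_eq_zero]
    intro hmem
    obtain ⟨j', _, hj'⟩ := Multiset.mem_map.1 hmem
    exact E12_ne r1 r2 r3 j j' hj'.symm
  have h2 : Multiset.count (E1 r1 r2 r3 j) (Finset.univ.val.map (E3 r1 r2 r3)) = 0 := by
    rw [Multiset.count_eq_zero]
    intro hmem
    obtain ⟨j', _, hj'⟩ := Multiset.mem_map.1 hmem
    exact E13_ne r1 r2 r3 j j' hj'.symm
  rw [h1, h2]
  have : Multiset.count j Finset.univ.val = 1 :=
    Multiset.count_eq_one_of_mem Finset.univ.nodup (Finset.mem_univ j)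
  rw [this]

end Extremal

section Extremal2
variable (r1 r2 r3 : ℕ)

lemma count_E2_T0 (j : Fin r2) : Multiset.count (E2 r1 r2 r3 j) (T0 r1 r2 r3) = 2 := by
  rw [T0, Multiset.count_add, Multiset.count_add, Multiset.count_nsmul, Multiset.count_nsmul,
    Multiset.count_map_eq_count' _ _ (E2_inj r1 r2 r3) j]
  have h1 : Multiset.count (E2 r1 r2 r3 j) (Finset.univ.val.map (E1 r1 r2 r3)) = 0 := by
    rw [Multiset.count_eq_zero]
    intro hmem
    obtain ⟨j', _, hj'⟩ := Multiset.mem_map.1 hmem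
    exact E12_ne r1 r2 r3 j' j hj'
  have h2 : Multiset.count (E2 r1 r2 r3 j) (Finset.univ.val.map (E3 r1 r2 r3)) = 0 := by
    rw [Multiset.count_eq_zero]
    intro hmem
    obtain ⟨j', _, hj'⟩ := Multiset.mem_map.1 hmem
    exact E23_ne r1 r2 r3 j j' hj'.symm
  rw [h1, h2, Multiset.count_eq_one_of_mem Finset.univ.nodup (Finset.mem_univ j)]

lemma count_E3_T0 (j : Fin r3) : Multiset.count (E3 r1 r2 r3 j) (T0 r1 r2 r3) = 1 := by
  rw [T0, Multiset.count_add, Multiset.count_add, Multiset.count_nsmul, Multiset.count_nsmul,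
    Multiset.count_map_eq_count' _ _ (E3_inj r1 r2 r3) j]
  have h1 : Multiset.count (E3 r1 r2 r3 j) (Finset.univ.val.map (E1 r1 r2 r3)) = 0 := by
    rw [Multiset.count_eq_zero]
    intro hmem
    obtain ⟨j', _, hj'⟩ := Multiset.mem_map.1 hmem
    exact E13_ne r1 r2 r3 j' j hj'
  have h2 : Multiset.count (E3 r1 r2 r3 j) (Finset.univ.val.map (E2 r1 r2 r3)) = 0 := by
    rw [Multiset.count_eq_zero]
    intro hmem
    obtain ⟨j', _, hj'⟩ := Multiset.mem_map.1 hmem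
    exact E23_ne r1 r2 r3 j' j hj'
  rw [h1, h2, Multiset.count_eq_one_of_mem Finset.univ.nodup (Finset.mem_univ j)]

lemma mem_T0 (y : RingR r1 r2 r3) (hy : y ∈ T0 r1 r2 r3) :
    (∃ j, y = E1 r1 r2 r3 j) ∨ (∃ j, y = E2 r1 r2 r3 j) ∨ (∃ j, y = E3 r1 r2 r3 j) := by
  rw [T0, Multiset.mem_add, Multiset.mem_add, Multiset.mem_nsmul, Multiset.mem_nsmul] at hy
  rcases hy with (⟨-, h⟩ | ⟨-, h⟩) | h
  · obtain ⟨j, _, hj⟩ := Multiset.mem_map.1 h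
    exact Or.inl ⟨j, hj.symm⟩
  · obtain ⟨j, _, hj⟩ := Multiset.mem_map.1 h
    exact Or.inr (Or.inl ⟨j, hj.symm⟩)
  · obtain ⟨j, _, hj⟩ := Multiset.mem_map.1 h
    exact Or.inr (Or.inr ⟨j, hj.symm⟩)

def P1 (j : Fin r1) : RingR r1 r2 r3 →* ZMod 8 :=
  (Pi.evalMonoidHom _ j).comp (MonoidHom.fst _ _)
def P2 (j : Fin r2) : RingR r1 r2 r3 →* ZMod 4 :=
  (Pi.evalMonoidHom _ j).comp ((MonoidHom.fst _ _).comp (MonoidHom.snd _ _))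
def P3 (j : Fin r3) : RingR r1 r2 r3 →* ZMod 2 :=
  (Pi.evalMonoidHom _ j).comp ((MonoidHom.snd _ _).comp (MonoidHom.snd _ _))

lemma T0_no_proper (U T' : Multiset (RingR r1 r2 r3)) (hU : U ≤ T0 r1 r2 r3)
    (hT' : T' < U) : T'.prod ≠ U.prod := by
  obtain ⟨x, hcnt, hxU⟩ := lt_count_exists hT'
  have hxT0 : x ∈ T0 r1 r2 r3 := Multiset.mem_of_le hU hxU
  have hcle : ∀ z, Multiset.count z U ≤ Multiset.count z (T0 r1 r2 r3) :=
    fun z => Multiset.count_le_of_le z hU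
  rcases mem_T0 r1 r2 r3 x hxT0 with ⟨j, rfl⟩ | ⟨j, rfl⟩ | ⟨j, rfl⟩
  · refine prods_ne (P1 r1 r2 r3 j) (E1 r1 r2 r3 j) U T' hT'.le ?_ ?_
    · intro y hy hne
      rcases mem_T0 r1 r2 r3 y (Multiset.mem_of_le hU hy) with ⟨j', rfl⟩ | ⟨j', rfl⟩ | ⟨j', rfl⟩
      · have hjj : j ≠ j' := fun h => hne (by rw [h])
        simp [P1, E1, hjj]
      · simp [P1, E2]
      · simp [P1, E3]
    · have hv : P1 r1 r2 r3 j (E1 r1 r2 r3 j) = 2 := by simp [P1, E1]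
      rw [hv]
      have h3 := hcle (E1 r1 r2 r3 j)
      rw [count_E1_T0] at h3
      have : ∀ c ≤ 3, ∀ c' < c, (2:ZMod 8)^c' ≠ (2:ZMod 8)^c := by
        intro c hc c' hc'
        interval_cases c <;> interval_cases c' <;> decide
      exact this _ h3 _ hcnt
  · refine prods_ne (P2 r1 r2 r3 j) (E2 r1 r2 r3 j) U T' hT'.le ?_ ?_
    · intro y hy hne
      rcases mem_T0 r1 r2 r3 y (Multiset.mem_of_le hU hy) with ⟨j', rfl⟩ | ⟨j', rfl⟩ | ⟨j', rfl⟩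
      · simp [P2, E1]
      · have hjj : j ≠ j' := fun h => hne (by rw [h])
        simp [P2, E2, hjj]
      · simp [P2, E3]
    · have hv : P2 r1 r2 r3 j (E2 r1 r2 r3 j) = 2 := by simp [P2, E2]
      rw [hv]
      have h3 := hcle (E2 r1 r2 r3 j)
      rw [count_E2_T0] at h3
      have : ∀ c ≤ 2, ∀ c' < c, (2:ZMod 4)^c' ≠ (2:ZMod 4)^c := by
        intro c hc c' hc'
        interval_cases c <;> interval_cases c' <;> decide
      exact this _ h3 _ hcnt
  · refine prods_ne (P3 r1 r2 r3 j) (E3 r1 r2 r3 j) U T' hT'.le ?_ ?_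
    · intro y hy hne
      rcases mem_T0 r1 r2 r3 y (Multiset.mem_of_le hU hy) with ⟨j', rfl⟩ | ⟨j', rfl⟩ | ⟨j', rfl⟩
      · simp [P3, E1]
      · simp [P3, E2]
      · have hjj : j ≠ j' := fun h => hne (by rw [h])
        simp [P3, E3, hjj]
    · have hv : P3 r1 r2 r3 j (E3 r1 r2 r3 j) = 0 := by simp [P3, E3]
      rw [hv]
      have h3 := hcle (E3 r1 r2 r3 j)
      rw [count_E3_T0] at h3
      have : ∀ c ≤ 1, ∀ c' < c, (0:ZMod 2)^c' ≠ (0:ZMod 2)^c := by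
        intro c hc c' hc'
        interval_cases c <;> interval_cases c' <;> decide
      exact this _ h3 _ hcnt

end Extremal2



section UnitsSide
variable (r1 r2 r3 : ℕ)

lemma ring_sq (x y : RingR r1 r2 r3) (h : x * y = 1) : x * x = 1 := by
  have l8 : ∀ a b : ZMod 8, a * b = 1 → a * a = 1 := by decide
  have l4 : ∀ a b : ZMod 4, a * b = 1 → a * a = 1 := by decide
  have l2 : ∀ a b : ZMod 2, a * b = 1 → a * a = 1 := by decide
  obtain ⟨x1, x2, x3⟩ := x; obtain ⟨y1, y2, y3⟩ := y
  simp only [Prod.mk_mul_mk, Prod.mk_eq_one] at h ⊢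
  obtain ⟨h1, h2, h3⟩ := h
  refine ⟨funext fun i => ?_, funext fun i => ?_, funext fun i => ?_⟩
  · exact l8 (x1 i) (y1 i) (congr_fun h1 i)
  · exact l4 (x2 i) (y2 i) (congr_fun h2 i)
  · exact l2 (x3 i) (y3 i) (congr_fun h3 i)

lemma units_sq : ∀ u : (RingR r1 r2 r3)ˣ, u * u = 1 := fun u =>
  Units.ext (ring_sq r1 r2 r3 (u : RingR r1 r2 r3) ((u⁻¹ : (RingR r1 r2 r3)ˣ) : RingR r1 r2 r3)
    u.mul_inv)

def unitsPiEquiv {ι : Type} (Mi : ι → Type) [∀ i, Monoid (Mi i)] :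
    (∀ i, Mi i)ˣ ≃ ∀ i, (Mi i)ˣ where
  toFun u i := ⟨u.val i, u.inv i, congr_fun u.val_inv i, congr_fun u.inv_val i⟩
  invFun f := ⟨fun i => ((f i : (Mi i)ˣ) : Mi i), fun i => (((f i)⁻¹ : (Mi i)ˣ) : Mi i),
    funext fun i => (f i).mul_inv, funext fun i => (f i).inv_mul⟩
  left_inv u := Units.ext rfl
  right_inv f := funext fun i => Units.ext rfl

lemma card_units_le :
    Fintype.card ((RingR r1 r2 r3)ˣ) ≤ 2^(2*r1 + r2) := by
  have e : ((RingR r1 r2 r3)ˣ) ≃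
      ((Fin r1 → (ZMod 8)ˣ) × ((Fin r2 → (ZMod 4)ˣ) × (Fin r3 → (ZMod 2)ˣ))) :=
    (MulEquiv.prodUnits.toEquiv).trans
      ((unitsPiEquiv _).prodCongr ((MulEquiv.prodUnits.toEquiv).trans
        ((unitsPiEquiv _).prodCongr (unitsPiEquiv _))))
  rw [Fintype.card_congr e]
  rw [Fintype.card_prod, Fintype.card_prod, Fintype.card_fun, Fintype.card_fun,
    Fintype.card_fun]
  have c8 : Fintype.card (ZMod 8)ˣ = 4 := by decide
  have c4 : Fintype.card (ZMod 4)ˣ = 2 := by decide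
  have c2 : Fintype.card (ZMod 2)ˣ = 1 := by decide
  rw [c8, c4, c2, Fintype.card_fin, Fintype.card_fin, Fintype.card_fin, one_pow, mul_one,
    show (4:ℕ) = 2^2 by norm_num, ← pow_mul, ← pow_add]

end UnitsSide

section UnitsExtremal
variable (r1 r2 r3 : ℕ)

def uval3 (j : Fin r1) : RingR r1 r2 r3 := (fun j' => if j' = j then 3 else 1, 1, 1)
def uval5 (j : Fin r1) : RingR r1 r2 r3 := (fun j' => if j' = j then 5 else 1, 1, 1)
def vval3 (j : Fin r2) : RingR r1 r2 r3 := (1, fun j' => if j' = j then 3 else 1, 1)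

lemma uval3_sq (j : Fin r1) : uval3 r1 r2 r3 j * uval3 r1 r2 r3 j = 1 := by
  simp only [uval3, Prod.mk_mul_mk, Prod.mk_eq_one]
  refine ⟨funext fun i => ?_, one_mul 1, one_mul 1⟩
  show (if i = j then (3:ZMod 8) else 1) * (if i = j then 3 else 1) = 1
  split_ifs <;> decide

lemma uval5_sq (j : Fin r1) : uval5 r1 r2 r3 j * uval5 r1 r2 r3 j = 1 := by
  simp only [uval5, Prod.mk_mul_mk, Prod.mk_eq_one]
  refine ⟨funext fun i => ?_, one_mul 1, one_mul 1⟩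
  show (if i = j then (5:ZMod 8) else 1) * (if i = j then 5 else 1) = 1
  split_ifs <;> decide

lemma vval3_sq (j : Fin r2) : vval3 r1 r2 r3 j * vval3 r1 r2 r3 j = 1 := by
  simp only [vval3, Prod.mk_mul_mk, Prod.mk_eq_one]
  refine ⟨one_mul 1, funext fun i => ?_, one_mul 1⟩
  show (if i = j then (3:ZMod 4) else 1) * (if i = j then 3 else 1) = 1
  split_ifs <;> decide

def U3 (j : Fin r1) : (RingR r1 r2 r3)ˣ :=
  ⟨uval3 r1 r2 r3 j, uval3 r1 r2 r3 j, uval3_sq r1 r2 r3 j, uval3_sq r1 r2 r3 j⟩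
def U5 (j : Fin r1) : (RingR r1 r2 r3)ˣ :=
  ⟨uval5 r1 r2 r3 j, uval5 r1 r2 r3 j, uval5_sq r1 r2 r3 j, uval5_sq r1 r2 r3 j⟩
def V3 (j : Fin r2) : (RingR r1 r2 r3)ˣ :=
  ⟨vval3 r1 r2 r3 j, vval3 r1 r2 r3 j, vval3_sq r1 r2 r3 j, vval3_sq r1 r2 r3 j⟩

def G0 : Multiset ((RingR r1 r2 r3)ˣ) :=
  (Finset.univ.val.map (U3 r1 r2 r3)) + (Finset.univ.val.map (U5 r1 r2 r3))
    + (Finset.univ.val.map (V3 r1 r2 r3))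

lemma G0_card : Multiset.card (G0 r1 r2 r3) = 2*r1 + r2 := by
  simp [G0]
  try ring

lemma U3_inj : Function.Injective (U3 r1 r2 r3) := by
  intro j j' h
  rw [Units.ext_iff] at h
  by_contra hne
  have h2 := congr_fun (congrArg (fun z : RingR r1 r2 r3 => z.1) h) j
  simp [U3, uval3] at h2
  replace h2 := h2 (fun hh : j = j' => hne hh)
  exact (by decide : (3:ZMod 8) ≠ 1) h2

lemma U5_inj : Function.Injective (U5 r1 r2 r3) := by
  intro j j' h
  rw [Units.ext_iff] at h
  by_contra hne
  have h2 := congr_fun (congrArg (fun z : RingR r1 r2 r3 => z.1) h) j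
  simp [U5, uval5] at h2
  replace h2 := h2 (fun hh : j = j' => hne hh)
  exact (by decide : (5:ZMod 8) ≠ 1) h2

lemma V3_inj : Function.Injective (V3 r1 r2 r3) := by
  intro j j' h
  rw [Units.ext_iff] at h
  by_contra hne
  have h2 := congr_fun (congrArg (fun z : RingR r1 r2 r3 => z.2.1) h) j
  simp [V3, vval3] at h2
  replace h2 := h2 (fun hh : j = j' => hne hh)
  exact (by decide : (3:ZMod 4) ≠ 1) h2

lemma U35_ne (j j' : Fin r1) : U3 r1 r2 r3 j ≠ U5 r1 r2 r3 j' := by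
  intro h
  rw [Units.ext_iff] at h
  have h2 := congr_fun (congrArg (fun z : RingR r1 r2 r3 => z.1) h) j'
  simp [U3, U5, uval3, uval5] at h2
  by_cases hj : j' = j
  · rw [if_pos hj] at h2
    exact (by decide : (3:ZMod 8) ≠ 5) h2
  · rw [if_neg hj] at h2
    exact (by decide : (1:ZMod 8) ≠ 5) h2

lemma U3V_ne (j : Fin r1) (j' : Fin r2) : U3 r1 r2 r3 j ≠ V3 r1 r2 r3 j' := by
  intro h
  rw [Units.ext_iff] at h
  have h2 := congr_fun (congrArg (fun z : RingR r1 r2 r3 => z.2.1) h) j'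
  simp [U3, V3, uval3, vval3] at h2
  exact (by decide : (1:ZMod 4) ≠ 3) h2

lemma U5V_ne (j : Fin r1) (j' : Fin r2) : U5 r1 r2 r3 j ≠ V3 r1 r2 r3 j' := by
  intro h
  rw [Units.ext_iff] at h
  have h2 := congr_fun (congrArg (fun z : RingR r1 r2 r3 => z.2.1) h) j'
  simp [U5, V3, uval5, vval3] at h2
  exact (by decide : (1:ZMod 4) ≠ 3) h2

lemma count_U3_G0 (j : Fin r1) : Multiset.count (U3 r1 r2 r3 j) (G0 r1 r2 r3) = 1 := by
  rw [G0, Multiset.count_add, Multiset.count_add,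
    Multiset.count_map_eq_count' _ _ (U3_inj r1 r2 r3) j]
  have h1 : Multiset.count (U3 r1 r2 r3 j) (Finset.univ.val.map (U5 r1 r2 r3)) = 0 := by
    rw [Multiset.count_eq_zero]
    intro hmem
    obtain ⟨j', _, hj'⟩ := Multiset.mem_map.1 hmem
    exact U35_ne r1 r2 r3 j j' hj'.symm
  have h2 : Multiset.count (U3 r1 r2 r3 j) (Finset.univ.val.map (V3 r1 r2 r3)) = 0 := by
    rw [Multiset.count_eq_zero]
    intro hmem
    obtain ⟨j', _, hj'⟩ := Multiset.mem_map.1 hmem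
    exact U3V_ne r1 r2 r3 j j' hj'.symm
  rw [h1, h2, Multiset.count_eq_one_of_mem Finset.univ.nodup (Finset.mem_univ j)]

lemma count_U5_G0 (j : Fin r1) : Multiset.count (U5 r1 r2 r3 j) (G0 r1 r2 r3) = 1 := by
  rw [G0, Multiset.count_add, Multiset.count_add,
    Multiset.count_map_eq_count' _ _ (U5_inj r1 r2 r3) j]
  have h1 : Multiset.count (U5 r1 r2 r3 j) (Finset.univ.val.map (U3 r1 r2 r3)) = 0 := by
    rw [Multiset.count_eq_zero]
    intro hmem
    obtain ⟨j', _, hj'⟩ := Multiset.mem_map.1 hmem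
    exact U35_ne r1 r2 r3 j' j hj'
  have h2 : Multiset.count (U5 r1 r2 r3 j) (Finset.univ.val.map (V3 r1 r2 r3)) = 0 := by
    rw [Multiset.count_eq_zero]
    intro hmem
    obtain ⟨j', _, hj'⟩ := Multiset.mem_map.1 hmem
    exact U5V_ne r1 r2 r3 j j' hj'.symm
  rw [h1, h2, Multiset.count_eq_one_of_mem Finset.univ.nodup (Finset.mem_univ j)]

lemma count_V3_G0 (j : Fin r2) : Multiset.count (V3 r1 r2 r3 j) (G0 r1 r2 r3) = 1 := by
  rw [G0, Multiset.count_add, Multiset.count_add,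
    Multiset.count_map_eq_count' _ _ (V3_inj r1 r2 r3) j]
  have h1 : Multiset.count (V3 r1 r2 r3 j) (Finset.univ.val.map (U3 r1 r2 r3)) = 0 := by
    rw [Multiset.count_eq_zero]
    intro hmem
    obtain ⟨j', _, hj'⟩ := Multiset.mem_map.1 hmem
    exact U3V_ne r1 r2 r3 j' j hj'
  have h2 : Multiset.count (V3 r1 r2 r3 j) (Finset.univ.val.map (U5 r1 r2 r3)) = 0 := by
    rw [Multiset.count_eq_zero]
    intro hmem
    obtain ⟨j', _, hj'⟩ := Multiset.mem_map.1 hmem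
    exact U5V_ne r1 r2 r3 j' j hj'
  rw [h1, h2, Multiset.count_eq_one_of_mem Finset.univ.nodup (Finset.mem_univ j)]

lemma mem_G0 (y : (RingR r1 r2 r3)ˣ) (hy : y ∈ G0 r1 r2 r3) :
    (∃ j, y = U3 r1 r2 r3 j) ∨ (∃ j, y = U5 r1 r2 r3 j) ∨ (∃ j, y = V3 r1 r2 r3 j) := by
  rw [G0, Multiset.mem_add, Multiset.mem_add] at hy
  rcases hy with (h | h) | h
  · obtain ⟨j, _, hj⟩ := Multiset.mem_map.1 h
    exact Or.inl ⟨j, hj.symm⟩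
  · obtain ⟨j, _, hj⟩ := Multiset.mem_map.1 h
    exact Or.inr (Or.inl ⟨j, hj.symm⟩)
  · obtain ⟨j, _, hj⟩ := Multiset.mem_map.1 h
    exact Or.inr (Or.inr ⟨j, hj.symm⟩)

end UnitsExtremal



section Final
variable (r1 r2 r3 : ℕ)

def Q1 (j : Fin r1) : (RingR r1 r2 r3)ˣ →* ZMod 8 :=
  (P1 r1 r2 r3 j).comp (Units.coeHom _)
def Q2 (j : Fin r2) : (RingR r1 r2 r3)ˣ →* ZMod 4 :=
  (P2 r1 r2 r3 j).comp (Units.coeHom _)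

lemma G0_no_one (U V : Multiset ((RingR r1 r2 r3)ˣ)) (hU : U ≤ G0 r1 r2 r3)
    (hV : V ≤ U) (hV0 : V ≠ 0) : V.prod ≠ 1 := by
  obtain ⟨x, hx⟩ := Multiset.exists_mem_of_ne_zero hV0
  have hVG : V ≤ G0 r1 r2 r3 := le_trans hV hU
  have hxG0 : x ∈ G0 r1 r2 r3 := Multiset.mem_of_le hVG hx
  have hcle : ∀ z, Multiset.count z V ≤ Multiset.count z (G0 r1 r2 r3) :=
    fun z => Multiset.count_le_of_le z hVG
  intro hprod
  have hmem8 : ∀ (j : Fin r1), (∀ y ∈ V, y ≠ U3 r1 r2 r3 j → y ≠ U5 r1 r2 r3 j →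
      Q1 r1 r2 r3 j y = 1) := by
    intro j y hy h1 h2
    rcases mem_G0 r1 r2 r3 y (Multiset.mem_of_le hVG hy) with ⟨j', rfl⟩ | ⟨j', rfl⟩ | ⟨j', rfl⟩
    · have hjj : j ≠ j' := fun hh => h1 (by rw [hh])
      simp [Q1, P1, U3, uval3, hjj]
    · have hjj : j ≠ j' := fun hh => h2 (by rw [hh])
      simp [Q1, P1, U5, uval5, hjj]
    · simp [Q1, P1, V3, vval3]
  rcases mem_G0 r1 r2 r3 x hxG0 with ⟨j, rfl⟩ | ⟨j, rfl⟩ | ⟨j, rfl⟩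
  · have h1 : (V.map ⇑(Q1 r1 r2 r3 j)).prod = 1 := by
      rw [Multiset.prod_hom V (Q1 r1 r2 r3 j), hprod, map_one]
    rw [prod_map_count2 _ _ _ (U35_ne r1 r2 r3 j j) V (hmem8 j)] at h1
    have hc1 : Multiset.count (U3 r1 r2 r3 j) V = 1 :=
      le_antisymm (by have := hcle (U3 r1 r2 r3 j); rwa [count_U3_G0] at this)
        (Multiset.count_pos.2 hx)
    have hc2 : Multiset.count (U5 r1 r2 r3 j) V ≤ 1 := by
      have := hcle (U5 r1 r2 r3 j); rwa [count_U5_G0] at this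
    have hv3 : Q1 r1 r2 r3 j (U3 r1 r2 r3 j) = 3 := by simp [Q1, P1, U3, uval3]
    have hv5 : Q1 r1 r2 r3 j (U5 r1 r2 r3 j) = 5 := by simp [Q1, P1, U5, uval5]
    rw [hc1, hv3, hv5] at h1
    have hdec : ∀ c ≤ 1, (3:ZMod 8)^1 * (5:ZMod 8)^c ≠ 1 := by
      intro c hc; interval_cases c <;> decide
    exact hdec _ hc2 h1
  · have h1 : (V.map ⇑(Q1 r1 r2 r3 j)).prod = 1 := by
      rw [Multiset.prod_hom V (Q1 r1 r2 r3 j), hprod, map_one]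
    rw [prod_map_count2 _ _ _ (U35_ne r1 r2 r3 j j) V (hmem8 j)] at h1
    have hc2 : Multiset.count (U5 r1 r2 r3 j) V = 1 :=
      le_antisymm (by have := hcle (U5 r1 r2 r3 j); rwa [count_U5_G0] at this)
        (Multiset.count_pos.2 hx)
    have hc1 : Multiset.count (U3 r1 r2 r3 j) V ≤ 1 := by
      have := hcle (U3 r1 r2 r3 j); rwa [count_U3_G0] at this
    have hv3 : Q1 r1 r2 r3 j (U3 r1 r2 r3 j) = 3 := by simp [Q1, P1, U3, uval3]
    have hv5 : Q1 r1 r2 r3 j (U5 r1 r2 r3 j) = 5 := by simp [Q1, P1, U5, uval5]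
    rw [hc2, hv3, hv5] at h1
    have hdec : ∀ c ≤ 1, (3:ZMod 8)^c * (5:ZMod 8)^1 ≠ 1 := by
      intro c hc; interval_cases c <;> decide
    exact hdec _ hc1 h1
  · have h1 : (V.map ⇑(Q2 r1 r2 r3 j)).prod = 1 := by
      rw [Multiset.prod_hom V (Q2 r1 r2 r3 j), hprod, map_one]
    have hone : ∀ y ∈ V, y ≠ V3 r1 r2 r3 j → Q2 r1 r2 r3 j y = 1 := by
      intro y hy h2
      rcases mem_G0 r1 r2 r3 y (Multiset.mem_of_le hVG hy) with ⟨j', rfl⟩ | ⟨j', rfl⟩ | ⟨j', rfl⟩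
      · simp [Q2, P2, U3, uval3]
      · simp [Q2, P2, U5, uval5]
      · have hjj : j ≠ j' := fun hh => h2 (by rw [hh])
        simp [Q2, P2, V3, vval3, hjj]
    rw [prod_map_count _ _ V hone] at h1
    have hc1 : Multiset.count (V3 r1 r2 r3 j) V = 1 :=
      le_antisymm (by have := hcle (V3 r1 r2 r3 j); rwa [count_V3_G0] at this)
        (Multiset.count_pos.2 hx)
    have hv3 : Q2 r1 r2 r3 j (V3 r1 r2 r3 j) = 3 := by simp [Q2, P2, V3, vval3]
    rw [hc1, hv3] at h1
    exact (by decide : (3:ZMod 4)^1 ≠ 1) h1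

lemma Dav.of_eq {S : Type} [CommMonoid S] {c c' : ℕ} (h : c = c') (hS : Dav S c) :
    Dav S c' := h ▸ hS

lemma dav_ring : Dav (RingR r1 r2 r3) (3*r1 + 2*r2 + r3) := by
  have hpe : ∀ x : PUnit.{1}, x * x = 1 := fun x => rfl
  have h := key_dav r1 r2 r3 PUnit hpe 0 (by simp)
  exact Dav.of_eq (by omega) (Dav.congr (MulEquiv.prodUnique) h)

theorem davM_eval : DavenportM (RingR r1 r2 r3) = 3*r1 + 2*r2 + r3 + 1 := by
  have hmem : (3*r1 + 2*r2 + r3 + 1) ∈ {ℓ : ℕ | 0 < ℓ ∧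
      ∀ T : Multiset (RingR r1 r2 r3), Multiset.card T = ℓ →
        ∃ T' : Multiset (RingR r1 r2 r3), T' < T ∧ T'.prod = T.prod} := by
    refine ⟨by omega, fun T hT => ?_⟩
    obtain ⟨V, W, hsplit, hV, hW⟩ := dav_ring r1 r2 r3 T (by omega)
    refine ⟨W, ?_, hW⟩
    have hle : W ≤ T := Multiset.le_iff_exists_add.2 ⟨V, by rw [hsplit, add_comm]⟩
    refine lt_of_le_of_ne hle (fun heq => hV ?_)
    have hc := congrArg Multiset.card hsplit
    rw [Multiset.card_add, heq] at hc
    rw [← Multiset.card_eq_zero]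
    omega
  rw [DavenportM]
  apply le_antisymm (Nat.sInf_le hmem)
  refine le_csInf ⟨_, hmem⟩ ?_
  intro ℓ hℓ
  by_contra hlt
  push_neg at hlt
  obtain ⟨U, hUle, hUcard⟩ := multiset_exists_le_card (T0 r1 r2 r3) ℓ
    (by rw [T0_card]; omega)
  obtain ⟨T', hT'lt, hT'prod⟩ := hℓ.2 U hUcard
  exact T0_no_proper r1 r2 r3 U T' hUle hT'lt hT'prod

theorem davG_eval : DavenportG ((RingR r1 r2 r3)ˣ) = 2*r1 + r2 + 1 := by
  have hmem : (2*r1 + r2 + 1) ∈ {ℓ : ℕ | 0 < ℓ ∧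
      ∀ T : Multiset ((RingR r1 r2 r3)ˣ), Multiset.card T = ℓ →
        ∃ T' : Multiset ((RingR r1 r2 r3)ˣ), T' ≤ T ∧ T' ≠ 0 ∧ T'.prod = 1} := by
    refine ⟨by omega, fun T hT => ?_⟩
    exact exists_subset_prod_one (units_sq r1 r2 r3) (2*r1 + r2)
      (card_units_le r1 r2 r3) T (by omega)
  rw [DavenportG]
  apply le_antisymm (Nat.sInf_le hmem)
  refine le_csInf ⟨_, hmem⟩ ?_
  intro ℓ hℓ
  by_contra hlt
  push_neg at hlt
  obtain ⟨U, hUle, hUcard⟩ := multiset_exists_le_card (G0 r1 r2 r3) ℓ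
    (by rw [G0_card]; omega)
  obtain ⟨T', hT'le, hT'ne, hT'prod⟩ := hℓ.2 U hUcard
  exact G0_no_one r1 r2 r3 U T' hUle hT'le hT'ne hT'prod

end Final


theorem davenport_eq_units_add_delta_Z8Z4Z2
    (r₁ r₂ r₃ : ℕ) (h : 0 < r₁ + r₂ + r₃) :
    DavenportM (RingR r₁ r₂ r₃)
      = DavenportG (RingR r₁ r₂ r₃)ˣ + (r₁ + r₂ + r₃) := by
  rw [davM_eval, davG_eval]
  omega
end

section
/- Let S be a finite commutative monoid, let T be a multiset of elements of S, and let V be a sub-multiset of T of minimal cardinality subject to the condition that the product of V and the product of T are Green's H-equivalent (each divides the other in S). Then for any enumeration a_1, …, a_t of V, the chain of partial products is strictly decreasing in Green's preorder: for each i ∈ [0, t−1], the partial product a_1⋯a_i divides a_1⋯a_{i+1} in S, but a_1⋯a_{i+1} does not divide a_1⋯a_i (where the empty product is the identity). -/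
theorem green_chain_of_minimal_H_equivalent_submultiset
    (S : Type*) [CommMonoid S] [Finite S]
    (T V : Multiset S) (hVT : V ≤ T)
    (hH : V.prod ∣ T.prod ∧ T.prod ∣ V.prod)
    (hmin : ∀ V' : Multiset S, V' ≤ T → (V'.prod ∣ T.prod ∧ T.prod ∣ V'.prod) →
      Multiset.card V ≤ Multiset.card V')
    (L : List S) (hL : (L : Multiset S) = V) :
    ∀ i < L.length,
      (L.take i).prod ∣ (L.take (i + 1)).prod
        ∧ ¬ (L.take (i + 1)).prod ∣ (L.take i).prod := by
  intro i hi
  have ht : L.take (i + 1) = L.take i ++ [L.get ⟨i, hi⟩] := by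
    rw [List.take_succ, List.getElem?_eq_getElem hi]
    rfl
  set a := L.get ⟨i, hi⟩ with ha
  have htp : (L.take (i + 1)).prod = (L.take i).prod * a := by
    rw [ht, List.prod_append, List.prod_singleton]
  constructor
  · rw [htp]; exact Dvd.intro _ rfl
  · intro hdvd
    obtain ⟨c, hc⟩ := hdvd
    set V' : Multiset S := ↑(L.take i ++ L.drop (i + 1)) with hV'
    have hVsplit : V = V' + {a} := by
      have hperm : (L : Multiset S) = ↑((L.take i ++ L.drop (i + 1)) ++ [a]) := by
        rw [Multiset.coe_eq_coe]
        conv_lhs => rw [← List.take_append_drop (i + 1) L, ht]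
        rw [List.append_assoc, List.append_assoc]
        exact List.Perm.append_left _ List.perm_append_comm
      rw [← hL, hperm, ← Multiset.coe_add, hV']
      rfl
    have hV'le : V' ≤ V := by
      rw [hVsplit]; exact Multiset.le_add_right _ _
    have hV'prod : V'.prod = V.prod * c := by
      have h1 : V.prod = (L.take i).prod * a * (L.drop (i + 1)).prod := by
        rw [← hL]
        conv_lhs => rw [← List.take_append_drop (i + 1) L, ht]
        simp [List.prod_append, mul_assoc]
      have h2 : V'.prod = (L.take i).prod * (L.drop (i + 1)).prod := by
        simp [hV', List.prod_append]
      rw [h2, hc, htp, h1]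
      ac_rfl
    have hdv1 : V'.prod ∣ T.prod := by
      have : V'.prod ∣ V.prod := by
        rw [hVsplit]; simp [Multiset.prod_add]
      exact this.trans hH.1
    have hdv2 : T.prod ∣ V'.prod := by
      rw [hV'prod]; exact Dvd.dvd.mul_right hH.2 c
    have hcard := hmin V' (hV'le.trans hVT) ⟨hdv1, hdv2⟩
    have : Multiset.card V = Multiset.card V' + 1 := by
      rw [hVsplit]; simp
    omega
end

section
/- Let r ≥ 1 and n_1, …, n_r > 1 be integers and let R = ℤ_{n_1} ⊕ ⋯ ⊕ ℤ_{n_r} with multiplicative monoid S_R. Let a_1, …, a_t ∈ R be such that the partial products form a strictly decreasing chain in Green's preorder: for each i ∈ [0, t−1], a_1⋯a_i divides a_1⋯a_{i+1} in S_R but not conversely (the empty product being 1). For i ∈ [0, t], let K_i = St(a_1⋯a_i) = {u ∈ Rˣ : u·(a_1⋯a_i) = a_1⋯a_i}. Then the number of indices i ∈ [0, t−1] with K_i = K_{i+1} is at most δ = #{j ∈ [1,r] : 2 ∣ n_j}; equivalently, there is a subset M ⊆ [0, t−1] with |M| ≥ t − δ such that K_i ⊊ K_{i+1} for each i ∈ M.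 -/
lemma core_construct (n ma mb : ℕ) (hn : 1 < n) (han : ma ∣ n) (hba : mb ∣ ma)
    (hne : ma ≠ mb) (hpar : Odd ma ∨ 2 ∣ mb) :
    ∃ s : ℕ, Nat.Coprime (1 + s) n ∧ mb ∣ s ∧ ¬ ma ∣ s := by
  have hn0 : n ≠ 0 := by omega
  have hma0 : ma ≠ 0 := fun h => hn0 (by simpa [h] using han)
  have hmb0 : mb ≠ 0 := fun h => by simp [h] at hba; exact hma0 hba
  have hnot : ¬ ma ∣ mb := fun h => hne (Nat.dvd_antisymm h hba)
  have hfle : ¬ ma.factorization ≤ mb.factorization := by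
    rw [Nat.factorization_le_iff_dvd hma0 hmb0]; exact hnot
  rw [Finsupp.le_iff] at hfle
  push_neg at hfle
  obtain ⟨p, hpsupp, hgap⟩ := hfle
  have hp : p.Prime := Nat.prime_of_mem_primeFactors (by
    simpa [Nat.support_factorization] using hpsupp)
  set α := mb.factorization p with hα
  set β := ma.factorization p with hβ
  have hαβ : α < β := hgap
  have hpma : p ∣ ma := dvd_trans (dvd_pow_self p (by omega : β ≠ 0)) (Nat.ordProj_dvd ma p)
  have hp2 : p = 2 → 1 ≤ α := by
    intro hp2'
    subst hp2'
    rcases hpar with hodd | h2mb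
    · rw [Nat.odd_iff] at hodd
      omega
    · have := (Nat.Prime.factorization_pos_of_dvd Nat.prime_two hmb0 h2mb)
      omega
  set c := p ^ α * (n / p ^ n.factorization p) with hc
  have hpc : ¬ p ∣ (n / p ^ n.factorization p) := Nat.not_dvd_ordCompl hp hn0
  set t := if p ∣ 1 + c then 2 else 1 with ht
  have hpt : ¬ p ∣ t := by
    rw [ht]
    split
    · rename_i hdc
      intro hp2d
      have hpe : p = 2 := (Nat.prime_dvd_prime_iff_eq hp Nat.prime_two).mp hp2d
      have h1α : 1 ≤ α := hp2 hpe
      have hdvdc : p ∣ c := dvd_mul_of_dvd_left (dvd_pow_self p (by omega)) _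
      have := Nat.dvd_sub hdc hdvdc
      have he : 1 + c - c = 1 := by omega
      rw [he] at this
      exact hp.one_lt.ne' (Nat.eq_one_of_dvd_one this)
    · exact fun h => hp.one_lt.ne' (Nat.eq_one_of_dvd_one h)
  refine ⟨c * t, ?_, ?_, ?_⟩
  · -- coprimality
    by_contra hg
    rw [Nat.Prime.not_coprime_iff_dvd] at hg
    obtain ⟨q, hq, hq1, hqn⟩ := hg
    by_cases hqp : q = p
    · rw [hqp] at hq1 hqn
      by_cases hdc : p ∣ 1 + c
      · have ht2 : t = 2 := by rw [ht, if_pos hdc]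
        rw [ht2] at hq1
        have hd : p ∣ c := by
          have := Nat.dvd_sub hq1 hdc
          have he : 1 + c * 2 - (1 + c) = c := by omega
          rwa [he] at this
        have := Nat.dvd_sub hdc hd
        have he : 1 + c - c = 1 := by omega
        rw [he] at this
        exact hp.one_lt.ne' (Nat.eq_one_of_dvd_one this)
      · have ht1 : t = 1 := by rw [ht, if_neg hdc]
        rw [ht1, Nat.mul_one] at hq1
        exact hdc hq1
    · have hqoc : q ∣ n / p ^ n.factorization p := by
        have h1 : q ∣ p ^ n.factorization p * (n / p ^ n.factorization p) := by
          rwa [Nat.ordProj_mul_ordCompl_eq_self]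
        rcases (Nat.Prime.dvd_mul hq).mp h1 with h | h
        · exact absurd ((Nat.prime_dvd_prime_iff_eq hq hp).mp (hq.dvd_of_dvd_pow h)) hqp
        · exact h
      have hqct : q ∣ c * t := dvd_mul_of_dvd_left (dvd_mul_of_dvd_right hqoc _) _
      have := Nat.dvd_sub hq1 hqct
      have he : 1 + c * t - c * t = 1 := by omega
      rw [he] at this
      exact hq.one_lt.ne' (Nat.eq_one_of_dvd_one this)
  · -- mb ∣ c * t
    have h1 : mb = p ^ α * (mb / p ^ α) := (Nat.ordProj_mul_ordCompl_eq_self mb p).symm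
    have h2 : mb / p ^ α ∣ n / p ^ n.factorization p :=
      Nat.ordCompl_dvd_ordCompl_of_dvd (hba.trans han) p
    calc mb ∣ p ^ α * (n / p ^ n.factorization p) := by
          conv_lhs => rw [h1]
          exact Nat.mul_dvd_mul_left _ h2
      _ ∣ c * t := Dvd.dvd.mul_right dvd_rfl t
  · -- ¬ ma ∣ c * t
    intro hdvd
    have hsucc : p ^ (α + 1) ∣ c * t :=
      calc p ^ (α + 1) ∣ p ^ β := pow_dvd_pow p hαβ
        _ ∣ ma := Nat.ordProj_dvd ma p
        _ ∣ c * t := hdvd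
    rw [hc, pow_succ, mul_assoc] at hsucc
    have := (mul_dvd_mul_iff_left (pow_ne_zero α hp.pos.ne')).mp hsucc
    rcases (Nat.Prime.dvd_mul hp).mp this with h | h
    · exact hpc h
    · exact hpt h

section ZModPart
variable {n : ℕ} [NeZero n]

lemma gcd_dvd_of_dvd {a b : ZMod n} (h : a ∣ b) :
    Nat.gcd a.val n ∣ Nat.gcd b.val n := by
  obtain ⟨c, rfl⟩ := h
  apply Nat.dvd_gcd _ (Nat.gcd_dvd_right _ _)
  rw [ZMod.val_mul]
  rw [Nat.dvd_mod_iff (Nat.gcd_dvd_right _ _)]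
  exact Dvd.dvd.mul_right (Nat.gcd_dvd_left _ _) _

lemma self_dvd_gcd (a : ZMod n) : a ∣ ((Nat.gcd a.val n : ℕ) : ZMod n) := by
  have hb := Nat.gcd_eq_gcd_ab a.val n
  refine ⟨((Nat.gcdA a.val n : ℤ) : ZMod n), ?_⟩
  have : ((Nat.gcd a.val n : ℤ) : ZMod n) = ((a.val * Nat.gcdA a.val n + n * Nat.gcdB a.val n : ℤ) : ZMod n) := by
    rw [← hb]
  push_cast at this
  simpa [ZMod.natCast_val, ZMod.cast_id, ZMod.natCast_self] using this

lemma dvd_of_gcd_dvd {a b : ZMod n} (h : Nat.gcd a.val n ∣ Nat.gcd b.val n) :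
    a ∣ b := by
  refine (self_dvd_gcd a).trans (dvd_trans (Nat.cast_dvd_cast h) ?_)
  have h2 : ((Nat.gcd b.val n : ℕ) : ZMod n) ∣ ((b.val : ℕ) : ZMod n) :=
    Nat.cast_dvd_cast (Nat.gcd_dvd_left _ _)
  simpa [ZMod.natCast_val, ZMod.cast_id] using h2

lemma stab_iff (a : ZMod n) (u : (ZMod n)ˣ) :
    (u : ZMod n) * a = a ↔ (n / Nat.gcd a.val n) ∣ ((u : ZMod n) - 1).val := by
  have hn0 : n ≠ 0 := NeZero.ne n
  set g := Nat.gcd a.val n with hg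
  have hg0 : 0 < g := Nat.gcd_pos_of_pos_right _ (Nat.pos_of_ne_zero hn0)
  have hgn : g ∣ n := Nat.gcd_dvd_right _ _
  have hga : g ∣ a.val := Nat.gcd_dvd_left _ _
  set w := (u : ZMod n) - 1 with hw
  have h1 : (u : ZMod n) * a = a ↔ w * a = 0 := by
    rw [hw, sub_mul, one_mul, sub_eq_zero]
  rw [h1]
  have h2 : w * a = ((w.val * a.val : ℕ) : ZMod n) := by
    push_cast
    simp [ZMod.natCast_val, ZMod.cast_id]
  rw [h2, ZMod.natCast_eq_zero_iff]
  -- n ∣ w.val * a.val ↔ n/g ∣ w.val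
  have hn_eq : n = g * (n / g) := (Nat.mul_div_cancel' hgn).symm
  have ha_eq : a.val = g * (a.val / g) := (Nat.mul_div_cancel' hga).symm
  have hcop : Nat.Coprime (n / g) (a.val / g) := (Nat.coprime_div_gcd_div_gcd hg0).symm
  have key : g * (w.val * (a.val / g)) = w.val * a.val := by
    rw [show g * (w.val * (a.val / g)) = w.val * (g * (a.val / g)) by ring,
      Nat.mul_div_cancel' hga]
  constructor
  · intro h
    rw [← key] at h
    have h' : g * (n / g) ∣ g * (w.val * (a.val / g)) := by rw [← hn_eq]; exact h
    have := (Nat.mul_dvd_mul_iff_left hg0).mp h'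
    exact hcop.dvd_of_dvd_mul_right this
  · intro h
    calc n = g * (n / g) := hn_eq
      _ ∣ g * (w.val * (a.val / g)) :=
        Nat.mul_dvd_mul_left g (Dvd.dvd.mul_right h _)
      _ = w.val * a.val := key

lemma m_antitone {a b : ZMod n} (h : a ∣ b) :
    (n / Nat.gcd b.val n) ∣ (n / Nat.gcd a.val n) := by
  have hgd := gcd_dvd_of_dvd h
  have hgbn : Nat.gcd b.val n ∣ n := Nat.gcd_dvd_right _ _
  have hgan : Nat.gcd a.val n ∣ n := Nat.gcd_dvd_right _ _
  rw [Nat.div_dvd_iff_dvd_mul hgbn (Nat.gcd_pos_of_pos_right _ (Nat.pos_of_ne_zero (NeZero.ne n))), Nat.mul_comm]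
  calc n = (n / Nat.gcd a.val n) * Nat.gcd a.val n := (Nat.div_mul_cancel hgan).symm
    _ ∣ (n / Nat.gcd a.val n) * Nat.gcd b.val n := Nat.mul_dvd_mul_left _ hgd

lemma comp_main (hn : 1 < n) {a b : ZMod n} (hab : a ∣ b) (hnb : ¬ b ∣ a)
    (hst : ∀ u : (ZMod n)ˣ, (u : ZMod n) * a = a ↔ (u : ZMod n) * b = b) :
    2 ∣ n / Nat.gcd a.val n ∧ ¬ 2 ∣ n / Nat.gcd b.val n := by
  have hn0 : n ≠ 0 := by omega
  set ma := n / Nat.gcd a.val n with hma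
  set mb := n / Nat.gcd b.val n with hmb
  have hman : ma ∣ n := Nat.div_dvd_of_dvd (Nat.gcd_dvd_right _ _)
  have hmba : mb ∣ ma := m_antitone hab
  have hne : ma ≠ mb := by
    intro he
    apply hnb
    apply dvd_of_gcd_dvd
    have h1 : Nat.gcd b.val n = Nat.gcd a.val n := by
      have ha : n / (n / Nat.gcd a.val n) = Nat.gcd a.val n :=
        Nat.div_div_self (Nat.gcd_dvd_right _ _) hn0
      have hb : n / (n / Nat.gcd b.val n) = Nat.gcd b.val n :=
        Nat.div_div_self (Nat.gcd_dvd_right _ _) hn0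
      rw [← ha, ← hb, ← hma, ← hmb, he]
    rw [h1]
  by_contra hcon
  push_neg at hcon
  have hpar : Odd ma ∨ 2 ∣ mb := by
    by_cases h2 : 2 ∣ ma
    · exact Or.inr (hcon h2)
    · exact Or.inl (Nat.odd_iff.mpr (by omega))
  obtain ⟨s, hcop, hmbs, hmas⟩ := core_construct n ma mb hn hman hmba hne hpar
  set u := ZMod.unitOfCoprime (1 + s) hcop with hu
  have hval : ((u : ZMod n) - 1) = ((s : ℕ) : ZMod n) := by
    rw [hu, ZMod.coe_unitOfCoprime]
    push_cast
    ring
  have hwval : ((u : ZMod n) - 1).val = s % n := by rw [hval, ZMod.val_natCast]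
  have hub : (u : ZMod n) * b = b := by
    rw [stab_iff, hwval, Nat.dvd_mod_iff (hmba.trans hman)]
    exact hmbs
  have hua : (u : ZMod n) * a = a := (hst u).mpr hub
  rw [stab_iff, hwval, Nat.dvd_mod_iff hman] at hua
  exact hmas hua

end ZModPart

section Product
variable {r : ℕ} {n : Fin r → ℕ}

/-- embed a component unit into the product -/
lemma stab_component (hn : ∀ i, 1 < n i) {a b : (j : Fin r) → ZMod (n j)}
    (hst : {u : ((j : Fin r) → ZMod (n j))ˣ | (u : (j : Fin r) → ZMod (n j)) * a = a}
      = {u : ((j : Fin r) → ZMod (n j))ˣ | (u : (j : Fin r) → ZMod (n j)) * b = b})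
    (j : Fin r) (v : (ZMod (n j))ˣ) :
    (v : ZMod (n j)) * a j = a j ↔ (v : ZMod (n j)) * b j = b j := by
  set U : ((k : Fin r) → ZMod (n k))ˣ :=
    { val := Function.update (1 : (k : Fin r) → ZMod (n k)) j (v : ZMod (n j)),
      inv := Function.update (1 : (k : Fin r) → ZMod (n k)) j ((v⁻¹ : (ZMod (n j))ˣ) : ZMod (n j)),
      val_inv := by
        funext k
        by_cases h : k = j
        · subst h; simp
        · simp [Function.update_of_ne h]
      inv_val := by
        funext k
        by_cases h : k = j
        · subst h; simp
        · simp [Function.update_of_ne h] } with hU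
  have key : ∀ c : (k : Fin r) → ZMod (n k),
      ((U : (k : Fin r) → ZMod (n k)) * c = c ↔ (v : ZMod (n j)) * c j = c j) := by
    intro c
    constructor
    · intro h
      have := congrFun h j
      simpa [hU] using this
    · intro h
      funext k
      by_cases hk : k = j
      · subst hk; simpa [hU] using h
      · simp [hU, Pi.mul_apply, Function.update_of_ne hk]
  have hmem := Set.ext_iff.mp hst U
  simp only [Set.mem_setOf_eq] at hmem
  rw [← key a, ← key b]
  exact hmem

theorem stabilizer_repetitions_at_most_delta
    (r : ℕ) (hr : 1 ≤ r) (n : Fin r → ℕ) (hn : ∀ i, 1 < n i)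
    (L : List ((i : Fin r) → ZMod (n i)))
    (hchain : ∀ i < L.length,
      (L.take i).prod ∣ (L.take (i + 1)).prod
        ∧ ¬ (L.take (i + 1)).prod ∣ (L.take i).prod) :
    {i : ℕ | i < L.length ∧
        {u : ((j : Fin r) → ZMod (n j))ˣ |
            (u : (j : Fin r) → ZMod (n j)) * (L.take i).prod = (L.take i).prod}
          = {u : ((j : Fin r) → ZMod (n j))ˣ |
            (u : (j : Fin r) → ZMod (n j)) * (L.take (i + 1)).prod
              = (L.take (i + 1)).prod}}.ncard
      ≤ (Finset.univ.filter fun j : Fin r => 2 ∣ n j).card := by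
  classical
  haveI : ∀ j : Fin r, NeZero (n j) := fun j => ⟨by have := hn j; omega⟩
  set len := L.length with hlen
  set P : ℕ → ((j : Fin r) → ZMod (n j)) := fun i => (L.take i).prod with hP
  set S : Set ℕ := {i : ℕ | i < len ∧
        {u : ((j : Fin r) → ZMod (n j))ˣ |
            (u : (j : Fin r) → ZMod (n j)) * P i = P i}
          = {u : ((j : Fin r) → ZMod (n j))ˣ |
            (u : (j : Fin r) → ZMod (n j)) * P (i + 1) = P (i + 1)}} with hS
  -- witness function
  set F : ℕ → Fin r := fun i =>
    if h : ∃ j : Fin r, ¬ (P (i+1) j ∣ P i j) then h.choose else ⟨0, hr⟩ with hF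
  -- componentwise divisibility along the chain
  have chain_dvd : ∀ k k' : ℕ, k ≤ k' → k' ≤ len → P k ∣ P k' := by
    intro k k' hkk' hk'
    induction k' , hkk' using Nat.le_induction with
    | base => exact dvd_rfl
    | succ m hm ih =>
      exact (ih (by omega)).trans (hchain m (by omega)).1
  -- key facts for i ∈ S
  have hkey : ∀ i ∈ S, (2 ∣ n (F i) / Nat.gcd (P i (F i)).val (n (F i)))
      ∧ (¬ 2 ∣ n (F i) / Nat.gcd (P (i+1) (F i)).val (n (F i))) := by
    intro i hi
    obtain ⟨hilen, hist⟩ := hi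
    have hdvd := (hchain i hilen).1
    have hndvd := (hchain i hilen).2
    have hex : ∃ j : Fin r, ¬ (P (i+1) j ∣ P i j) := by
      by_contra hc
      push_neg at hc
      exact hndvd ⟨fun j => (hc j).choose, funext fun j => (hc j).choose_spec⟩
    have hFi : ¬ (P (i+1) (F i) ∣ P i (F i)) := by
      have hFi' : F i = hex.choose := by rw [hF]; exact dif_pos hex
      rw [hFi']; exact hex.choose_spec
    have hcomp_dvd : P i (F i) ∣ P (i+1) (F i) := by
      obtain ⟨c, hc⟩ := hdvd
      exact ⟨c (F i), congrFun hc (F i)⟩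
    have hstj := stab_component hn hist (F i)
    exact comp_main (hn (F i)) hcomp_dvd hFi hstj
  -- membership of image
  have hmemb : ∀ i ∈ S, F i ∈ Finset.univ.filter fun j : Fin r => 2 ∣ n j := by
    intro i hi
    obtain ⟨h2, _⟩ := hkey i hi
    simp only [Finset.mem_filter, Finset.mem_univ, true_and]
    exact h2.trans (Nat.div_dvd_of_dvd (Nat.gcd_dvd_right _ _))
  -- injectivity
  have hnotwo : ∀ i ∈ S, ∀ i' ∈ S, i < i' → F i ≠ F i' := by
    intro i hi i' hi' hlt heq
    obtain ⟨_, hodd⟩ := hkey i hi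
    obtain ⟨heven, _⟩ := hkey i' hi'
    rw [heq] at hodd
    set j := F i' with hj
    -- P (i+1) ∣ P i'
    have hPd : P (i+1) ∣ P i' := chain_dvd (i+1) i' (by omega) (le_of_lt hi'.1)
    have hcd : P (i+1) j ∣ P i' j := by
      obtain ⟨c, hc⟩ := hPd
      exact ⟨c j, congrFun hc j⟩
    have hm := m_antitone (n := n j) hcd
    exact hodd (heven.trans hm)
  have hinj : Set.InjOn F S := by
    intro i hi i' hi' heq
    by_contra hne
    rcases lt_trichotomy i i' with h | h | h
    · exact hnotwo i hi i' hi' h heq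
    · exact hne h
    · exact hnotwo i' hi' i hi h heq.symm
  have hfin : S.Finite := Set.Finite.subset (Set.finite_Iio len) (fun i hi => hi.1)
  calc S.ncard = (F '' S).ncard := (Set.ncard_image_of_injOn hinj).symm
    _ ≤ ((Finset.univ.filter fun j : Fin r => 2 ∣ n j) : Finset (Fin r)).card := by
        rw [← Set.ncard_coe_finset]
        apply Set.ncard_le_ncard
        · rintro _ ⟨i, hi, rfl⟩
          exact hmemb i hi
        · exact Finset.finite_toSet _

end Product
end
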